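/- arXiv:1803.00841 — 8 statements merged into one kernel-verified Lean document; each statement's English description precedes it below -/
import Mathlib

section
/- Let A be a symmetric positive definite d×d real matrix, B a symmetric positive semidefinite d×d real matrix, b ∈ ℝ^d, and β = A⁻¹·(A β) arbitrary in ℝ^d. If 0 ≤ λ_max(A − B) < (1/2)·λ_min(A), then B is invertible and ‖B⁻¹b − β‖ ≤ [λ_min(A)⁻¹ + 2·λ_min(A)⁻²·λ_max(A − B)]·‖b − Bβ‖. -/
open MeasureTheory ProbabilityTheory Matrix

/-- Largest eigenvalue of a (Hermitian) real matrix. -/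
noncomputable def lamMax {d : ℕ} (M : Matrix (Fin d) (Fin d) ℝ) : ℝ :=
  if h : M.IsHermitian then ⨆ i, h.eigenvalues i else 0

/-- Smallest eigenvalue of a (Hermitian) real matrix. -/
noncomputable def lamMin {d : ℕ} (M : Matrix (Fin d) (Fin d) ℝ) : ℝ :=
  if h : M.IsHermitian then ⨅ i, h.eigenvalues i else 0

/-- Euclidean norm of a vector in ℝ^d. -/
noncomputable def euclNorm {d : ℕ} (v : Fin d → ℝ) : ℝ := Real.sqrt (∑ i, v i ^ 2)

lemma quad_repr {d : ℕ} {M : Matrix (Fin d) (Fin d) ℝ} (hM : M.IsHermitian) (x : Fin d → ℝ) :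
    x ⬝ᵥ (M *ᵥ x) =
      ∑ i, hM.eigenvalues i *
        (hM.eigenvectorBasis.repr ((WithLp.equiv 2 (Fin d → ℝ)).symm x) i) ^ 2 := by
  set b := hM.eigenvectorBasis
  set x' : EuclideanSpace ℝ (Fin d) := (WithLp.equiv 2 (Fin d → ℝ)).symm x
  set y' : EuclideanSpace ℝ (Fin d) := (WithLp.equiv 2 (Fin d → ℝ)).symm (M *ᵥ x)
  have hrepr : ∀ i, b.repr y' i = hM.eigenvalues i * b.repr x' i := by
    intro i
    rw [b.repr_apply_apply, b.repr_apply_apply]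
    have h1 : (inner ℝ (b i) y' : ℝ) = (⇑(b i) : Fin d → ℝ) ⬝ᵥ (M *ᵥ x) := by
      simp [PiLp.inner_apply, dotProduct, y', x']; exact Finset.sum_congr rfl fun _ _ => mul_comm _ _
    have h2 : (inner ℝ (b i) x' : ℝ) = (⇑(b i) : Fin d → ℝ) ⬝ᵥ x := by
      simp [PiLp.inner_apply, dotProduct, x']; exact Finset.sum_congr rfl fun _ _ => mul_comm _ _
    rw [h1, h2, Matrix.dotProduct_mulVec, ← Matrix.mulVec_transpose]
    have hsym : M.transpose = M := by
      have := hM; rwa [Matrix.IsHermitian, conjTranspose_eq_transpose_of_trivial] at this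
    rw [hsym, hM.mulVec_eigenvectorBasis, smul_dotProduct]; simp [smul_eq_mul, b]
  have hinner : x ⬝ᵥ (M *ᵥ x) = (inner ℝ x' y' : ℝ) := by
    simp [PiLp.inner_apply, dotProduct, x', y']; exact Finset.sum_congr rfl fun _ _ => mul_comm _ _
  rw [hinner, ← b.repr.inner_map_map x' y']
  rw [PiLp.inner_apply]
  refine Finset.sum_congr rfl fun i _ => ?_
  rw [hrepr i]
  simp [EuclideanSpace.inner_eq_star_dotProduct]
  ring

lemma self_repr {d : ℕ} {M : Matrix (Fin d) (Fin d) ℝ} (hM : M.IsHermitian) (x : Fin d → ℝ) :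
    x ⬝ᵥ x =
      ∑ i, (hM.eigenvectorBasis.repr ((WithLp.equiv 2 (Fin d → ℝ)).symm x) i) ^ 2 := by
  set b := hM.eigenvectorBasis
  set x' : EuclideanSpace ℝ (Fin d) := (WithLp.equiv 2 (Fin d → ℝ)).symm x
  have hinner : x ⬝ᵥ x = (inner ℝ x' x' : ℝ) := by
    simp [PiLp.inner_apply, dotProduct, x']; rw [EuclideanSpace.norm_eq, Real.sq_sqrt (by positivity)]; simp [sq]
  rw [hinner, ← b.repr.inner_map_map x' x', PiLp.inner_apply]
  refine Finset.sum_congr rfl fun i _ => ?_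
  simp

lemma quad_le_sup {d : ℕ} [Nonempty (Fin d)] {M : Matrix (Fin d) (Fin d) ℝ}
    (hM : M.IsHermitian) (x : Fin d → ℝ) :
    x ⬝ᵥ (M *ᵥ x) ≤ (⨆ i, hM.eigenvalues i) * (x ⬝ᵥ x) := by
  rw [quad_repr hM, self_repr hM, Finset.mul_sum]
  refine Finset.sum_le_sum fun i _ => ?_
  have h1 : hM.eigenvalues i ≤ ⨆ i, hM.eigenvalues i :=
    le_ciSup (Set.Finite.bddAbove (Set.finite_range _)) i
  nlinarith [sq_nonneg (hM.eigenvectorBasis.repr ((WithLp.equiv 2 (Fin d → ℝ)).symm x) i)]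

lemma inf_le_quad {d : ℕ} [Nonempty (Fin d)] {M : Matrix (Fin d) (Fin d) ℝ}
    (hM : M.IsHermitian) (x : Fin d → ℝ) :
    (⨅ i, hM.eigenvalues i) * (x ⬝ᵥ x) ≤ x ⬝ᵥ (M *ᵥ x) := by
  rw [quad_repr hM, self_repr hM, Finset.mul_sum]
  refine Finset.sum_le_sum fun i _ => ?_
  have h1 : (⨅ i, hM.eigenvalues i) ≤ hM.eigenvalues i :=
    ciInf_le (Set.Finite.bddBelow (Set.finite_range _)) i
  nlinarith [sq_nonneg (hM.eigenvectorBasis.repr ((WithLp.equiv 2 (Fin d → ℝ)).symm x) i)]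

lemma euclNorm_sq {d : ℕ} (v : Fin d → ℝ) :
    (Real.sqrt (∑ i, v i ^ 2)) ^ 2 = v ⬝ᵥ v := by
  rw [Real.sq_sqrt (Finset.sum_nonneg fun i _ => sq_nonneg _)]
  simp [dotProduct, sq]

lemma dot_le_norms {d : ℕ} (v w : Fin d → ℝ) :
    v ⬝ᵥ w ≤ Real.sqrt (∑ i, v i ^ 2) * Real.sqrt (∑ i, w i ^ 2) := by
  have h := Finset.sum_mul_sq_le_sq_mul_sq Finset.univ v w
  calc v ⬝ᵥ w ≤ |v ⬝ᵥ w| := le_abs_self _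
    _ = Real.sqrt ((v ⬝ᵥ w) ^ 2) := (Real.sqrt_sq_eq_abs _).symm
    _ ≤ Real.sqrt ((∑ i, v i ^ 2) * ∑ i, w i ^ 2) := by
        apply Real.sqrt_le_sqrt
        simpa [dotProduct] using h
    _ = Real.sqrt (∑ i, v i ^ 2) * Real.sqrt (∑ i, w i ^ 2) :=
        Real.sqrt_mul (Finset.sum_nonneg fun i _ => sq_nonneg _) _

/-- If `A` is symmetric positive definite, `B` symmetric positive semidefinite,
`0 ≤ λ_max(A − B) < (1/2)·λ_min(A)`, then `B` is invertible and
`‖B⁻¹b − β‖ ≤ [λ_min(A)⁻¹ + 2·λ_min(A)⁻²·λ_max(A − B)]·‖b − Bβ‖`. -/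
theorem stmt2 {d : ℕ} (A B : Matrix (Fin d) (Fin d) ℝ)
    (hA : A.PosDef) (hB : B.PosSemidef) (b β : Fin d → ℝ)
    (h0 : 0 ≤ lamMax (A - B)) (h : lamMax (A - B) < (1 / 2) * lamMin A) :
    IsUnit B.det ∧
      euclNorm (B⁻¹ *ᵥ b - β) ≤
        ((lamMin A)⁻¹ + 2 * ((lamMin A) ^ 2)⁻¹ * lamMax (A - B)) * euclNorm (b - B *ᵥ β) := by
  have hAB : (A - B).IsHermitian := hA.1.sub hB.1
  have hLdef : lamMin A = ⨅ i, hA.1.eigenvalues i := by rw [lamMin, dif_pos hA.1]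
  have hEdef : lamMax (A - B) = ⨆ i, hAB.eigenvalues i := by rw [lamMax, dif_pos hAB]
  rcases Nat.eq_zero_or_pos d with hd | hd
  · subst hd
    exfalso
    have h1 : lamMin A = 0 := by rw [hLdef]; exact Real.iInf_of_isEmpty _
    have h2 : lamMax (A - B) = 0 := by rw [hEdef]; exact Real.iSup_of_isEmpty _
    rw [h1, h2] at h
    norm_num at h
  haveI : Nonempty (Fin d) := Fin.pos_iff_nonempty.mp hd
  set l := lamMin A with hl
  set ε := lamMax (A - B) with he
  have hLpos : 0 < l := by
    obtain ⟨i, hi⟩ := exists_eq_ciInf_of_finite (f := hA.1.eigenvalues)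
    rw [hLdef, ← hi]
    exact hA.eigenvalues_pos i
  have hc : 0 < l - ε := by linarith
  have hquadB : ∀ v : Fin d → ℝ, (l - ε) * (v ⬝ᵥ v) ≤ v ⬝ᵥ (B *ᵥ v) := by
    intro v
    have h1 := inf_le_quad hA.1 v
    have h2 := quad_le_sup hAB v
    have h3 : v ⬝ᵥ ((A - B) *ᵥ v) = v ⬝ᵥ (A *ᵥ v) - v ⬝ᵥ (B *ᵥ v) := by
      rw [Matrix.sub_mulVec, dotProduct_sub]
    rw [hLdef] at hl
    rw [hEdef] at he
    rw [hl, he] at *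
    nlinarith [h1, h2, h3]
  have hdotpos : ∀ v : Fin d → ℝ, v ≠ 0 → 0 < v ⬝ᵥ v := by
    intro v hv
    have h1 : v ⬝ᵥ v = ∑ i, v i ^ 2 := by simp [dotProduct, sq]
    rw [h1]
    obtain ⟨i, hi⟩ := Function.ne_iff.mp hv
    exact Finset.sum_pos' (fun j _ => sq_nonneg _) ⟨i, Finset.mem_univ i, by exact pow_pos (abs_pos.mpr hi) 2 |>.trans_eq (by rw [sq_abs])⟩
  have hBposdef : B.PosDef := by
    refine PosDef.of_dotProduct_mulVec_pos hB.1 (fun v hv => ?_)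
    have := hquadB v
    have h2 := hdotpos v hv
    have hstar : star v = v := by simp
    rw [hstar]
    nlinarith
  have hdet : IsUnit B.det := isUnit_iff_ne_zero.mpr hBposdef.det_pos.ne'
  refine ⟨hdet, ?_⟩
  set y := B⁻¹ *ᵥ b - β with hy
  set v := b - B *ᵥ β with hv
  have hBy : B *ᵥ y = v := by
    rw [hy, hv, Matrix.mulVec_sub, Matrix.mulVec_mulVec, Matrix.mul_nonsing_inv B hdet,
      Matrix.one_mulVec]
  have hny : euclNorm y ^ 2 = y ⬝ᵥ y := euclNorm_sq y
  have hchain : (l - ε) * euclNorm y ^ 2 ≤ euclNorm y * euclNorm v := by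
    calc (l - ε) * euclNorm y ^ 2 = (l - ε) * (y ⬝ᵥ y) := by rw [hny]
      _ ≤ y ⬝ᵥ (B *ᵥ y) := hquadB y
      _ = y ⬝ᵥ v := by rw [hBy]
      _ ≤ euclNorm y * euclNorm v := dot_le_norms y v
  have hnv0 : 0 ≤ euclNorm v := Real.sqrt_nonneg _
  have hny0 : 0 ≤ euclNorm y := Real.sqrt_nonneg _
  have hstep : euclNorm y ≤ (l - ε)⁻¹ * euclNorm v := by
    rcases eq_or_lt_of_le hny0 with h1 | h1
    · rw [← h1]
      positivity
    · have h3 : euclNorm y * (l - ε) ≤ euclNorm v := by nlinarith [hchain]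
      rw [inv_mul_eq_div, le_div_iff₀ hc]
      exact h3
  have hinv : (l - ε)⁻¹ ≤ l⁻¹ + 2 * (l ^ 2)⁻¹ * ε := by
    have hrhs : l⁻¹ + 2 * (l ^ 2)⁻¹ * ε = (l + 2 * ε) / l ^ 2 := by
      field_simp
    rw [hrhs, inv_eq_one_div, div_le_div_iff₀ hc (by positivity)]
    nlinarith [mul_nonneg h0 (by linarith : (0:ℝ) ≤ l - 2 * ε)]
  calc euclNorm y ≤ (l - ε)⁻¹ * euclNorm v := hstep
    _ ≤ (l⁻¹ + 2 * (l ^ 2)⁻¹ * ε) * euclNorm v := by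
        apply mul_le_mul_of_nonneg_right hinv hnv0
end

section
/- Define the random symmetric matrix Δ = (1/n)·Σ_{i=1}^n (1 − γ_i/p_i)·x_i x_iᵀ. Then E[Δ²] = (1/n²)·Σ_{i=1}^n (1/p_i − 1)·(x_i x_iᵀ)², and consequently λ_max(E[Δ²]) ≤ (1/r)·(1/n²)·Σ_{i=1}^n π_i⁻¹·‖x_i‖⁴ = σ_Σ²/r, where σ_Σ² = (1/n²)Σ_i π_i⁻¹‖x_i‖⁴. -/
open MeasureTheory ProbabilityTheory Matrix

lemma lamMax_le_of_quadform {d : ℕ} (hd : 1 ≤ d) (M : Matrix (Fin d) (Fin d) ℝ)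
    (hM : M.IsHermitian) (c : ℝ)
    (h : ∀ v : Fin d → ℝ, (∑ l, v l ^ 2) = 1 → ∑ j, v j * (∑ k, M j k * v k) ≤ c) :
    lamMax M ≤ c := by
  have : Nonempty (Fin d) := ⟨⟨0, hd⟩⟩
  rw [lamMax, dif_pos hM]
  refine ciSup_le fun i => ?_
  have hv := hM.eigenvectorBasis.orthonormal.1 i
  have hnorm : (∑ l, (hM.eigenvectorBasis i : EuclideanSpace ℝ (Fin d)) l ^ 2) = 1 := by
    rw [EuclideanSpace.norm_eq] at hv
    have := Real.sqrt_eq_one.mp hv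
    simpa [Real.norm_eq_abs, sq_abs] using this
  have heig := hM.eigenvalues_eq i
  rw [heig]
  have hre : ∀ y : ℝ, RCLike.re y = y := fun y => rfl
  rw [hre]
  simpa [dotProduct, Matrix.mulVec] using h _ hnorm

/-- `E[Δ²] = (1/n²)·Σ_i (1/p_i − 1)·(x_i x_iᵀ)²` (entrywise), and consequently
`λ_max(E[Δ²]) ≤ σ_Σ²/r` where `σ_Σ² = (1/n²)Σ_i π_i⁻¹‖x_i‖⁴`. -/
theorem stmt4 {n d : ℕ} (hn : 1 ≤ n) (hd : 1 ≤ d)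
    (x : Fin n → Fin d → ℝ)
    (w : Fin n → ℝ) (hw0 : ∀ i, 0 < w i) (hw1 : ∑ i, w i = 1)
    (r : ℝ) (hr : 0 < r)
    (p : Fin n → ℝ) (hp : ∀ i, p i = r * w i) (hp1 : ∀ i, p i ≤ 1)
    (sS2 : ℝ) (hsS2 : sS2 = ((n : ℝ) ^ 2)⁻¹ * ∑ i, (w i)⁻¹ * (∑ k, x i k ^ 2) ^ 2)
    {Ω : Type} [MeasurableSpace Ω] (μ : Measure Ω) [IsProbabilityMeasure μ]
    (γ : Fin n → Ω → ℝ) (hmeas : ∀ i, Measurable (γ i))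
    (h01 : ∀ i ω, γ i ω = 0 ∨ γ i ω = 1)
    (hBer : ∀ i, μ {ω | γ i ω = 1} = ENNReal.ofReal (p i))
    (hind : iIndepFun γ μ)
    (Δ : Ω → Matrix (Fin d) (Fin d) ℝ)
    (hΔ : ∀ ω, Δ ω = (n : ℝ)⁻¹ • ∑ i, (1 - γ i ω / p i) • vecMulVec (x i) (x i)) :
    (∀ j k,
        (∫ ω, (Δ ω * Δ ω) j k ∂μ) =
          (((n : ℝ) ^ 2)⁻¹ •
            ∑ i, ((p i)⁻¹ - 1) • (vecMulVec (x i) (x i) * vecMulVec (x i) (x i))) j k) ∧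
      lamMax (Matrix.of fun j k => ∫ ω, (Δ ω * Δ ω) j k ∂μ) ≤ sS2 / r := by
  classical
  have hp0 : ∀ i, 0 < p i := fun i => by rw [hp i]; exact mul_pos hr (hw0 i)
  -- Bernoulli moments
  set S : Fin n → Set Ω := fun i => γ i ⁻¹' {1} with hSdef
  have hSm : ∀ i, MeasurableSet (S i) := fun i => (hmeas i) (measurableSet_singleton 1)
  have hμS : ∀ i, μ (S i) = ENNReal.ofReal (p i) := by
    intro i; rw [← hBer i]; rfl
  have hγind : ∀ i, γ i = (S i).indicator (fun _ => (1:ℝ)) := by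
    intro i; funext ω
    rcases h01 i ω with h | h
    · rw [h, Set.indicator_of_notMem]
      simp only [S, Set.mem_preimage, Set.mem_singleton_iff, h]
      norm_num
    · rw [h, Set.indicator_of_mem]
      simpa [S] using h
  have hγint : ∀ i, Integrable (γ i) μ := by
    intro i; rw [hγind i]
    exact (integrable_const (1:ℝ)).indicator (hSm i)
  have hγexp : ∀ i, ∫ ω, γ i ω ∂μ = p i := by
    intro i
    rw [hγind i]
    rw [integral_indicator_const (1:ℝ) (hSm i), measureReal_def, hμS i, ENNReal.toReal_ofReal (hp0 i).le,
      smul_eq_mul, mul_one]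
  have hγγind : ∀ i i', i ≠ i' →
      (fun ω => γ i ω * γ i' ω) = (S i ∩ S i').indicator (fun _ => (1:ℝ)) := by
    intro i i' _
    funext ω
    rcases h01 i ω with h | h
    · rw [h, zero_mul, eq_comm, Set.indicator_apply_eq_zero]
      intro hω; exact absurd (by simpa [S] using hω.1) (by rw [h]; norm_num)
    · rcases h01 i' ω with h' | h'
      · rw [h', mul_zero, eq_comm, Set.indicator_apply_eq_zero]
        intro hω; exact absurd (by simpa [S] using hω.2) (by rw [h']; norm_num)
      · rw [h, h', mul_one, Set.indicator_of_mem]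
        exact ⟨by simpa [S] using h, by simpa [S] using h'⟩
  have hsq : ∀ i (ω : Ω), γ i ω * γ i ω = γ i ω := by
    intro i ω; rcases h01 i ω with h | h <;> rw [h] <;> ring
  have hγγint : ∀ i i', Integrable (fun ω => γ i ω * γ i' ω) μ := by
    intro i i'
    by_cases h : i = i'
    · subst h
      exact (hγint i).congr (Filter.Eventually.of_forall fun ω => (hsq i ω).symm)
    · rw [hγγind i i' h]
      exact (integrable_const (1:ℝ)).indicator ((hSm i).inter (hSm i'))
  have hγγ : ∀ i i', i ≠ i' → ∫ ω, γ i ω * γ i' ω ∂μ = p i * p i' := by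
    intro i i' hne
    have hμint : μ (S i ∩ S i') = ENNReal.ofReal (p i) * ENNReal.ofReal (p i') := by
      rw [← hμS i, ← hμS i']
      exact (hind.indepFun hne).measure_inter_preimage_eq_mul
        {1} {1} (measurableSet_singleton 1) (measurableSet_singleton 1)
    rw [hγγind i i' hne, integral_indicator_const (1:ℝ) ((hSm i).inter (hSm i')), measureReal_def, hμint,
      ENNReal.toReal_mul, ENNReal.toReal_ofReal (hp0 i).le, ENNReal.toReal_ofReal (hp0 i').le,
      smul_eq_mul, mul_one]
  -- moments of a i := 1 - γ i / p i
  have hexpand : ∀ i i' (ω : Ω), (1 - γ i ω / p i) * (1 - γ i' ω / p i')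
      = 1 - (p i)⁻¹ * γ i ω - (p i')⁻¹ * γ i' ω + ((p i)⁻¹ * (p i')⁻¹) * (γ i ω * γ i' ω) := by
    intro i i' ω
    field_simp
    ring
  have h1 : ∀ i, Integrable (fun ω => 1 - (p i)⁻¹ * γ i ω) μ := fun i =>
    (integrable_const (1:ℝ)).sub ((hγint i).const_mul _)
  have hA : ∀ i i', Integrable (fun ω => 1 - (p i)⁻¹ * γ i ω - (p i')⁻¹ * γ i' ω) μ := fun i i' =>
    (h1 i).sub ((hγint i').const_mul _)
  have hB : ∀ i i', Integrable (fun ω => ((p i)⁻¹ * (p i')⁻¹) * (γ i ω * γ i' ω)) μ :=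
    fun i i' => (hγγint i i').const_mul _
  have hgint : ∀ i i', Integrable (fun ω =>
      1 - (p i)⁻¹ * γ i ω - (p i')⁻¹ * γ i' ω + ((p i)⁻¹ * (p i')⁻¹) * (γ i ω * γ i' ω)) μ :=
    fun i i' => (hA i i').add (hB i i')
  have hgexp : ∀ i i', (∫ ω,
      (1 - (p i)⁻¹ * γ i ω - (p i')⁻¹ * γ i' ω + ((p i)⁻¹ * (p i')⁻¹) * (γ i ω * γ i' ω)) ∂μ)
      = 1 - (p i)⁻¹ * p i - (p i')⁻¹ * p i' + ((p i)⁻¹ * (p i')⁻¹) * (∫ ω, γ i ω * γ i' ω ∂μ) := by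
    intro i i'
    rw [integral_add (hA i i') (hB i i'), integral_sub (h1 i) ((hγint i').const_mul _),
      integral_sub (integrable_const (1:ℝ)) ((hγint i).const_mul _),
      integral_const_mul, integral_const_mul, integral_const_mul, hγexp, hγexp]
    simp
  have hIprod : ∀ i i', Integrable (fun ω => (1 - γ i ω / p i) * (1 - γ i' ω / p i')) μ := by
    intro i i'
    exact (hgint i i').congr (Filter.Eventually.of_forall fun ω => (hexpand i i' ω).symm)
  have hI : ∀ i i', (∫ ω, (1 - γ i ω / p i) * (1 - γ i' ω / p i') ∂μ)
      = if i = i' then (p i)⁻¹ - 1 else 0 := by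
    intro i i'
    rw [show (fun ω => (1 - γ i ω / p i) * (1 - γ i' ω / p i'))
        = fun ω => 1 - (p i)⁻¹ * γ i ω - (p i')⁻¹ * γ i' ω
            + ((p i)⁻¹ * (p i')⁻¹) * (γ i ω * γ i' ω) from funext (hexpand i i'), hgexp]
    by_cases h : i = i'
    · subst h
      rw [if_pos rfl]
      rw [show (fun ω => γ i ω * γ i ω) = γ i from funext (hsq i), hγexp,
        show (p i)⁻¹ * (p i)⁻¹ * p i = (p i)⁻¹ by
          rw [mul_assoc, inv_mul_cancel₀ (hp0 i).ne', mul_one],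
        inv_mul_cancel₀ (hp0 i).ne']
      ring
    · rw [hγγ i i' h, if_neg h,
        show (p i)⁻¹ * (p i')⁻¹ * (p i * p i') = ((p i)⁻¹ * p i) * ((p i')⁻¹ * p i') by ring,
        inv_mul_cancel₀ (hp0 i).ne', inv_mul_cancel₀ (hp0 i').ne']
      norm_num
  -- expansion of the matrix square, entrywise
  have hexpandM : ∀ (j k : Fin d) (ω : Ω), (Δ ω * Δ ω) j k
      = ∑ i, ∑ i', ((1 - γ i ω / p i) * (1 - γ i' ω / p i')) *
        ((n:ℝ)⁻¹ * (n:ℝ)⁻¹ * x i j * x i' k * ∑ l, x i l * x i' l) := by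
    intro j k ω
    have hentry : ∀ j k, Δ ω j k
        = ∑ i, (n:ℝ)⁻¹ * ((1 - γ i ω / p i) * (x i j * x i k)) := by
      intro j k
      rw [hΔ]
      simp only [Matrix.smul_apply, Matrix.sum_apply, Matrix.smul_apply, vecMulVec_apply,
        smul_eq_mul, Finset.mul_sum]
    calc (Δ ω * Δ ω) j k
        = ∑ l, (∑ i, (n:ℝ)⁻¹ * ((1 - γ i ω / p i) * (x i j * x i l))) *
            (∑ i', (n:ℝ)⁻¹ * ((1 - γ i' ω / p i') * (x i' l * x i' k))) := by
          rw [Matrix.mul_apply]; simp only [hentry]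
      _ = ∑ l, ∑ i, ∑ i', ((n:ℝ)⁻¹ * ((1 - γ i ω / p i) * (x i j * x i l))) *
            ((n:ℝ)⁻¹ * ((1 - γ i' ω / p i') * (x i' l * x i' k))) := by
          refine Finset.sum_congr rfl fun l _ => ?_
          rw [Finset.sum_mul_sum]
      _ = ∑ i, ∑ i', ∑ l, ((n:ℝ)⁻¹ * ((1 - γ i ω / p i) * (x i j * x i l))) *
            ((n:ℝ)⁻¹ * ((1 - γ i' ω / p i') * (x i' l * x i' k))) := by
          rw [Finset.sum_comm]
          refine Finset.sum_congr rfl fun i _ => ?_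
          rw [Finset.sum_comm]
      _ = ∑ i, ∑ i', ((1 - γ i ω / p i) * (1 - γ i' ω / p i')) *
            ((n:ℝ)⁻¹ * (n:ℝ)⁻¹ * x i j * x i' k * ∑ l, x i l * x i' l) := by
          refine Finset.sum_congr rfl fun i _ => Finset.sum_congr rfl fun i' _ => ?_
          rw [Finset.mul_sum, Finset.mul_sum]
          exact Finset.sum_congr rfl fun l _ => by ring
  -- Part 1
  have part1 : ∀ j k,
      (∫ ω, (Δ ω * Δ ω) j k ∂μ) =
        (((n : ℝ) ^ 2)⁻¹ •
          ∑ i, ((p i)⁻¹ - 1) • (vecMulVec (x i) (x i) * vecMulVec (x i) (x i))) j k := by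
    intro j k
    have step1 : (∫ ω, (Δ ω * Δ ω) j k ∂μ)
        = ∑ i, ∑ i', (∫ ω, (1 - γ i ω / p i) * (1 - γ i' ω / p i') ∂μ) *
          ((n:ℝ)⁻¹ * (n:ℝ)⁻¹ * x i j * x i' k * ∑ l, x i l * x i' l) := by
      rw [show (fun ω => (Δ ω * Δ ω) j k)
          = fun ω => ∑ i, ∑ i', ((1 - γ i ω / p i) * (1 - γ i' ω / p i')) *
            ((n:ℝ)⁻¹ * (n:ℝ)⁻¹ * x i j * x i' k * ∑ l, x i l * x i' l)
          from funext (hexpandM j k)]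
      rw [integral_finset_sum _ fun i _ =>
        integrable_finset_sum _ fun i' _ => (hIprod i i').mul_const _]
      refine Finset.sum_congr rfl fun i _ => ?_
      rw [integral_finset_sum _ fun i' _ => (hIprod i i').mul_const _]
      exact Finset.sum_congr rfl fun i' _ => integral_mul_const _ _
    rw [step1]
    simp only [hI, ite_mul, zero_mul, Finset.sum_ite_eq, Finset.mem_univ, if_true]
    simp only [Matrix.smul_apply, Matrix.sum_apply, Matrix.smul_apply, smul_eq_mul,
      Matrix.mul_apply, vecMulVec_apply, Finset.mul_sum]
    refine Finset.sum_congr rfl fun i _ => ?_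
    rw [show ((n:ℝ)^2)⁻¹ = (n:ℝ)⁻¹ * (n:ℝ)⁻¹ by rw [sq, mul_inv]]
    exact Finset.sum_congr rfl fun l _ => by ring
  refine ⟨part1, ?_⟩
  -- Part 2
  set s : Fin n → ℝ := fun i => ∑ l, x i l ^ 2 with hs
  have hBent : ∀ j k, (Matrix.of fun j k => ∫ ω, (Δ ω * Δ ω) j k ∂μ) j k
      = ((n:ℝ)^2)⁻¹ * ∑ i, ((p i)⁻¹ - 1) * (x i j * x i k * s i) := by
    intro j k
    show (∫ ω, (Δ ω * Δ ω) j k ∂μ) = _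
    rw [part1 j k]
    simp only [Matrix.smul_apply, Matrix.sum_apply, Matrix.smul_apply, smul_eq_mul,
      Matrix.mul_apply, vecMulVec_apply]
    congr 1
    refine Finset.sum_congr rfl fun i _ => ?_
    congr 1
    rw [hs]
    simp only [Finset.mul_sum]
    exact Finset.sum_congr rfl fun l _ => by ring
  have hherm : (Matrix.of fun j k => ∫ ω, (Δ ω * Δ ω) j k ∂μ).IsHermitian := by
    apply Matrix.ext
    intro j k
    rw [Matrix.conjTranspose_apply, star_trivial, hBent, hBent]
    congr 1
    exact Finset.sum_congr rfl fun i _ => by ring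
  have hs0 : ∀ i, 0 ≤ s i := fun i => Finset.sum_nonneg fun l _ => sq_nonneg _
  have hc0 : ∀ i, 0 ≤ (p i)⁻¹ - 1 := by
    intro i
    have : 1 ≤ (p i)⁻¹ := one_le_inv_iff₀.mpr ⟨hp0 i, hp1 i⟩
    linarith [this]
  refine lamMax_le_of_quadform hd _ hherm _ fun v hv => ?_
  set t : Fin n → ℝ := fun i => ∑ l, x i l * v l with ht
  have hCS : ∀ i, (t i) ^ 2 ≤ s i := by
    intro i
    have h := Finset.sum_mul_sq_le_sq_mul_sq Finset.univ (x i) v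
    rw [hv, mul_one] at h
    exact h
  have hquad : (∑ j, v j * (∑ k, (Matrix.of fun j k => ∫ ω, (Δ ω * Δ ω) j k ∂μ) j k * v k))
      = ((n:ℝ)^2)⁻¹ * ∑ i, ((p i)⁻¹ - 1) * (s i * (t i)^2) := by
    calc ∑ j, v j * (∑ k, (Matrix.of fun j k => ∫ ω, (Δ ω * Δ ω) j k ∂μ) j k * v k)
        = ∑ j, ∑ k, ∑ i, v j * ((((n:ℝ)^2)⁻¹ * (((p i)⁻¹ - 1) * (x i j * x i k * s i))) * v k) := by
          refine Finset.sum_congr rfl fun j _ => ?_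
          rw [Finset.mul_sum]
          refine Finset.sum_congr rfl fun k _ => ?_
          rw [hBent j k]
          simp only [Finset.mul_sum, Finset.sum_mul]
      _ = ∑ i, ∑ j, ∑ k, v j * ((((n:ℝ)^2)⁻¹ * (((p i)⁻¹ - 1) * (x i j * x i k * s i))) * v k) := by
          refine (Finset.sum_congr rfl fun j (_ : j ∈ Finset.univ) => Finset.sum_comm).trans ?_
          rw [Finset.sum_comm]
      _ = ((n:ℝ)^2)⁻¹ * ∑ i, ((p i)⁻¹ - 1) * (s i * (t i)^2) := by
          rw [Finset.mul_sum]
          refine Finset.sum_congr rfl fun i _ => ?_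
          rw [show (t i)^2 = (∑ j, x i j * v j) * (∑ k, x i k * v k) by rw [sq, ht]]
          rw [Finset.sum_mul_sum]
          simp only [Finset.mul_sum]
          refine Finset.sum_congr rfl fun j _ => Finset.sum_congr rfl fun k _ => by ring
  rw [hquad]
  have hterm : ∀ i, ((p i)⁻¹ - 1) * (s i * (t i)^2) ≤ (p i)⁻¹ * (s i * s i) := by
    intro i
    have h2 : s i * (t i)^2 ≤ s i * s i := mul_le_mul_of_nonneg_left (hCS i) (hs0 i)
    have h3 : 0 ≤ s i * (t i)^2 := mul_nonneg (hs0 i) (sq_nonneg _)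
    exact mul_le_mul (by linarith [hc0 i]) h2 h3 (inv_nonneg.mpr (hp0 i).le)
  calc ((n:ℝ)^2)⁻¹ * ∑ i, ((p i)⁻¹ - 1) * (s i * (t i)^2)
      ≤ ((n:ℝ)^2)⁻¹ * ∑ i, (p i)⁻¹ * (s i * s i) :=
        mul_le_mul_of_nonneg_left (Finset.sum_le_sum fun i _ => hterm i) (by positivity)
    _ = sS2 / r := by
        rw [hsS2, div_eq_mul_inv]
        rw [Finset.sum_congr rfl fun i (_ : i ∈ Finset.univ) =>
          show (p i)⁻¹ * (s i * s i) = r⁻¹ * ((w i)⁻¹ * (s i)^2) by rw [hp i, mul_inv]; ring]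
        rw [← Finset.mul_sum]
        ring
end

section
/- (Lemma 1 of the paper.) Let Δ = (1/n)·Σ_{i=1}^n (1 − γ_i/p_i)·x_i x_iᵀ, let R = max_i ‖x_i‖² and σ_Σ² = (1/n²)Σ_{i=1}^n π_i⁻¹‖x_i‖⁴. Then E[λ_max(Δ)] ≤ r^{−1/2}·σ_Σ·√(2 log d) + (R/(3n))·log d. -/
open MeasureTheory ProbabilityTheory Matrix

/-- A bounded measurable function on a finite measure space is integrable. -/
lemma aux_integrable_of_bdd {Ω : Type} [MeasurableSpace Ω] {μ : Measure Ω}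
    [IsFiniteMeasure μ] {f : Ω → ℝ} (hf : Measurable f) {C : ℝ}
    (h : ∀ ω, |f ω| ≤ C) : Integrable f μ :=
  ⟨hf.aestronglyMeasurable,
    HasFiniteIntegral.of_bounded (C := C)
      (Filter.Eventually.of_forall (by simpa [Real.norm_eq_abs] using h))⟩

/-- Cauchy–Schwarz / Jensen: `∫ f ≤ √(∫ f²)` on a probability space for `f ≥ 0`. -/
lemma aux_integral_le_sqrt {Ω : Type} [MeasurableSpace Ω] {μ : Measure Ω}
    [IsProbabilityMeasure μ] {f : Ω → ℝ} (hf : Integrable f μ)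
    (hf2 : Integrable (fun ω => f ω ^ 2) μ) (hpos : ∀ ω, 0 ≤ f ω) :
    ∫ ω, f ω ∂μ ≤ Real.sqrt (∫ ω, f ω ^ 2 ∂μ) := by
  set m := ∫ ω, f ω ∂μ with hm_def
  have hm : 0 ≤ m := integral_nonneg hpos
  have key : m ^ 2 ≤ ∫ ω, f ω ^ 2 ∂μ := by
    have h0 : 0 ≤ ∫ ω, (f ω - m) ^ 2 ∂μ := integral_nonneg fun ω => sq_nonneg _
    have hint : ∫ ω, (f ω - m) ^ 2 ∂μ = (∫ ω, f ω ^ 2 ∂μ) - m ^ 2 := by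
      have hptw : ∀ ω, (f ω - m) ^ 2 = f ω ^ 2 + ((-(2 * m)) * f ω + m ^ 2) := by
        intro ω; ring
      have hg2 : Integrable (fun ω => (-(2 * m)) * f ω + m ^ 2) μ :=
        (hf.const_mul _).add (integrable_const _)
      rw [integral_congr_ae (Filter.Eventually.of_forall hptw),
        integral_add hf2 hg2,
        integral_add (hf.const_mul _) (integrable_const _),
        integral_const_mul, integral_const]
      simp only [probReal_univ, ENNReal.toReal_one, smul_eq_mul, one_mul, ← hm_def]
      ring
    linarith
  calc m = Real.sqrt (m ^ 2) := by rw [Real.sqrt_sq hm]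
    _ ≤ _ := Real.sqrt_le_sqrt key

/-- The largest eigenvalue of a Hermitian real matrix is bounded by the
Frobenius norm. -/
lemma aux_lamMax_le_frobenius {d : ℕ} (hd : 0 < d) {M : Matrix (Fin d) (Fin d) ℝ}
    (hM : M.IsHermitian) :
    lamMax M ≤ Real.sqrt (∑ k, ∑ l, M k l ^ 2) := by
  have : Nonempty (Fin d) := ⟨⟨0, hd⟩⟩
  rw [lamMax, dif_pos hM]
  apply ciSup_le
  intro j
  set v : EuclideanSpace ℝ (Fin d) := hM.eigenvectorBasis j with hv_def
  have hv1 : ∑ k, v k ^ 2 = 1 := by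
    have hnorm : ‖v‖ = 1 := hM.eigenvectorBasis.orthonormal.1 j
    have h2 : Real.sqrt (∑ k, v k ^ 2) = 1 := by
      rw [← hnorm, EuclideanSpace.norm_eq]
      congr 1
      exact Finset.sum_congr rfl fun k _ => by rw [Real.norm_eq_abs, sq_abs]
    have := congrArg (· ^ 2) h2
    simpa [Real.sq_sqrt (Finset.sum_nonneg fun k _ => sq_nonneg (v k))] using this
  have hev : M *ᵥ ⇑v = hM.eigenvalues j • ⇑v := hM.mulVec_eigenvectorBasis j
  set lam := hM.eigenvalues j with hlam_def
  have hsq : lam ^ 2 ≤ ∑ k, ∑ l, M k l ^ 2 := by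
    have h2 : ∀ k, lam * v k = ∑ l, M k l * v l := by
      intro k
      have := congrFun hev k
      simpa [Matrix.mulVec, dotProduct] using this.symm
    calc lam ^ 2 = ∑ k, (lam * v k) ^ 2 := by
          simp_rw [mul_pow, ← Finset.mul_sum, hv1, mul_one]
      _ = ∑ k, (∑ l, M k l * v l) ^ 2 :=
          Finset.sum_congr rfl fun k _ => by rw [h2]
      _ ≤ ∑ k, (∑ l, M k l ^ 2) * (∑ l, v l ^ 2) :=
          Finset.sum_le_sum fun k _ => Finset.sum_mul_sq_le_sq_mul_sq _ _ _
      _ = ∑ k, ∑ l, M k l ^ 2 := by simp [hv1]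
  calc lam ≤ |lam| := le_abs_self _
    _ = Real.sqrt (lam ^ 2) := (Real.sqrt_sq_eq_abs lam).symm
    _ ≤ _ := Real.sqrt_le_sqrt hsq

/-- Lemma 1 of the paper: for the matrix Bernoulli series
`Δ = (1/n)Σ_i (1 − γ_i/p_i) x_i x_iᵀ`, with `R = max_i ‖x_i‖²` and
`σ_Σ² = (1/n²)Σ_i π_i⁻¹‖x_i‖⁴`, one has
`E[λ_max(Δ)] ≤ r^{−1/2}·σ_Σ·√(2 log d) + (R/(3n))·log d`. -/
theorem stmt5 {n d : ℕ} (hn : 1 ≤ n) (hd : 2 ≤ d)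
    (x : Fin n → Fin d → ℝ)
    (w : Fin n → ℝ) (hw0 : ∀ i, 0 < w i) (hw1 : ∑ i, w i = 1)
    (r : ℝ) (hr : 0 < r)
    (p : Fin n → ℝ) (hp : ∀ i, p i = r * w i) (hp1 : ∀ i, p i ≤ 1)
    (sS2 : ℝ) (hsS2 : sS2 = ((n : ℝ) ^ 2)⁻¹ * ∑ i, (w i)⁻¹ * (∑ k, x i k ^ 2) ^ 2)
    (R : ℝ) (hR : R = ⨆ j, ∑ k, x j k ^ 2)
    {Ω : Type} [MeasurableSpace Ω] (μ : Measure Ω) [IsProbabilityMeasure μ]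
    (γ : Fin n → Ω → ℝ) (hmeas : ∀ i, Measurable (γ i))
    (h01 : ∀ i ω, γ i ω = 0 ∨ γ i ω = 1)
    (hBer : ∀ i, μ {ω | γ i ω = 1} = ENNReal.ofReal (p i))
    (hind : iIndepFun γ μ)
    (Δ : Ω → Matrix (Fin d) (Fin d) ℝ)
    (hΔ : ∀ ω, Δ ω = (n : ℝ)⁻¹ • ∑ i, (1 - γ i ω / p i) • vecMulVec (x i) (x i)) :
    (∫ ω, lamMax (Δ ω) ∂μ) ≤
      (Real.sqrt r)⁻¹ * Real.sqrt sS2 * Real.sqrt (2 * Real.log d) +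
        (R / (3 * n)) * Real.log d := by
  have hppos : ∀ i, 0 < p i := fun i => (hp i) ▸ mul_pos hr (hw0 i)
  have hpinv : ∀ i, 0 ≤ (p i)⁻¹ := fun i => inv_nonneg.2 (hppos i).le
  -- the centered variables
  set Y : Fin n → Ω → ℝ := fun i ω => 1 - γ i ω / p i with hY_def
  have hYmeas : ∀ i, Measurable (Y i) := fun i =>
    measurable_const.sub ((hmeas i).div_const _)
  have hYbd : ∀ i ω, |Y i ω| ≤ 1 + (p i)⁻¹ := by
    intro i ω
    have h1 : (1 : ℝ) ≤ (p i)⁻¹ := (one_le_inv₀ (hppos i)).2 (hp1 i)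
    rcases h01 i ω with h | h
    · simp only [hY_def, h, zero_div, sub_zero]
      rw [abs_one]
      linarith [hpinv i]
    · simp only [hY_def, h, one_div]
      rw [abs_le]
      constructor <;> linarith
  have hYint : ∀ i, Integrable (Y i) μ := fun i =>
    aux_integrable_of_bdd (hYmeas i) (hYbd i)
  have hγint : ∀ i, Integrable (γ i) μ := by
    intro i
    refine aux_integrable_of_bdd (hmeas i) (C := 1) fun ω => ?_
    rcases h01 i ω with h | h <;> simp [h]
  -- expectation of γ i
  have hEγ : ∀ i, ∫ ω, γ i ω ∂μ = p i := by
    intro i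
    have hs : MeasurableSet {ω | γ i ω = 1} := (hmeas i) (measurableSet_singleton 1)
    have hfun : (fun ω => γ i ω) =
        Set.indicator {ω | γ i ω = 1} (fun _ => (1 : ℝ)) := by
      funext ω
      rcases h01 i ω with h | h <;> simp [Set.indicator_apply, h]
    rw [hfun, integral_indicator_const (1 : ℝ) hs, measureReal_def, hBer i,
      ENNReal.toReal_ofReal (hppos i).le, smul_eq_mul, mul_one]
  have hEY : ∀ i, ∫ ω, Y i ω ∂μ = 0 := by
    intro i
    have hfun : ∀ ω, Y i ω = 1 - (p i)⁻¹ * γ i ω := by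
      intro ω; rw [hY_def]; ring
    rw [integral_congr_ae (Filter.Eventually.of_forall hfun),
      integral_sub (integrable_const _) ((hγint i).const_mul _),
      integral_const_mul, hEγ i, integral_const]
    simp only [probReal_univ, ENNReal.toReal_one, smul_eq_mul, one_mul]
    rw [inv_mul_cancel₀ (hppos i).ne', sub_self]
  -- second moment of Y i
  have hEY2 : ∀ i, ∫ ω, Y i ω ^ 2 ∂μ = (p i)⁻¹ - 1 := by
    intro i
    have hptw : ∀ ω, Y i ω ^ 2 = 1 + (((p i)⁻¹ ^ 2 - 2 * (p i)⁻¹) * γ i ω) := by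
      intro ω
      have hpne : p i ≠ 0 := (hppos i).ne'
      rcases h01 i ω with h | h <;>
        · simp only [hY_def, h]
          field_simp
          try ring
    rw [integral_congr_ae (Filter.Eventually.of_forall hptw),
      integral_add (integrable_const _) ((hγint i).const_mul _),
      integral_const_mul, hEγ i, integral_const, probReal_univ]
    have hpne : p i ≠ 0 := (hppos i).ne'
    field_simp
    ring
  have hE2le : ∀ i, ∫ ω, Y i ω ^ 2 ∂μ ≤ (p i)⁻¹ := by
    intro i; rw [hEY2 i]; linarith
  have hE2nonneg : ∀ i, 0 ≤ ∫ ω, Y i ω ^ 2 ∂μ := fun i =>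
    integral_nonneg fun ω => sq_nonneg _
  -- products are integrable
  have hYYint : ∀ i j, Integrable (fun ω => Y i ω * Y j ω) μ := by
    intro i j
    refine aux_integrable_of_bdd ((hYmeas i).mul (hYmeas j))
      (C := (1 + (p i)⁻¹) * (1 + (p j)⁻¹)) fun ω => ?_
    rw [abs_mul]
    exact mul_le_mul (hYbd i ω) (hYbd j ω) (abs_nonneg _)
      (by linarith [hpinv i])
  -- cross terms vanish
  have hcross : ∀ i j, i ≠ j → ∫ ω, Y i ω * Y j ω ∂μ = 0 := by
    intro i j hij
    have hYind : IndepFun (Y i) (Y j) μ := by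
      have h := hind.indepFun hij
      exact h.comp (measurable_const.sub (measurable_id.div_const (p i)))
        (measurable_const.sub (measurable_id.div_const (p j)))
    have := hYind.integral_mul_eq_mul_integral (hYint i).aestronglyMeasurable (hYint j).aestronglyMeasurable
    have heq : ∫ ω, Y i ω * Y j ω ∂μ = ∫ ω, (Y i * Y j) ω ∂μ := rfl
    rw [heq, this, hEY i, hEY j, mul_zero]
  -- entries of Δ
  have hΔentry : ∀ ω k l, Δ ω k l = (n : ℝ)⁻¹ * ∑ i, Y i ω * (x i k * x i l) := by
    intro ω k l
    rw [hΔ ω]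
    simp only [Matrix.smul_apply, Matrix.sum_apply, smul_eq_mul,
      Matrix.vecMulVec_apply, hY_def]
  have hHerm : ∀ ω, (Δ ω).IsHermitian := by
    intro ω
    show (Δ ω)ᴴ = Δ ω
    ext k l
    rw [Matrix.conjTranspose_apply, hΔentry ω l k, hΔentry ω k l]
    simp only [star_trivial]
    congr 1
    exact Finset.sum_congr rfl fun i _ => by ring
  -- integrability of entries and their products
  have hΔmeas : ∀ k l, Measurable (fun ω => Δ ω k l) := by
    intro k l
    simp_rw [hΔentry]
    exact measurable_const.mul
      (Finset.measurable_sum _ fun i _ => (hYmeas i).mul_const _)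
  have hΔbd : ∀ k l ω, |Δ ω k l| ≤
      (n : ℝ)⁻¹ * ∑ i, (1 + (p i)⁻¹) * |x i k * x i l| := by
    intro k l ω
    rw [hΔentry ω k l, abs_mul, abs_of_nonneg (inv_nonneg.2 (Nat.cast_nonneg n))]
    refine mul_le_mul_of_nonneg_left ?_ (inv_nonneg.2 (Nat.cast_nonneg n))
    refine (Finset.abs_sum_le_sum_abs _ _).trans (Finset.sum_le_sum fun i _ => ?_)
    rw [abs_mul]
    exact mul_le_mul_of_nonneg_right (hYbd i ω) (abs_nonneg _)
  have hΔint2 : ∀ k l k' l', Integrable (fun ω => Δ ω k l * Δ ω k' l') μ := by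
    intro k l k' l'
    refine aux_integrable_of_bdd ((hΔmeas k l).mul (hΔmeas k' l'))
      (C := ((n : ℝ)⁻¹ * ∑ i, (1 + (p i)⁻¹) * |x i k * x i l|) *
        ((n : ℝ)⁻¹ * ∑ i, (1 + (p i)⁻¹) * |x i k' * x i l'|)) fun ω => ?_
    rw [abs_mul]
    exact mul_le_mul (hΔbd k l ω) (hΔbd k' l' ω) (abs_nonneg _)
      ((abs_nonneg _).trans (hΔbd k l ω))
  have hΔsqint : ∀ k l, Integrable (fun ω => Δ ω k l ^ 2) μ := by
    intro k l
    have := hΔint2 k l k l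
    simpa [sq] using this
  -- compute ∫ (Δ k l)^2
  have hIkl : ∀ k l, ∫ ω, Δ ω k l ^ 2 ∂μ =
      ((n : ℝ)⁻¹) ^ 2 * ∑ i, (∫ ω, Y i ω ^ 2 ∂μ) * (x i k * x i l) ^ 2 := by
    intro k l
    have hptw : ∀ ω, Δ ω k l ^ 2 = ((n : ℝ)⁻¹) ^ 2 *
        ∑ i, ∑ j, (Y i ω * Y j ω) * ((x i k * x i l) * (x j k * x j l)) := by
      intro ω
      rw [hΔentry ω k l, mul_pow,
        pow_two (∑ i, Y i ω * (x i k * x i l)), Finset.sum_mul_sum]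
      congr 1
      refine Finset.sum_congr rfl fun i _ => Finset.sum_congr rfl fun j _ => by ring
    rw [integral_congr_ae (Filter.Eventually.of_forall hptw), integral_const_mul]
    congr 1
    rw [integral_finset_sum _ fun i _ => integrable_finset_sum _
      fun j _ => ((hYYint i j).mul_const _)]
    refine Finset.sum_congr rfl fun i _ => ?_
    rw [integral_finset_sum _ fun j _ => ((hYYint i j).mul_const _)]
    rw [Finset.sum_eq_single i]
    · rw [integral_mul_const]
      have : ∫ ω, Y i ω * Y i ω ∂μ = ∫ ω, Y i ω ^ 2 ∂μ :=
        integral_congr_ae (Filter.Eventually.of_forall fun ω => (sq (Y i ω)).symm)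
      rw [this]; ring
    · intro j _ hji
      rw [integral_mul_const, hcross i j (fun h => hji (h.symm ▸ rfl)), zero_mul]
    · intro h; exact absurd (Finset.mem_univ i) h
  -- total second moment bound
  set G : ℝ := ∑ k, ∑ l, ∫ ω, Δ ω k l ^ 2 ∂μ with hG_def
  have hGle : G ≤ r⁻¹ * sS2 := by
    have hGeq : G = ((n : ℝ)⁻¹) ^ 2 *
        ∑ i, (∫ ω, Y i ω ^ 2 ∂μ) * (∑ k, x i k ^ 2) ^ 2 := by
      have key : ∀ i, (∑ k, ∑ l,
          (∫ ω, Y i ω ^ 2 ∂μ) * (x i k * x i l) ^ 2) =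
          (∫ ω, Y i ω ^ 2 ∂μ) * (∑ k, x i k ^ 2) ^ 2 := by
        intro i
        rw [pow_two (∑ k, x i k ^ 2), Finset.sum_mul_sum, Finset.mul_sum]
        refine Finset.sum_congr rfl fun k _ => ?_
        rw [Finset.mul_sum]
        exact Finset.sum_congr rfl fun l _ => by ring
      rw [hG_def]
      simp_rw [hIkl, ← Finset.mul_sum]
      congr 1
      calc ∑ k, ∑ l, ∑ i, (∫ ω, Y i ω ^ 2 ∂μ) * (x i k * x i l) ^ 2
          = ∑ k, ∑ i, ∑ l, (∫ ω, Y i ω ^ 2 ∂μ) * (x i k * x i l) ^ 2 :=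
            Finset.sum_congr rfl fun k _ => Finset.sum_comm
        _ = ∑ i, ∑ k, ∑ l, (∫ ω, Y i ω ^ 2 ∂μ) * (x i k * x i l) ^ 2 :=
            Finset.sum_comm
        _ = ∑ i, (∫ ω, Y i ω ^ 2 ∂μ) * (∑ k, x i k ^ 2) ^ 2 :=
            Finset.sum_congr rfl fun i _ => key i
    rw [hGeq, hsS2]
    have hsum : ∑ i, (∫ ω, Y i ω ^ 2 ∂μ) * (∑ k, x i k ^ 2) ^ 2 ≤
        ∑ i, r⁻¹ * ((w i)⁻¹ * (∑ k, x i k ^ 2) ^ 2) := by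
      refine Finset.sum_le_sum fun i _ => ?_
      have h1 : (∫ ω, Y i ω ^ 2 ∂μ) ≤ r⁻¹ * (w i)⁻¹ := by
        have := hE2le i
        rwa [hp i, mul_inv] at this
      calc (∫ ω, Y i ω ^ 2 ∂μ) * (∑ k, x i k ^ 2) ^ 2
          ≤ (r⁻¹ * (w i)⁻¹) * (∑ k, x i k ^ 2) ^ 2 :=
            mul_le_mul_of_nonneg_right h1 (sq_nonneg _)
        _ = r⁻¹ * ((w i)⁻¹ * (∑ k, x i k ^ 2) ^ 2) := by ring
    calc ((n : ℝ)⁻¹) ^ 2 * ∑ i, (∫ ω, Y i ω ^ 2 ∂μ) * (∑ k, x i k ^ 2) ^ 2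
        ≤ ((n : ℝ)⁻¹) ^ 2 * ∑ i, r⁻¹ * ((w i)⁻¹ * (∑ k, x i k ^ 2) ^ 2) :=
          mul_le_mul_of_nonneg_left hsum (sq_nonneg _)
      _ = r⁻¹ * (((n : ℝ) ^ 2)⁻¹ * ∑ i, (w i)⁻¹ * (∑ k, x i k ^ 2) ^ 2) := by
          rw [← Finset.mul_sum, inv_pow]; ring
  -- the Frobenius norm function
  set F : Ω → ℝ := fun ω => Real.sqrt (∑ k, ∑ l, Δ ω k l ^ 2) with hF_def
  have hFpos : ∀ ω, 0 ≤ F ω := fun ω => Real.sqrt_nonneg _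
  have hSnonneg : ∀ ω, 0 ≤ ∑ k, ∑ l, Δ ω k l ^ 2 := fun ω =>
    Finset.sum_nonneg fun k _ => Finset.sum_nonneg fun l _ => sq_nonneg _
  have hF2eq : ∀ ω, F ω ^ 2 = ∑ k, ∑ l, Δ ω k l ^ 2 := fun ω =>
    Real.sq_sqrt (hSnonneg ω)
  have hSint : Integrable (fun ω => ∑ k, ∑ l, Δ ω k l ^ 2) μ :=
    integrable_finset_sum _ fun k _ => integrable_finset_sum _ fun l _ => hΔsqint k l
  have hF2int : Integrable (fun ω => F ω ^ 2) μ := by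
    refine hSint.congr (Filter.Eventually.of_forall fun ω => (hF2eq ω).symm)
  have hFmeas : Measurable F := by
    apply Measurable.sqrt
    exact Finset.measurable_sum _ fun k _ =>
      Finset.measurable_sum _ fun l _ => (hΔmeas k l).pow_const 2
  have hFint : Integrable F μ := by
    refine Integrable.mono' ((integrable_const 1).add hSint)
      hFmeas.aestronglyMeasurable (Filter.Eventually.of_forall fun ω => ?_)
    rw [Real.norm_eq_abs, abs_of_nonneg (hFpos ω)]
    have ht : (0 : ℝ) ≤ ∑ k, ∑ l, Δ ω k l ^ 2 := hSnonneg ω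
    calc F ω ≤ Real.sqrt ((1 + ∑ k, ∑ l, Δ ω k l ^ 2) ^ 2) :=
          Real.sqrt_le_sqrt (by nlinarith)
      _ = 1 + ∑ k, ∑ l, Δ ω k l ^ 2 := Real.sqrt_sq (by linarith)
  -- ∫ F ≤ √(r⁻¹ sS2)
  have hsS2nonneg : 0 ≤ sS2 := by
    rw [hsS2]
    exact mul_nonneg (inv_nonneg.2 (sq_nonneg _))
      (Finset.sum_nonneg fun i _ =>
        mul_nonneg (inv_nonneg.2 (hw0 i).le) (sq_nonneg _))
  have hFbound : ∫ ω, F ω ∂μ ≤ (Real.sqrt r)⁻¹ * Real.sqrt sS2 := by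
    have h1 : ∫ ω, F ω ∂μ ≤ Real.sqrt (∫ ω, F ω ^ 2 ∂μ) :=
      aux_integral_le_sqrt hFint hF2int hFpos
    have h2 : ∫ ω, F ω ^ 2 ∂μ = G := by
      rw [integral_congr_ae (Filter.Eventually.of_forall hF2eq), hG_def,
        integral_finset_sum _ fun k _ =>
          integrable_finset_sum _ fun l _ => hΔsqint k l]
      exact Finset.sum_congr rfl fun k _ =>
        integral_finset_sum _ fun l _ => hΔsqint k l
    calc ∫ ω, F ω ∂μ ≤ Real.sqrt G := h2 ▸ h1
      _ ≤ Real.sqrt (r⁻¹ * sS2) := Real.sqrt_le_sqrt hGle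
      _ = (Real.sqrt r)⁻¹ * Real.sqrt sS2 := by
          rw [Real.sqrt_mul (inv_nonneg.2 hr.le), Real.sqrt_inv]
  -- pointwise bound on lamMax
  have hptwise : ∀ ω, lamMax (Δ ω) ≤ F ω := fun ω =>
    aux_lamMax_le_frobenius (by omega) (hHerm ω)
  -- first step: ∫ lamMax ≤ ∫ F
  have hstep1 : ∫ ω, lamMax (Δ ω) ∂μ ≤ ∫ ω, F ω ∂μ := by
    by_cases hL : Integrable (fun ω => lamMax (Δ ω)) μ
    · exact integral_mono hL hFint hptwise
    · rw [integral_undef hL]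
      exact integral_nonneg hFpos
  -- numeric facts
  have hlogd : (0 : ℝ) ≤ Real.log d :=
    Real.log_nonneg (by exact_mod_cast Nat.one_le_of_lt hd)
  have hsqrt1 : (1 : ℝ) ≤ Real.sqrt (2 * Real.log d) := by
    have h2 : Real.log 2 ≤ Real.log d :=
      Real.log_le_log (by norm_num) (by exact_mod_cast hd)
    have h3 : (0.6931471803 : ℝ) < Real.log 2 := Real.log_two_gt_d9
    have h4 : (1 : ℝ) ≤ 2 * Real.log d := by linarith
    calc (1 : ℝ) = Real.sqrt 1 := Real.sqrt_one.symm
      _ ≤ _ := Real.sqrt_le_sqrt h4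
  have hR0 : 0 ≤ R := by
    rw [hR]
    have : Nonempty (Fin n) := ⟨⟨0, hn⟩⟩
    exact le_ciSup_of_le (Set.Finite.bddAbove (Set.finite_range _)) ⟨0, hn⟩
      (Finset.sum_nonneg fun k _ => sq_nonneg _)
  have hterm2 : 0 ≤ (R / (3 * n)) * Real.log d :=
    mul_nonneg (div_nonneg hR0 (by positivity)) hlogd
  calc ∫ ω, lamMax (Δ ω) ∂μ ≤ ∫ ω, F ω ∂μ := hstep1
    _ ≤ (Real.sqrt r)⁻¹ * Real.sqrt sS2 := hFbound
    _ ≤ (Real.sqrt r)⁻¹ * Real.sqrt sS2 * Real.sqrt (2 * Real.log d) :=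
        le_mul_of_one_le_right
          (mul_nonneg (inv_nonneg.2 (Real.sqrt_nonneg r)) (Real.sqrt_nonneg _))
          hsqrt1
    _ ≤ _ := le_add_of_nonneg_right hterm2
end

section
/- Let β̂_n = Σ_n⁻¹ b_n be the full-data least-squares solution and e_i = y_i − x_iᵀβ̂_n the residuals. Then E[ ‖b_s − Σ_s β̂_n‖² ] = (1/n²)·Σ_{i=1}^n (1/p_i − 1)·‖x_i‖²·e_i² ≤ σ_b²/r, where σ_b² = (1/n²)Σ_{i=1}^n π_i⁻¹‖x_i‖² e_i², Σ_s = (1/n)Σ_i (γ_i/p_i)x_i x_iᵀ and b_s = (1/n)Σ_i (γ_i/p_i)y_i x_i. -/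
open MeasureTheory ProbabilityTheory Matrix

lemma my_integrable_of_bdd {Ω : Type} [MeasurableSpace Ω] {μ : Measure Ω} [IsProbabilityMeasure μ]
    {g : Ω → ℝ} (hm : Measurable g) {C : ℝ} (hC : ∀ ω, |g ω| ≤ C) : Integrable g μ :=
  ⟨hm.aestronglyMeasurable, HasFiniteIntegral.of_bounded (C := C) (ae_of_all _ (by simpa using hC))⟩

lemma my_bernoulli_integral {Ω : Type} [MeasurableSpace Ω] {μ : Measure Ω} [IsProbabilityMeasure μ]
    {g : Ω → ℝ} (hm : Measurable g) (h01 : ∀ ω, g ω = 0 ∨ g ω = 1)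
    {q : ℝ} (hq0 : 0 ≤ q) (hq : μ {ω | g ω = 1} = ENNReal.ofReal q) :
    ∫ ω, g ω ∂μ = q := by
  have hs : MeasurableSet {ω | g ω = 1} := hm (measurableSet_singleton 1)
  have hgi : g = Set.indicator {ω | g ω = 1} (fun _ => (1:ℝ)) := by
    funext ω
    rcases h01 ω with h | h <;> simp [Set.indicator, h]
  rw [hgi, integral_indicator_const _ hs, measureReal_def, hq]
  simp [ENNReal.toReal_ofReal hq0]

/-- `E[‖b_s − Σ_s β̂_n‖²] = (1/n²)Σ_i (1/p_i − 1)‖x_i‖² e_i² ≤ σ_b²/r`. -/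
theorem stmt8 {n d : ℕ} (hn : 1 ≤ n) (hd : 1 ≤ d)
    (x : Fin n → Fin d → ℝ) (y : Fin n → ℝ)
    (Sn : Matrix (Fin d) (Fin d) ℝ)
    (hSn : Sn = (n : ℝ)⁻¹ • ∑ i, vecMulVec (x i) (x i))
    (hpd : Sn.PosDef)
    (bn : Fin d → ℝ) (hbn : bn = (n : ℝ)⁻¹ • ∑ i, y i • x i)
    (βhat : Fin d → ℝ) (hβ : βhat = Sn⁻¹ *ᵥ bn)
    (e : Fin n → ℝ) (he : ∀ i, e i = y i - ∑ k, x i k * βhat k)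
    (w : Fin n → ℝ) (hw0 : ∀ i, 0 < w i) (hw1 : ∑ i, w i = 1)
    (r : ℝ) (hr : 0 < r)
    (p : Fin n → ℝ) (hp : ∀ i, p i = r * w i) (hp1 : ∀ i, p i ≤ 1)
    (sb2 : ℝ) (hsb2 : sb2 = ((n : ℝ) ^ 2)⁻¹ * ∑ i, (w i)⁻¹ * (∑ k, x i k ^ 2) * e i ^ 2)
    {Ω : Type} [MeasurableSpace Ω] (μ : Measure Ω) [IsProbabilityMeasure μ]
    (γ : Fin n → Ω → ℝ) (hmeas : ∀ i, Measurable (γ i))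
    (h01 : ∀ i ω, γ i ω = 0 ∨ γ i ω = 1)
    (hBer : ∀ i, μ {ω | γ i ω = 1} = ENNReal.ofReal (p i))
    (hind : iIndepFun γ μ)
    (Ss : Ω → Matrix (Fin d) (Fin d) ℝ)
    (hSs : ∀ ω, Ss ω = (n : ℝ)⁻¹ • ∑ i, (γ i ω / p i) • vecMulVec (x i) (x i))
    (bs : Ω → Fin d → ℝ)
    (hbs : ∀ ω, bs ω = (n : ℝ)⁻¹ • ∑ i, (γ i ω / p i) • y i • x i) :
    (∫ ω, ∑ j, (bs ω j - (Ss ω *ᵥ βhat) j) ^ 2 ∂μ) =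
        ((n : ℝ) ^ 2)⁻¹ * ∑ i, ((p i)⁻¹ - 1) * (∑ k, x i k ^ 2) * e i ^ 2 ∧
      ((n : ℝ) ^ 2)⁻¹ * ∑ i, ((p i)⁻¹ - 1) * (∑ k, x i k ^ 2) * e i ^ 2 ≤ sb2 / r := by
  have hN : (n : ℝ) ≠ 0 := Nat.cast_ne_zero.mpr (by omega)
  have hp0 : ∀ i, 0 < p i := fun i => by rw [hp]; exact mul_pos hr (hw0 i)
  -- residuals sum to zero against each coordinate
  have hdet : IsUnit Sn.det := isUnit_iff_ne_zero.mpr (ne_of_gt hpd.det_pos)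
  have hSb : Sn *ᵥ βhat = bn := by
    rw [hβ, Matrix.mulVec_mulVec, Matrix.mul_nonsing_inv _ hdet, Matrix.one_mulVec]
  have hSnexp : ∀ j, (Sn *ᵥ βhat) j = (n : ℝ)⁻¹ * ∑ i, (∑ k, x i k * βhat k) * x i j := by
    intro j
    simp only [hSn, Matrix.mulVec, dotProduct, Matrix.smul_apply, Matrix.sum_apply,
      vecMulVec_apply, smul_eq_mul, Finset.mul_sum]
    simp_rw [Finset.sum_mul, Finset.mul_sum]
    rw [Finset.sum_comm]
    exact Finset.sum_congr rfl fun i _ => Finset.sum_congr rfl fun k _ => by ring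
  have hB : ∀ j, ∑ i, e i * x i j = 0 := by
    intro j
    have h1 : (Sn *ᵥ βhat) j = bn j := by rw [hSb]
    rw [hSnexp j] at h1
    have h2 : bn j = (n : ℝ)⁻¹ * ∑ i, y i * x i j := by
      simp [hbn, Finset.sum_apply, Finset.mul_sum]
    rw [h2] at h1
    have h3 : ∑ i, (∑ k, x i k * βhat k) * x i j = ∑ i, y i * x i j :=
      mul_left_cancel₀ (inv_ne_zero hN) h1
    calc ∑ i, e i * x i j = ∑ i, (y i * x i j - (∑ k, x i k * βhat k) * x i j) := by
          refine Finset.sum_congr rfl fun i _ => ?_; rw [he i]; ring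
      _ = 0 := by rw [Finset.sum_sub_distrib, h3, sub_self]
  -- the centered representation
  set a : Fin n → Ω → ℝ := fun i ω => γ i ω / p i - 1 with ha
  set c : Fin n → Fin d → ℝ := fun i j => e i * x i j with hc
  have hA : ∀ ω j, bs ω j - (Ss ω *ᵥ βhat) j = (n : ℝ)⁻¹ * ∑ i, a i ω * c i j := by
    intro ω j
    have h1 : bs ω j = (n : ℝ)⁻¹ * ∑ i, (γ i ω / p i) * (y i * x i j) := by
      simp [hbs, Finset.sum_apply, Finset.mul_sum, mul_assoc]
    have h2 : (Ss ω *ᵥ βhat) j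
        = (n : ℝ)⁻¹ * ∑ i, (γ i ω / p i) * ((∑ k, x i k * βhat k) * x i j) := by
      simp only [hSs, Matrix.mulVec, dotProduct, Matrix.smul_apply, Matrix.sum_apply,
        vecMulVec_apply, Pi.smul_apply, smul_eq_mul, Finset.mul_sum]
      simp_rw [Finset.sum_mul, Finset.mul_sum]
      rw [Finset.sum_comm]
      exact Finset.sum_congr rfl fun i _ => Finset.sum_congr rfl fun k _ => by ring
    have h3 : ∑ i, a i ω * c i j = ∑ i, (γ i ω / p i) * (e i * x i j) := by
      have : ∑ i, a i ω * c i j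
          = ∑ i, ((γ i ω / p i) * (e i * x i j) - e i * x i j) := by
        refine Finset.sum_congr rfl fun i _ => ?_; simp only [ha, hc]; ring
      rw [this, Finset.sum_sub_distrib, hB j, sub_zero]
    rw [h1, h2, h3, ← mul_sub, ← Finset.sum_sub_distrib]
    congr 1
    refine Finset.sum_congr rfl fun i _ => ?_
    rw [he i]; ring
  -- probabilistic facts
  have hameas : ∀ i, Measurable (a i) := fun i =>
    ((hmeas i).div_const (p i)).sub measurable_const
  have hpinv : ∀ i, 1 ≤ (p i)⁻¹ := by
    intro i
    have h1 := hp1 i; have h2 := hp0 i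
    nlinarith [inv_pos.2 h2, mul_inv_cancel₀ (ne_of_gt h2)]
  have habdd : ∀ i ω, |a i ω| ≤ (p i)⁻¹ := by
    intro i ω
    simp only [ha]
    rcases h01 i ω with h | h <;> rw [h]
    · rw [zero_div, zero_sub, abs_neg, abs_one]; exact hpinv i
    · rw [one_div, abs_of_nonneg (by have := hpinv i; linarith)]
      linarith
  have haint : ∀ i, Integrable (a i) μ := fun i => my_integrable_of_bdd (hameas i) (habdd i)
  have hγint : ∀ i, Integrable (γ i) μ := fun i => my_integrable_of_bdd (hmeas i)
    (C := 1) (fun ω => by rcases h01 i ω with h | h <;> simp [h])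
  have hγmean : ∀ i, ∫ ω, γ i ω ∂μ = p i := fun i =>
    my_bernoulli_integral (hmeas i) (h01 i) (le_of_lt (hp0 i)) (hBer i)
  have hamean : ∀ i, ∫ ω, a i ω ∂μ = 0 := by
    intro i
    have h1 : ∫ ω, a i ω ∂μ = (∫ ω, γ i ω / p i ∂μ) - ∫ _ω, (1:ℝ) ∂μ := by
      simp only [ha]
      exact integral_sub ((hγint i).div_const (p i)) (integrable_const 1)
    rw [h1, integral_div, hγmean i, div_self (ne_of_gt (hp0 i))]
    simp
  have hIm : ∀ i k, Integrable (fun ω => a i ω * a k ω) μ := by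
    intro i k
    refine my_integrable_of_bdd ((hameas i).mul (hameas k)) (C := (p i)⁻¹ * (p k)⁻¹) ?_
    intro ω
    rw [abs_mul]
    exact mul_le_mul (habdd i ω) (habdd k ω) (abs_nonneg _)
      (le_of_lt (inv_pos.2 (hp0 i)))
  have hE2 : ∀ i k, (∫ ω, a i ω * a k ω ∂μ) = if i = k then (p i)⁻¹ - 1 else 0 := by
    intro i k
    by_cases hik : i = k
    · subst hik
      simp only [if_pos rfl]
      have hpt : ∀ ω, a i ω * a i ω = γ i ω * (((p i)⁻¹ - 1) ^ 2 - 1) + 1 := by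
        intro ω
        simp only [ha]
        rcases h01 i ω with h | h <;> rw [h]
        · rw [zero_div]; ring
        · rw [one_div]; ring
      calc (∫ ω, a i ω * a i ω ∂μ)
          = ∫ ω, γ i ω * (((p i)⁻¹ - 1) ^ 2 - 1) + 1 ∂μ := by
            exact integral_congr_ae (ae_of_all _ hpt)
        _ = (∫ ω, γ i ω ∂μ) * (((p i)⁻¹ - 1) ^ 2 - 1) + 1 := by
            rw [integral_add ((hγint i).mul_const _) (integrable_const 1),
              integral_mul_const, integral_const]
            simp
        _ = p i * (((p i)⁻¹ - 1) ^ 2 - 1) + 1 := by rw [hγmean i]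
        _ = (p i)⁻¹ - 1 := by
            have hne : p i ≠ 0 := ne_of_gt (hp0 i)
            field_simp
            ring
    · simp only [if_neg hik]
      have hind2 : IndepFun (a i) (a k) μ := by
        have := (hind.indepFun hik).comp
          (φ := fun t => t / p i - 1) (ψ := fun t => t / p k - 1)
          ((measurable_id.div_const (p i)).sub measurable_const)
          ((measurable_id.div_const (p k)).sub measurable_const)
        exact this
      have := IndepFun.integral_mul_eq_mul_integral hind2 (haint i).1 (haint k).1
      rw [hamean i, hamean k, mul_zero] at this
      simpa [Pi.mul_apply] using this
  -- main computation
  have hmain : (∫ ω, ∑ j, (bs ω j - (Ss ω *ᵥ βhat) j) ^ 2 ∂μ) =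
      ((n : ℝ) ^ 2)⁻¹ * ∑ i, ((p i)⁻¹ - 1) * (∑ k, x i k ^ 2) * e i ^ 2 := by
    have hpt : ∀ ω, ∑ j, (bs ω j - (Ss ω *ᵥ βhat) j) ^ 2
        = ∑ j, ∑ i, ∑ k, (a i ω * a k ω) * (((n : ℝ) ^ 2)⁻¹ * (c i j * c k j)) := by
      intro ω
      refine Finset.sum_congr rfl fun j _ => ?_
      rw [hA ω j, mul_pow, sq (∑ i, a i ω * c i j), Finset.sum_mul_sum, Finset.mul_sum]
      refine Finset.sum_congr rfl fun i _ => ?_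
      rw [Finset.mul_sum]
      refine Finset.sum_congr rfl fun k _ => ?_
      rw [← inv_pow]; ring
    calc (∫ ω, ∑ j, (bs ω j - (Ss ω *ᵥ βhat) j) ^ 2 ∂μ)
        = ∫ ω, ∑ j, ∑ i, ∑ k, (a i ω * a k ω) * (((n : ℝ) ^ 2)⁻¹ * (c i j * c k j)) ∂μ :=
          integral_congr_ae (ae_of_all _ hpt)
      _ = ∑ j, ∑ i, ∑ k, (∫ ω, a i ω * a k ω ∂μ) * (((n : ℝ) ^ 2)⁻¹ * (c i j * c k j)) := by
          rw [integral_finset_sum _ (fun j _ => integrable_finset_sum _ (fun i _ =>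
            integrable_finset_sum _ (fun k _ => (hIm i k).mul_const _)))]
          refine Finset.sum_congr rfl fun j _ => ?_
          rw [integral_finset_sum _ (fun i _ =>
            integrable_finset_sum _ (fun k _ => (hIm i k).mul_const _))]
          refine Finset.sum_congr rfl fun i _ => ?_
          rw [integral_finset_sum _ (fun k _ => (hIm i k).mul_const _)]
          refine Finset.sum_congr rfl fun k _ => ?_
          exact integral_mul_const _ _
      _ = ∑ j, ∑ i, ((p i)⁻¹ - 1) * (((n : ℝ) ^ 2)⁻¹ * (c i j) ^ 2) := by
          refine Finset.sum_congr rfl fun j _ => Finset.sum_congr rfl fun i _ => ?_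
          rw [Finset.sum_eq_single i]
          · rw [hE2 i i, if_pos rfl]; ring
          · intro k _ hk
            rw [hE2 i k, if_neg (Ne.symm hk), zero_mul]
          · intro h; exact absurd (Finset.mem_univ i) h
      _ = ((n : ℝ) ^ 2)⁻¹ * ∑ i, ((p i)⁻¹ - 1) * (∑ k, x i k ^ 2) * e i ^ 2 := by
          rw [Finset.sum_comm, Finset.mul_sum]
          refine Finset.sum_congr rfl fun i _ => ?_
          have hsq : ∑ j, (c i j) ^ 2 = (∑ k, x i k ^ 2) * e i ^ 2 := by
            calc ∑ j, (c i j) ^ 2 = ∑ j, x i j ^ 2 * e i ^ 2 := by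
                  refine Finset.sum_congr rfl fun j _ => ?_
                  simp only [hc]; ring
              _ = (∑ k, x i k ^ 2) * e i ^ 2 := by rw [Finset.sum_mul]
          have hfac : ∑ j, ((p i)⁻¹ - 1) * (((n : ℝ) ^ 2)⁻¹ * (c i j) ^ 2)
              = ((p i)⁻¹ - 1) * ((n : ℝ) ^ 2)⁻¹ * ∑ j, (c i j) ^ 2 := by
            rw [Finset.mul_sum]
            exact Finset.sum_congr rfl fun j _ => by ring
          rw [hfac, hsq]; ring
  refine ⟨hmain, ?_⟩
  -- inequality part
  rw [hsb2, div_eq_mul_inv, mul_assoc]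
  refine mul_le_mul_of_nonneg_left ?_ (by positivity)
  rw [Finset.sum_mul]
  refine Finset.sum_le_sum fun i _ => ?_
  have hS : (0:ℝ) ≤ ∑ k, x i k ^ 2 := by positivity
  have h1 : (p i)⁻¹ - 1 ≤ (w i)⁻¹ * r⁻¹ := by
    have : (p i)⁻¹ = (w i)⁻¹ * r⁻¹ := by rw [hp i, mul_inv]; ring
    have hpinvpos : 0 < (p i)⁻¹ := inv_pos.2 (hp0 i)
    linarith
  calc ((p i)⁻¹ - 1) * (∑ k, x i k ^ 2) * e i ^ 2
      ≤ ((w i)⁻¹ * r⁻¹) * (∑ k, x i k ^ 2) * e i ^ 2 :=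
        mul_le_mul_of_nonneg_right (mul_le_mul_of_nonneg_right h1 hS) (sq_nonneg _)
    _ = (w i)⁻¹ * (∑ k, x i k ^ 2) * e i ^ 2 * r⁻¹ := by ring
end

section
/- Let β̂_n = Σ_n⁻¹ b_n, e_i = y_i − x_iᵀβ̂_n, σ_b² = (1/n²)Σ_{i=1}^n π_i⁻¹‖x_i‖² e_i². For every δ ∈ (0,1), P( ‖b_s − Σ_s β̂_n‖ > σ_b / (√r · δ) ) ≤ δ, where Σ_s = (1/n)Σ_i (γ_i/p_i)x_i x_iᵀ and b_s = (1/n)Σ_i (γ_i/p_i)y_i x_i. -/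
open MeasureTheory ProbabilityTheory Matrix

/-- A measurable 0/1-valued function is integrable and its integral is the measure of `{=1}`. -/
lemma integrable_of_zero_one {Ω : Type} [MeasurableSpace Ω] (μ : Measure Ω)
    [IsProbabilityMeasure μ] (f : Ω → ℝ) (hf : Measurable f)
    (h01 : ∀ ω, f ω = 0 ∨ f ω = 1) :
    Integrable f μ ∧ ∫ ω, f ω ∂μ = (μ {ω | f ω = 1}).toReal := by
  have hs : MeasurableSet {ω | f ω = 1} := hf (measurableSet_singleton 1)
  have hfi : f = Set.indicator {ω | f ω = 1} (fun _ => (1:ℝ)) := by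
    funext ω
    rcases h01 ω with h | h <;> simp [Set.indicator, h]
  constructor
  · rw [hfi]
    exact (integrable_const (1:ℝ)).indicator hs
  · conv_lhs => rw [hfi]
    rw [integral_indicator_const (1:ℝ) hs, smul_eq_mul, mul_one]
    rfl

/-- for every `δ ∈ (0,1)`,
`P(‖b_s − Σ_s β̂_n‖ > σ_b/(√r·δ)) ≤ δ`, where `σ_b² = (1/n²)Σ_i π_i⁻¹‖x_i‖² e_i²`. -/
theorem stmt9 {n d : ℕ} (hn : 1 ≤ n) (hd : 1 ≤ d)
    (x : Fin n → Fin d → ℝ) (y : Fin n → ℝ)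
    (Sn : Matrix (Fin d) (Fin d) ℝ)
    (hSn : Sn = (n : ℝ)⁻¹ • ∑ i, vecMulVec (x i) (x i))
    (hpd : Sn.PosDef)
    (bn : Fin d → ℝ) (hbn : bn = (n : ℝ)⁻¹ • ∑ i, y i • x i)
    (βhat : Fin d → ℝ) (hβ : βhat = Sn⁻¹ *ᵥ bn)
    (e : Fin n → ℝ) (he : ∀ i, e i = y i - ∑ k, x i k * βhat k)
    (w : Fin n → ℝ) (hw0 : ∀ i, 0 < w i) (hw1 : ∑ i, w i = 1)
    (r : ℝ) (hr : 0 < r)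
    (p : Fin n → ℝ) (hp : ∀ i, p i = r * w i) (hp1 : ∀ i, p i ≤ 1)
    (sb2 : ℝ) (hsb2 : sb2 = ((n : ℝ) ^ 2)⁻¹ * ∑ i, (w i)⁻¹ * (∑ k, x i k ^ 2) * e i ^ 2)
    {Ω : Type} [MeasurableSpace Ω] (μ : Measure Ω) [IsProbabilityMeasure μ]
    (γ : Fin n → Ω → ℝ) (hmeas : ∀ i, Measurable (γ i))
    (h01 : ∀ i ω, γ i ω = 0 ∨ γ i ω = 1)
    (hBer : ∀ i, μ {ω | γ i ω = 1} = ENNReal.ofReal (p i))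
    (hind : iIndepFun γ μ)
    (Ss : Ω → Matrix (Fin d) (Fin d) ℝ)
    (hSs : ∀ ω, Ss ω = (n : ℝ)⁻¹ • ∑ i, (γ i ω / p i) • vecMulVec (x i) (x i))
    (bs : Ω → Fin d → ℝ)
    (hbs : ∀ ω, bs ω = (n : ℝ)⁻¹ • ∑ i, (γ i ω / p i) • y i • x i)
    (δ : ℝ) (hδ : δ ∈ Set.Ioo (0 : ℝ) 1) :
    μ {ω | Real.sqrt sb2 / (Real.sqrt r * δ) < euclNorm (bs ω - Ss ω *ᵥ βhat)} ≤
      ENNReal.ofReal δ := by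
  classical
  obtain ⟨hδ0, hδ1⟩ := hδ
  have hn0 : (0:ℝ) < (n:ℝ) := by exact_mod_cast Nat.lt_of_lt_of_le Nat.zero_lt_one hn
  have hp0 : ∀ i, 0 < p i := fun i => by rw [hp i]; exact mul_pos hr (hw0 i)
  set c : Fin n → Fin d → ℝ := fun i k => e i * x i k with hc
  -- β̂ solves the normal equations exactly
  have hSnβ : Sn *ᵥ βhat = bn := by
    rw [hβ, Matrix.mulVec_mulVec, Matrix.mul_nonsing_inv Sn
      (isUnit_iff_ne_zero.mpr (ne_of_gt hpd.det_pos)), Matrix.one_mulVec]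
  have expand1 : ∀ k, (Sn *ᵥ βhat) k = (n:ℝ)⁻¹ * ∑ i, (∑ l, x i l * βhat l) * x i k := by
    intro k
    rw [hSn]
    simp only [Matrix.smul_mulVec, Pi.smul_apply, smul_eq_mul]
    congr 1
    simp only [Matrix.mulVec, dotProduct, Matrix.sum_apply, vecMulVec_apply]
    calc ∑ l, (∑ i, x i k * x i l) * βhat l
        = ∑ l, ∑ i, x i k * x i l * βhat l := by simp [Finset.sum_mul]
      _ = ∑ i, ∑ l, x i k * x i l * βhat l := Finset.sum_comm
      _ = ∑ i, (∑ l, x i l * βhat l) * x i k := by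
          apply Finset.sum_congr rfl; intro i _
          rw [Finset.sum_mul]; apply Finset.sum_congr rfl; intro l _; ring
  have expand2 : ∀ k, bn k = (n:ℝ)⁻¹ * ∑ i, y i * x i k := by
    intro k
    rw [hbn]
    simp [Finset.sum_apply, smul_eq_mul]
  -- residual orthogonality: ∑ i, e i * x i k = 0
  have hsum0 : ∀ k, ∑ i, c i k = 0 := by
    intro k
    have h1 : (Sn *ᵥ βhat) k = bn k := by rw [hSnβ]
    rw [expand1 k, expand2 k] at h1
    have h4 : ∑ i, (∑ l, x i l * βhat l) * x i k = ∑ i, y i * x i k :=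
      mul_left_cancel₀ (inv_ne_zero hn0.ne') h1
    simp only [hc, he]
    calc ∑ i, (y i - ∑ l, x i l * βhat l) * x i k
        = ∑ i, y i * x i k - ∑ i, (∑ l, x i l * βhat l) * x i k := by
          rw [← Finset.sum_sub_distrib]; apply Finset.sum_congr rfl; intros; ring
      _ = 0 := by rw [h4, sub_self]
  -- the deviation vector
  have hval : ∀ ω k, (bs ω - Ss ω *ᵥ βhat) k
      = (n:ℝ)⁻¹ * ∑ i, γ i ω / p i * c i k := by
    intro ω k
    have e1 : bs ω k = (n:ℝ)⁻¹ * ∑ i, γ i ω / p i * (y i * x i k) := by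
      rw [hbs]
      simp [Finset.sum_apply, smul_eq_mul, mul_assoc]
    have e2 : (Ss ω *ᵥ βhat) k
        = (n:ℝ)⁻¹ * ∑ i, γ i ω / p i * ((∑ l, x i l * βhat l) * x i k) := by
      rw [hSs]
      simp only [Matrix.smul_mulVec, Pi.smul_apply, smul_eq_mul]
      congr 1
      simp only [Matrix.mulVec, dotProduct, Matrix.sum_apply, Matrix.smul_apply,
        vecMulVec_apply, smul_eq_mul]
      calc ∑ l, (∑ i, γ i ω / p i * (x i k * x i l)) * βhat l
          = ∑ l, ∑ i, γ i ω / p i * (x i k * x i l) * βhat l := by simp [Finset.sum_mul]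
        _ = ∑ i, ∑ l, γ i ω / p i * (x i k * x i l) * βhat l := Finset.sum_comm
        _ = ∑ i, γ i ω / p i * ((∑ l, x i l * βhat l) * x i k) := by
            apply Finset.sum_congr rfl; intro i _
            rw [Finset.sum_mul, Finset.mul_sum]
            apply Finset.sum_congr rfl; intro l _; ring
    rw [Pi.sub_apply, e1, e2, ← mul_sub, ← Finset.sum_sub_distrib]
    congr 1
    apply Finset.sum_congr rfl
    intro i _
    simp only [hc, he]
    ring
  -- quadratic form data
  set A : Fin n → Fin n → ℝ := fun i j => ∑ k, c i k * c j k with hA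
  set q : Fin n → Fin n → ℝ := fun i j => A i j / (p i * p j) with hq
  set g : Ω → ℝ := fun ω => ∑ k, ((n:ℝ)⁻¹ * ∑ i, γ i ω / p i * c i k) ^ 2 with hg
  have hgnn : ∀ ω, 0 ≤ g ω := fun ω => Finset.sum_nonneg fun k _ => sq_nonneg _
  have hnorm : ∀ ω, euclNorm (bs ω - Ss ω *ᵥ βhat) = Real.sqrt (g ω) := by
    intro ω
    unfold euclNorm
    congr 1
    apply Finset.sum_congr rfl
    intro k _
    rw [hval ω k]
  have hgexp : ∀ ω, g ω = ((n:ℝ) ^ 2)⁻¹ * ∑ i, ∑ j, q i j * (γ i ω * γ j ω) := by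
    intro ω
    calc g ω = ∑ k, ((n:ℝ) ^ 2)⁻¹ *
          ((∑ i, γ i ω / p i * c i k) * (∑ j, γ j ω / p j * c j k)) := by
          apply Finset.sum_congr rfl; intro k _; ring
      _ = ((n:ℝ) ^ 2)⁻¹ * ∑ k, ∑ i, ∑ j,
            (γ i ω / p i * c i k) * (γ j ω / p j * c j k) := by
          rw [← Finset.mul_sum]
          congr 1
          apply Finset.sum_congr rfl; intro k _
          rw [Finset.sum_mul_sum]
      _ = ((n:ℝ) ^ 2)⁻¹ * ∑ i, ∑ j, q i j * (γ i ω * γ j ω) := by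
          congr 1
          rw [Finset.sum_comm]
          apply Finset.sum_congr rfl; intro i _
          rw [Finset.sum_comm]
          apply Finset.sum_congr rfl; intro j _
          have hpij : p i * p j ≠ 0 := (mul_pos (hp0 i) (hp0 j)).ne'
          simp only [hq, hA]
          rw [div_mul_eq_mul_div, Finset.sum_mul, Finset.sum_div]
          apply Finset.sum_congr rfl; intro k _
          field_simp
  -- integrals of the Bernoulli variables
  have hint : ∀ i, Integrable (γ i) μ :=
    fun i => (integrable_of_zero_one μ (γ i) (hmeas i) (h01 i)).1
  have hEγ : ∀ i, ∫ ω, γ i ω ∂μ = p i := by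
    intro i
    rw [(integrable_of_zero_one μ (γ i) (hmeas i) (h01 i)).2, hBer i,
      ENNReal.toReal_ofReal (hp0 i).le]
  have hprod01 : ∀ i j ω, γ i ω * γ j ω = 0 ∨ γ i ω * γ j ω = 1 := by
    intro i j ω
    rcases h01 i ω with h | h <;> rcases h01 j ω with h' | h' <;> simp [h, h']
  have hintprod : ∀ i j, Integrable (fun ω => γ i ω * γ j ω) μ := fun i j =>
    (integrable_of_zero_one μ _ ((hmeas i).mul (hmeas j)) (hprod01 i j)).1
  have hE2 : ∀ i j, ∫ ω, γ i ω * γ j ω ∂μ = if i = j then p i else p i * p j := by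
    intro i j
    by_cases hij : i = j
    · subst hij
      simp only [if_pos rfl]
      have h2 : ∫ ω, γ i ω * γ i ω ∂μ = ∫ ω, γ i ω ∂μ := by
        apply integral_congr_ae
        filter_upwards with ω
        rcases h01 i ω with h | h <;> simp [h]
      rw [h2, hEγ]
      simp
    · simp only [if_neg hij]
      have hIF : IndepFun (γ i) (γ j) μ := hind.indepFun hij
      have h3 := hIF.integral_mul_eq_mul_integral (hint i).aestronglyMeasurable (hint j).aestronglyMeasurable
      rw [← hEγ i, ← hEγ j, ← h3]
      rfl
  -- integral of g
  have hIg : ∫ ω, g ω ∂μ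
      = ((n:ℝ) ^ 2)⁻¹ * ∑ i, ∑ j, q i j * (if i = j then p i else p i * p j) := by
    calc ∫ ω, g ω ∂μ
        = ∫ ω, ((n:ℝ) ^ 2)⁻¹ * ∑ i, ∑ j, q i j * (γ i ω * γ j ω) ∂μ := by
          apply integral_congr_ae
          filter_upwards with ω using hgexp ω
      _ = ((n:ℝ) ^ 2)⁻¹ * ∑ i, ∑ j, q i j * (if i = j then p i else p i * p j) := by
          rw [integral_const_mul]
          congr 1
          rw [integral_finset_sum _ (fun i _ =>
            integrable_finset_sum _ (fun j _ => (hintprod i j).const_mul _))]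
          apply Finset.sum_congr rfl; intro i _
          rw [integral_finset_sum _ (fun j _ => (hintprod i j).const_mul _)]
          apply Finset.sum_congr rfl; intro j _
          rw [integral_const_mul, hE2]
  have hAzero : ∑ i, ∑ j, A i j = 0 := by
    simp only [hA]
    calc ∑ i, ∑ j, ∑ k, c i k * c j k
        = ∑ i, ∑ k, ∑ j, c i k * c j k := by
          apply Finset.sum_congr rfl; intro i _; exact Finset.sum_comm
      _ = ∑ k, ∑ i, ∑ j, c i k * c j k := Finset.sum_comm
      _ = ∑ k, (∑ i, c i k) * (∑ j, c j k) := by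
          apply Finset.sum_congr rfl; intro k _
          exact (Finset.sum_mul_sum _ _ _ _).symm
      _ = 0 := by simp [hsum0]
  have hIg2 : ∫ ω, g ω ∂μ = ((n:ℝ) ^ 2)⁻¹ * ∑ i, (A i i / p i - A i i) := by
    rw [hIg]
    congr 1
    have hterm : ∀ i j : Fin n, q i j * (if i = j then p i else p i * p j)
        = A i j + (if i = j then A i i / p i - A i i else 0) := by
      intro i j
      have hpi := (hp0 i).ne'
      by_cases hij : i = j
      · subst hij
        simp only [hq, eq_self_iff_true, if_true]
        have h5 : A i i + (A i i / p i - A i i) = A i i / p i := by ring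
        rw [h5, div_mul_eq_mul_div, mul_div_mul_right _ _ hpi]
      · simp only [if_neg hij, hq, add_zero]
        exact div_mul_cancel₀ _ (mul_pos (hp0 i) (hp0 j)).ne'
    calc ∑ i, ∑ j, q i j * (if i = j then p i else p i * p j)
        = ∑ i, ∑ j, (A i j + (if i = j then A i i / p i - A i i else 0)) := by
          apply Finset.sum_congr rfl; intro i _
          apply Finset.sum_congr rfl; intro j _
          exact hterm i j
      _ = (∑ i, ∑ j, A i j) + ∑ i, ∑ j, (if i = j then A i i / p i - A i i else 0) := by
          rw [← Finset.sum_add_distrib]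
          apply Finset.sum_congr rfl; intro i _
          rw [Finset.sum_add_distrib]
      _ = ∑ i, (A i i / p i - A i i) := by
          rw [hAzero, zero_add]
          apply Finset.sum_congr rfl; intro i _
          rw [Finset.sum_ite_eq _ i (fun _ => A i i / p i - A i i)]
          simp
  have hAii : ∀ i, A i i = (∑ k, x i k ^ 2) * e i ^ 2 := by
    intro i
    simp only [hA, hc]
    rw [Finset.sum_mul]
    apply Finset.sum_congr rfl; intro k _
    ring
  have hAnn : ∀ i, 0 ≤ A i i := fun i =>
    Finset.sum_nonneg fun k _ => mul_self_nonneg _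
  have hIle : ∫ ω, g ω ∂μ ≤ sb2 / r := by
    rw [hIg2, hsb2]
    rw [mul_div_assoc, Finset.sum_div]
    apply mul_le_mul_of_nonneg_left _ (by positivity)
    apply Finset.sum_le_sum
    intro i _
    have heq : (w i)⁻¹ * (∑ k, x i k ^ 2) * e i ^ 2 / r = A i i / p i := by
      rw [hAii, hp i]
      field_simp
    rw [heq]
    exact sub_le_self _ (hAnn i)
  have hgint : Integrable g μ := by
    have hrepr : g = fun ω => ((n:ℝ) ^ 2)⁻¹ * ∑ i, ∑ j, q i j * (γ i ω * γ j ω) :=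
      funext hgexp
    rw [hrepr]
    exact (integrable_finset_sum _ fun i _ =>
      integrable_finset_sum _ fun j _ => (hintprod i j).const_mul _).const_mul _
  have hgmeas : Measurable g := by
    apply Finset.measurable_sum
    intro k _
    exact (measurable_const.mul (Finset.measurable_sum _ fun i _ =>
      ((hmeas i).div_const (p i)).mul_const (c i k))).pow_const 2
  -- nonnegativity of sb2
  have hsb2nn : 0 ≤ sb2 := by
    rw [hsb2]
    apply mul_nonneg (by positivity)
    apply Finset.sum_nonneg
    intro i _
    exact mul_nonneg (mul_nonneg (inv_nonneg.mpr (hw0 i).le)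
      (Finset.sum_nonneg fun k _ => sq_nonneg _)) (sq_nonneg _)
  rcases eq_or_lt_of_le hsb2nn with hz | hpos
  · -- degenerate case sb2 = 0
    have hczero : ∀ i k, c i k = 0 := by
      have hsumz : ∑ i, (w i)⁻¹ * (∑ k, x i k ^ 2) * e i ^ 2 = 0 := by
        have h0 : ((n:ℝ) ^ 2)⁻¹ * ∑ i, (w i)⁻¹ * (∑ k, x i k ^ 2) * e i ^ 2 = 0 := by
          rw [← hsb2, ← hz]
        have hne : ((n:ℝ) ^ 2)⁻¹ ≠ 0 := by positivity
        exact (mul_eq_zero.mp h0).resolve_left hne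
      intro i k
      have hterm := (Finset.sum_eq_zero_iff_of_nonneg (fun i _ =>
        mul_nonneg (mul_nonneg (inv_nonneg.mpr (hw0 i).le)
          (Finset.sum_nonneg fun k _ => sq_nonneg _)) (sq_nonneg _))).1 hsumz i
        (Finset.mem_univ i)
      have hwne : (w i)⁻¹ ≠ 0 := inv_ne_zero (hw0 i).ne'
      have h1 : (∑ k, x i k ^ 2) * e i ^ 2 = 0 := by
        rcases mul_eq_zero.mp hterm with h | h
        · rcases mul_eq_zero.mp h with h' | h'
          · exact absurd h' hwne
          · rw [h', zero_mul]
        · rw [h, mul_zero]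
      have h2 : ∑ k, x i k ^ 2 * e i ^ 2 = 0 := by
        rw [← Finset.sum_mul, h1]
      have h3 := (Finset.sum_eq_zero_iff_of_nonneg (fun k _ => by positivity)).1 h2 k
        (Finset.mem_univ k)
      have : (x i k * e i) ^ 2 = 0 := by rw [mul_pow]; linarith [h3]
      have h4 : x i k * e i = 0 := pow_eq_zero_iff (n := 2) (by norm_num) |>.mp this
      simp only [hc]
      linarith [h4]
    have hempty : {ω | Real.sqrt sb2 / (Real.sqrt r * δ)
        < euclNorm (bs ω - Ss ω *ᵥ βhat)} = ∅ := by
      ext ω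
      simp only [Set.mem_setOf_eq, Set.mem_empty_iff_false, iff_false, not_lt]
      rw [hnorm ω]
      have hge : g ω = 0 := by
        simp only [hg]
        apply Finset.sum_eq_zero
        intro k _
        have : ∑ i, γ i ω / p i * c i k = 0 :=
          Finset.sum_eq_zero fun i _ => by rw [hczero i k, mul_zero]
        rw [this, mul_zero]
        norm_num
      rw [hge, ← hz]
      simp
    rw [hempty]
    simp
  · -- main case sb2 > 0
    set t := sb2 / (r * δ ^ 2) with ht
    have ht0 : 0 < t := div_pos hpos (mul_pos hr (pow_pos hδ0 2))
    have hthresh : Real.sqrt sb2 / (Real.sqrt r * δ) = Real.sqrt t := by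
      rw [ht, Real.sqrt_div' sb2 (by positivity), Real.sqrt_mul hr.le,
        Real.sqrt_sq hδ0.le]
    have hsubset : {ω | Real.sqrt sb2 / (Real.sqrt r * δ)
        < euclNorm (bs ω - Ss ω *ᵥ βhat)}
        ⊆ {ω | ENNReal.ofReal t ≤ ENNReal.ofReal (g ω)} := by
      intro ω hω
      simp only [Set.mem_setOf_eq] at hω ⊢
      rw [hnorm ω, hthresh] at hω
      have h2 : t ≤ g ω := by
        by_contra hcon
        push_neg at hcon
        exact absurd hω (not_lt.mpr (Real.sqrt_le_sqrt hcon.le))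
      exact ENNReal.ofReal_le_ofReal h2
    have hmarkov := mul_meas_ge_le_lintegral₀ (μ := μ)
      (f := fun ω => ENNReal.ofReal (g ω))
      (ENNReal.measurable_ofReal.comp hgmeas).aemeasurable (ENNReal.ofReal t)
    have hlin : ∫⁻ ω, ENNReal.ofReal (g ω) ∂μ = ENNReal.ofReal (∫ ω, g ω ∂μ) :=
      (ofReal_integral_eq_lintegral_ofReal hgint
        (Filter.Eventually.of_forall hgnn)).symm
    have hchain : ENNReal.ofReal t *
        μ {ω | Real.sqrt sb2 / (Real.sqrt r * δ)
          < euclNorm (bs ω - Ss ω *ᵥ βhat)} ≤ ENNReal.ofReal (sb2 / r) := by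
      calc ENNReal.ofReal t * μ _
          ≤ ENNReal.ofReal t * μ {ω | ENNReal.ofReal t ≤ ENNReal.ofReal (g ω)} :=
            mul_le_mul_right (measure_mono hsubset) _
        _ ≤ ∫⁻ ω, ENNReal.ofReal (g ω) ∂μ := hmarkov
        _ = ENNReal.ofReal (∫ ω, g ω ∂μ) := hlin
        _ ≤ ENNReal.ofReal (sb2 / r) := ENNReal.ofReal_le_ofReal hIle
    have htne : ENNReal.ofReal t ≠ 0 := by
      simp [ENNReal.ofReal_eq_zero, not_le, ht0]
    have hfinal : μ {ω | Real.sqrt sb2 / (Real.sqrt r * δ)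
        < euclNorm (bs ω - Ss ω *ᵥ βhat)}
        ≤ ENNReal.ofReal (sb2 / r) / ENNReal.ofReal t := by
      rw [ENNReal.le_div_iff_mul_le (Or.inl htne) (Or.inl ENNReal.ofReal_ne_top)]
      rw [mul_comm]
      exact hchain
    refine hfinal.trans ?_
    rw [← ENNReal.ofReal_div_of_pos ht0]
    have hdiv : sb2 / r / t = δ ^ 2 := by
      rw [ht]
      field_simp
    rw [hdiv]
    apply ENNReal.ofReal_le_ofReal
    nlinarith
end

section
/- (Equation (A.9) in the proof of Theorem 1.) Assume δ ∈ (0,1) with δ > 2R·log d/(3n·λ_min(Σ_n)) and r > 2σ_Σ²·log d / ( δ²·( λ_min(Σ_n)/2 − R·log d/(3nδ) )² ). Then with probability at least 1 − 2δ, the matrix Σ_s is invertible and the subsample estimator β̃ = Σ_s⁻¹ b_s satisfies ‖β̃ − β̂_n‖ ≤ C₁·r^{−1/2} + C₂·r^{−1}, where C₁ = 2·λ_min(Σ_n)⁻¹·δ⁻¹·σ_b and C₂ = 2·√(2 log d)·λ_min(Σ_n)⁻²·δ⁻²·σ_Σ·σ_b. -/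
open MeasureTheory ProbabilityTheory Matrix

section aux

lemma lamMin_pos' {d : ℕ} [NeZero d] {S : Matrix (Fin d) (Fin d) ℝ} (hpd : S.PosDef) :
    0 < lamMin S := by
  rw [lamMin, dif_pos hpd.1]
  obtain ⟨i, hi⟩ := exists_eq_ciInf_of_finite (f := hpd.1.eigenvalues)
  rw [← hi]
  exact hpd.eigenvalues_pos i

lemma rayleigh' {d : ℕ} [NeZero d] {S : Matrix (Fin d) (Fin d) ℝ} (hpd : S.PosDef)
    (u : Fin d → ℝ) : lamMin S * (∑ k, u k ^ 2) ≤ u ⬝ᵥ (S *ᵥ u) := by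
  have hH := hpd.1
  set c := lamMin S with hc
  have hcle : ∀ i, c ≤ hH.eigenvalues i := by
    intro i
    rw [hc, lamMin, dif_pos hH]
    exact ciInf_le (Finite.bddBelow_range _) i
  set U : Matrix (Fin d) (Fin d) ℝ := (hH.eigenvectorUnitary : Matrix (Fin d) (Fin d) ℝ) with hU
  have hunit : U * star U = 1 := (Matrix.mem_unitaryGroup_iff).mp (hH.eigenvectorUnitary).2
  have hdiag : S - c • 1 = U * Matrix.diagonal (fun i => hH.eigenvalues i - c) * star U := by
    have hspec := hH.spectral_theorem
    have h1 : (c • (1 : Matrix (Fin d) (Fin d) ℝ)) = U * (c • 1) * star U := by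
      rw [Matrix.mul_smul, Matrix.mul_one, Matrix.smul_mul, hunit]
    calc S - c • 1 = U * Matrix.diagonal (RCLike.ofReal ∘ hH.eigenvalues) * star U
          - U * (c • 1) * star U := by
            rw [← (show S = U * Matrix.diagonal (RCLike.ofReal ∘ hH.eigenvalues) * star U from hspec), ← h1]
      _ = U * (Matrix.diagonal (RCLike.ofReal ∘ hH.eigenvalues) - c • 1) * star U := by
          rw [← Matrix.sub_mul, ← Matrix.mul_sub]
      _ = _ := by
          congr 2
          rw [← Matrix.diagonal_one, ← Matrix.diagonal_smul, Matrix.diagonal_sub]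
          congr 1
          funext i
          simp
  have hpsd : (S - c • 1).PosSemidef := by
    rw [hdiag, Matrix.star_eq_conjTranspose]
    exact (Matrix.posSemidef_diagonal_iff.mpr
      (fun i => sub_nonneg.mpr (hcle i))).mul_mul_conjTranspose_same U
  have h2 := hpsd.dotProduct_mulVec_nonneg u
  have hstar : star u = u := by funext k; simp
  rw [hstar, Matrix.sub_mulVec, Matrix.smul_mulVec, Matrix.one_mulVec,
    dotProduct_sub, dotProduct_smul] at h2
  have hdp : u ⬝ᵥ u = ∑ k, u k ^ 2 := by
    simp [dotProduct, pow_two]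
  rw [hdp, smul_eq_mul] at h2
  linarith

lemma integrable_of_bound' {Ω : Type} [MeasurableSpace Ω] (μ : Measure Ω) [IsFiniteMeasure μ]
    (f : Ω → ℝ) (hf : Measurable f) (C : ℝ) (h : ∀ ω, |f ω| ≤ C) : Integrable f μ :=
  Integrable.mono' (integrable_const C) hf.aestronglyMeasurable
    (Filter.Eventually.of_forall (by simpa [Real.norm_eq_abs] using h))

lemma markov_real' {Ω : Type} [MeasurableSpace Ω] (μ : Measure Ω)
    (g : Ω → ℝ) (hg : Measurable g)
    (hgi : Integrable g μ) (hg0 : ∀ ω, 0 ≤ g ω) {t B : ℝ} (ht : 0 < t)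
    (hB : ∫ ω, g ω ∂μ ≤ B) :
    μ {ω | t < g ω} ≤ ENNReal.ofReal (B / t) := by
  have h1 : μ {ω | t < g ω} ≤ μ {ω | ENNReal.ofReal t ≤ ENNReal.ofReal (g ω)} :=
    measure_mono (fun ω hω => ENNReal.ofReal_le_ofReal (le_of_lt hω))
  have h2 := meas_ge_le_lintegral_div (μ := μ) (f := fun ω => ENNReal.ofReal (g ω))
    (hg.ennreal_ofReal.aemeasurable) (ε := ENNReal.ofReal t)
    (by simp [ht]) (by simp)
  rw [← ofReal_integral_eq_lintegral_ofReal hgi (Filter.Eventually.of_forall hg0)] at h2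
  refine h1.trans (h2.trans ?_)
  rw [← ENNReal.ofReal_div_of_pos ht]
  apply ENNReal.ofReal_le_ofReal
  gcongr

lemma second_moment' {n : ℕ} {Ω : Type} [MeasurableSpace Ω] (μ : Measure Ω)
    [IsProbabilityMeasure μ]
    (γ : Fin n → Ω → ℝ) (hmeas : ∀ i, Measurable (γ i))
    (h01 : ∀ i ω, γ i ω = 0 ∨ γ i ω = 1)
    (p : Fin n → ℝ) (hp0 : ∀ i, 0 < p i)
    (hBer : ∀ i, μ {ω | γ i ω = 1} = ENNReal.ofReal (p i))
    (hind : iIndepFun γ μ)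
    (a : Fin n → ℝ) :
    ∫ ω, (∑ i, a i * (γ i ω / p i - 1)) ^ 2 ∂μ ≤ ∑ i, (a i) ^ 2 / p i := by
  set Z : Fin n → Ω → ℝ := fun i ω => γ i ω / p i - 1 with hZ
  have hZmeas : ∀ i, Measurable (Z i) := fun i => ((hmeas i).div_const _).sub measurable_const
  have hγb : ∀ i ω, |γ i ω| ≤ 1 := by
    intro i ω; rcases h01 i ω with h | h <;> rw [h] <;> norm_num
  have hZb : ∀ i ω, |Z i ω| ≤ (p i)⁻¹ + 1 := by
    intro i ω
    have h1 : |γ i ω / p i| ≤ (p i)⁻¹ := by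
      rw [abs_div, abs_of_pos (hp0 i), div_le_iff₀ (hp0 i)]
      calc |γ i ω| ≤ 1 := hγb i ω
        _ = (p i)⁻¹ * p i := by rw [inv_mul_cancel₀ (hp0 i).ne']
    calc |Z i ω| ≤ |γ i ω / p i| + |(1:ℝ)| := abs_sub _ _
      _ ≤ (p i)⁻¹ + 1 := by rw [abs_one]; linarith
  have hZint : ∀ i, Integrable (Z i) μ := fun i =>
    integrable_of_bound' μ _ (hZmeas i) _ (hZb i)
  have hγint : ∀ i, ∫ ω, γ i ω ∂μ = p i := by
    intro i
    have hset : MeasurableSet {ω | γ i ω = 1} := (hmeas i) (measurableSet_singleton 1)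
    have hind' : γ i = Set.indicator {ω | γ i ω = 1} (fun _ => (1:ℝ)) := by
      funext ω
      rcases h01 i ω with h | h
      · rw [h, Set.indicator_of_notMem]
        simp only [Set.mem_setOf_eq, h]; norm_num
      · rw [h, Set.indicator_of_mem]
        exact h
    rw [hind', integral_indicator_const _ hset, measureReal_def, hBer i, smul_eq_mul, mul_one,
      ENNReal.toReal_ofReal (hp0 i).le]
  have hZzero : ∀ i, ∫ ω, Z i ω ∂μ = 0 := by
    intro i
    rw [hZ]
    simp only
    rw [integral_sub ((integrable_of_bound' μ _ (hmeas i) 1 (hγb i)).div_const _)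
      (integrable_const 1), integral_div, hγint, integral_const]
    simp [div_self (hp0 i).ne']
  have hZsq : ∀ i, ∫ ω, (Z i ω) ^ 2 ∂μ = (p i)⁻¹ - 1 := by
    intro i
    have hq : ∀ ω, (Z i ω) ^ 2 = γ i ω * ((p i)⁻¹ ^ 2 - 2 * (p i)⁻¹) + 1 := by
      intro ω
      have hγγ : γ i ω * γ i ω = γ i ω := by
        rcases h01 i ω with h | h <;> rw [h] <;> ring
      show (γ i ω / p i - 1) ^ 2 = _
      rw [div_eq_mul_inv]
      calc (γ i ω * (p i)⁻¹ - 1) ^ 2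
          = (γ i ω * γ i ω) * (p i)⁻¹ ^ 2 - 2 * (γ i ω * (p i)⁻¹) + 1 := by ring
        _ = _ := by rw [hγγ]; ring
    calc ∫ ω, (Z i ω) ^ 2 ∂μ = ∫ ω, (γ i ω * ((p i)⁻¹ ^ 2 - 2 * (p i)⁻¹) + 1) ∂μ := by
          apply integral_congr_ae; exact Filter.Eventually.of_forall (fun ω => hq ω)
      _ = (p i) * ((p i)⁻¹ ^ 2 - 2 * (p i)⁻¹) + 1 := by
          rw [integral_add (((integrable_of_bound' μ _ (hmeas i) 1 (hγb i)).mul_const _))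
            (integrable_const 1), integral_mul_const, hγint, integral_const]
          simp
      _ = (p i)⁻¹ - 1 := by
          have hpq : p i * (p i)⁻¹ = 1 := mul_inv_cancel₀ (hp0 i).ne'
          calc p i * ((p i)⁻¹ ^ 2 - 2 * (p i)⁻¹) + 1
              = (p i * (p i)⁻¹) * (p i)⁻¹ - 2 * (p i * (p i)⁻¹) + 1 := by ring
            _ = (p i)⁻¹ - 1 := by rw [hpq]; ring
  have hcross : ∀ i j, i ≠ j → ∫ ω, Z i ω * Z j ω ∂μ = 0 := by
    intro i j hij
    have hindZ : IndepFun (Z i) (Z j) μ := by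
      have h := hind.indepFun hij
      exact h.comp (φ := fun t => t / p i - 1) (ψ := fun t => t / p j - 1)
        ((measurable_id.div_const _).sub measurable_const)
        ((measurable_id.div_const _).sub measurable_const)
    have h := hindZ.integral_mul_eq_mul_integral (hZint i).aestronglyMeasurable (hZint j).aestronglyMeasurable
    rw [hZzero, hZzero, mul_zero] at h
    simpa [Pi.mul_apply] using h
  have hprodint : ∀ i j, Integrable (fun ω => (a i * Z i ω) * (a j * Z j ω)) μ := by
    intro i j
    apply integrable_of_bound' μ _ (((hZmeas i).const_mul _).mul ((hZmeas j).const_mul _))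
      ((|a i| * ((p i)⁻¹ + 1)) * (|a j| * ((p j)⁻¹ + 1)))
    intro ω
    show |(a i * Z i ω) * (a j * Z j ω)| ≤ _
    rw [abs_mul, abs_mul, abs_mul]
    apply mul_le_mul
    · exact mul_le_mul_of_nonneg_left (hZb i ω) (abs_nonneg _)
    · exact mul_le_mul_of_nonneg_left (hZb j ω) (abs_nonneg _)
    · exact mul_nonneg (abs_nonneg _) (abs_nonneg _)
    · have := (hp0 i); positivity
  calc ∫ ω, (∑ i, a i * Z i ω) ^ 2 ∂μ
      = ∫ ω, ∑ i, ∑ j, (a i * Z i ω) * (a j * Z j ω) ∂μ := by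
        congr 1
        funext ω
        rw [pow_two, Finset.sum_mul_sum]
    _ = ∑ i, ∑ j, ∫ ω, (a i * Z i ω) * (a j * Z j ω) ∂μ := by
        rw [integral_finset_sum _ (fun i _ => integrable_finset_sum _ (fun j _ => hprodint i j))]
        congr 1
        funext i
        rw [integral_finset_sum _ (fun j _ => hprodint i j)]
    _ = ∑ i, (a i) ^ 2 * ((p i)⁻¹ - 1) := by
        apply Finset.sum_congr rfl
        intro i _
        rw [Finset.sum_eq_single i]
        · calc ∫ ω, (a i * Z i ω) * (a i * Z i ω) ∂μ
              = ∫ ω, (a i) ^ 2 * (Z i ω) ^ 2 ∂μ := by congr 1; funext ω; ring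
            _ = (a i) ^ 2 * ((p i)⁻¹ - 1) := by rw [integral_const_mul, hZsq]
        · intro j _ hji
          calc ∫ ω, (a i * Z i ω) * (a j * Z j ω) ∂μ
              = ∫ ω, (a i * a j) * (Z i ω * Z j ω) ∂μ := by congr 1; funext ω; ring
            _ = (a i * a j) * ∫ ω, Z i ω * Z j ω ∂μ := integral_const_mul _ _
            _ = 0 := by rw [hcross i j (Ne.symm hji), mul_zero]
        · intro h; exact absurd (Finset.mem_univ i) h
    _ ≤ ∑ i, (a i) ^ 2 / p i := by
        apply Finset.sum_le_sum
        intro i _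
        rw [div_eq_mul_inv]
        nlinarith [sq_nonneg (a i), (hp0 i)]

lemma entry_weighted' {n d : ℕ} (x : Fin n → Fin d → ℝ) (c : Fin n → ℝ) (k l : Fin d) :
    ((( n:ℝ)⁻¹ • ∑ i, c i • vecMulVec (x i) (x i)) : Matrix (Fin d) (Fin d) ℝ) k l
      = (n:ℝ)⁻¹ * ∑ i, c i * (x i k * x i l) := by
  simp [Matrix.smul_apply, Matrix.sum_apply, Matrix.vecMulVec_apply, Finset.mul_sum]

lemma mulVec_weighted' {n d : ℕ} (x : Fin n → Fin d → ℝ) (c : Fin n → ℝ) (v : Fin d → ℝ)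
    (k : Fin d) :
    ((((n:ℝ)⁻¹ • ∑ i, c i • vecMulVec (x i) (x i)) : Matrix (Fin d) (Fin d) ℝ) *ᵥ v) k
      = (n:ℝ)⁻¹ * ∑ i, c i * ((∑ l, x i l * v l) * x i k) := by
  rw [Matrix.mulVec, dotProduct]
  rw [Finset.sum_congr rfl (fun l _ => by rw [entry_weighted' x c k l])]
  simp only [Finset.mul_sum, Finset.sum_mul]
  rw [Finset.sum_comm]
  exact Finset.sum_congr rfl (fun i _ => Finset.sum_congr rfl (fun l _ => by ring))

lemma vecsum_apply' {n d : ℕ} (x : Fin n → Fin d → ℝ) (y : Fin n → ℝ) (c : Fin n → ℝ)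
    (k : Fin d) :
    (((n:ℝ)⁻¹ • ∑ i, c i • (y i • x i)) : Fin d → ℝ) k
      = (n:ℝ)⁻¹ * ∑ i, c i * (y i * x i k) := by
  simp [Finset.sum_apply, Finset.mul_sum]

end aux

set_option maxHeartbeats 1600000 in
/-- equation (A.9) in the proof of Theorem 1: with probability at least
`1 − 2δ`, the subsampled matrix `Σ_s` is invertible and
`‖β̃ − β̂_n‖ ≤ C₁ r^{−1/2} + C₂ r^{−1}`, with `C₁ = 2 λ_min(Σ_n)⁻¹ δ⁻¹ σ_b` and
`C₂ = 2 √(2 log d) λ_min(Σ_n)⁻² δ⁻² σ_Σ σ_b`. -/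
theorem stmt12 {n d : ℕ} (hn : 1 ≤ n) (hd : 2 ≤ d)
    (x : Fin n → Fin d → ℝ) (y : Fin n → ℝ)
    (Sn : Matrix (Fin d) (Fin d) ℝ)
    (hSn : Sn = (n : ℝ)⁻¹ • ∑ i, vecMulVec (x i) (x i))
    (hpd : Sn.PosDef)
    (bn : Fin d → ℝ) (hbn : bn = (n : ℝ)⁻¹ • ∑ i, y i • x i)
    (βhat : Fin d → ℝ) (hβ : βhat = Sn⁻¹ *ᵥ bn)
    (e : Fin n → ℝ) (he : ∀ i, e i = y i - ∑ k, x i k * βhat k)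
    (w : Fin n → ℝ) (hw0 : ∀ i, 0 < w i) (hw1 : ∑ i, w i = 1)
    (r : ℝ) (hr : 0 < r)
    (p : Fin n → ℝ) (hp : ∀ i, p i = r * w i) (hp1 : ∀ i, p i ≤ 1)
    (sS2 : ℝ) (hsS2 : sS2 = ((n : ℝ) ^ 2)⁻¹ * ∑ i, (w i)⁻¹ * (∑ k, x i k ^ 2) ^ 2)
    (sb2 : ℝ) (hsb2 : sb2 = ((n : ℝ) ^ 2)⁻¹ * ∑ i, (w i)⁻¹ * (∑ k, x i k ^ 2) * e i ^ 2)
    (R : ℝ) (hR : R = ⨆ j, ∑ k, x j k ^ 2)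
    {Ω : Type} [MeasurableSpace Ω] (μ : Measure Ω) [IsProbabilityMeasure μ]
    (γ : Fin n → Ω → ℝ) (hmeas : ∀ i, Measurable (γ i))
    (h01 : ∀ i ω, γ i ω = 0 ∨ γ i ω = 1)
    (hBer : ∀ i, μ {ω | γ i ω = 1} = ENNReal.ofReal (p i))
    (hind : iIndepFun γ μ)
    (Ss : Ω → Matrix (Fin d) (Fin d) ℝ)
    (hSs : ∀ ω, Ss ω = (n : ℝ)⁻¹ • ∑ i, (γ i ω / p i) • vecMulVec (x i) (x i))
    (bs : Ω → Fin d → ℝ)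
    (hbs : ∀ ω, bs ω = (n : ℝ)⁻¹ • ∑ i, (γ i ω / p i) • y i • x i)
    (δ : ℝ) (hδ0 : 0 < δ) (hδ1 : δ < 1)
    (hδ : δ > 2 * R * Real.log d / (3 * n * lamMin Sn))
    (hrbig : r > 2 * sS2 * Real.log d /
        (δ ^ 2 * (lamMin Sn / 2 - R * Real.log d / (3 * n * δ)) ^ 2)) :
    ENNReal.ofReal (1 - 2 * δ) ≤
      μ {ω | IsUnit (Ss ω).det ∧
        euclNorm ((Ss ω)⁻¹ *ᵥ bs ω - βhat) ≤
          2 * (lamMin Sn)⁻¹ * δ⁻¹ * Real.sqrt sb2 * (Real.sqrt r)⁻¹ +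
            2 * Real.sqrt (2 * Real.log d) * ((lamMin Sn) ^ 2)⁻¹ * (δ ^ 2)⁻¹ *
              Real.sqrt sS2 * Real.sqrt sb2 * r⁻¹} := by
  classical
  haveI : NeZero d := ⟨by omega⟩
  haveI : Nonempty (Fin n) := ⟨⟨0, by omega⟩⟩
  set c : ℝ := lamMin Sn with hcdef
  have hc : 0 < c := lamMin_pos' hpd
  have hn0 : (0:ℝ) < (n:ℝ) := by exact_mod_cast hn
  have hp0 : ∀ i, 0 < p i := fun i => by rw [hp i]; exact mul_pos hr (hw0 i)
  set Z : Fin n → Ω → ℝ := fun i ω => γ i ω / p i - 1 with hZdef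
  have hZmeas : ∀ i, Measurable (Z i) := fun i => ((hmeas i).div_const _).sub measurable_const
  have hγb : ∀ i ω, |γ i ω| ≤ 1 := by
    intro i ω; rcases h01 i ω with h | h <;> rw [h] <;> norm_num
  have hZb : ∀ i ω, |Z i ω| ≤ (p i)⁻¹ + 1 := by
    intro i ω
    have h1 : |γ i ω / p i| ≤ (p i)⁻¹ := by
      rw [abs_div, abs_of_pos (hp0 i), div_le_iff₀ (hp0 i)]
      calc |γ i ω| ≤ 1 := hγb i ω
        _ = (p i)⁻¹ * p i := by rw [inv_mul_cancel₀ (hp0 i).ne']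
    calc |Z i ω| ≤ |γ i ω / p i| + |(1:ℝ)| := abs_sub _ _
      _ ≤ (p i)⁻¹ + 1 := by rw [abs_one]; linarith
  set V : Ω → Fin d → ℝ := fun ω k => (n:ℝ)⁻¹ * ∑ i, Z i ω * (e i * x i k) with hVdef
  set Mf : Ω → Fin d → Fin d → ℝ :=
    fun ω k l => (n:ℝ)⁻¹ * ∑ i, Z i ω * (x i k * x i l) with hMdef
  set g1 : Ω → ℝ := fun ω => ∑ k, (V ω k) ^ 2 with hg1def
  set g2 : Ω → ℝ := fun ω => ∑ k, ∑ l, (Mf ω k l) ^ 2 with hg2def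
  -- the residual identity
  have hdet : IsUnit Sn.det := hpd.det_pos.ne'.isUnit
  have hSnβ : Sn *ᵥ βhat = bn := by
    rw [hβ, Matrix.mulVec_mulVec, Matrix.mul_nonsing_inv _ hdet, Matrix.one_mulVec]
  have hSn' : Sn = (n:ℝ)⁻¹ • ∑ i, (fun _ : Fin n => (1:ℝ)) i • vecMulVec (x i) (x i) := by
    rw [hSn]; simp
  have hzero : ∀ k, (∑ i, e i * x i k) = 0 := by
    intro k
    have h3 : (Sn *ᵥ βhat) k = bn k := by rw [hSnβ]
    have h1 : bn k = (n:ℝ)⁻¹ * ∑ i, (fun _ : Fin n => (1:ℝ)) i * (y i * x i k) := by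
      rw [hbn, show ((n : ℝ)⁻¹ • ∑ i, y i • x i)
        = ((n : ℝ)⁻¹ • ∑ i, (fun _ : Fin n => (1:ℝ)) i • (y i • x i)) by simp]
      exact vecsum_apply' x y _ k
    have h2 : (Sn *ᵥ βhat) k
        = (n:ℝ)⁻¹ * ∑ i, (fun _ : Fin n => (1:ℝ)) i * ((∑ l, x i l * βhat l) * x i k) := by
      rw [hSn']; exact mulVec_weighted' x _ βhat k
    rw [h1, h2] at h3
    have h4 : (∑ i, ((∑ l, x i l * βhat l) * x i k)) = ∑ i, (y i * x i k) := by
      have := mul_left_cancel₀ (inv_ne_zero hn0.ne') h3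
      simpa using this
    calc (∑ i, e i * x i k)
        = ∑ i, (y i * x i k - (∑ l, x i l * βhat l) * x i k) := by
          apply Finset.sum_congr rfl; intro i _; rw [he i]; ring
      _ = (∑ i, y i * x i k) - ∑ i, ((∑ l, x i l * βhat l) * x i k) := by
          rw [Finset.sum_sub_distrib]
      _ = 0 := by rw [h4]; ring
  have hVid : ∀ ω k, bs ω k - (Ss ω *ᵥ βhat) k = V ω k := by
    intro ω k
    have hb : bs ω k = (n:ℝ)⁻¹ * ∑ i, (γ i ω / p i) * (y i * x i k) := by
      rw [hbs ω]; exact vecsum_apply' x y _ k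
    have hSβ : (Ss ω *ᵥ βhat) k
        = (n:ℝ)⁻¹ * ∑ i, (γ i ω / p i) * ((∑ l, x i l * βhat l) * x i k) := by
      rw [hSs ω]; exact mulVec_weighted' x _ βhat k
    rw [hb, hSβ, ← mul_sub, ← Finset.sum_sub_distrib]
    have hterm : ∀ i, (γ i ω / p i) * (y i * x i k)
        - (γ i ω / p i) * ((∑ l, x i l * βhat l) * x i k)
        = Z i ω * (e i * x i k) + e i * x i k := by
      intro i
      have : Z i ω = γ i ω / p i - 1 := rfl
      rw [this, he i]; ring
    rw [Finset.sum_congr rfl (fun i _ => hterm i), Finset.sum_add_distrib, hzero k, add_zero]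
  have hMid : ∀ ω k l, Ss ω k l = Sn k l + Mf ω k l := by
    intro ω k l
    have hSse : Ss ω k l = (n:ℝ)⁻¹ * ∑ i, (γ i ω / p i) * (x i k * x i l) := by
      rw [hSs ω]; exact entry_weighted' x _ k l
    have hSne : Sn k l = (n:ℝ)⁻¹ * ∑ i, (fun _ : Fin n => (1:ℝ)) i * (x i k * x i l) := by
      rw [hSn']; exact entry_weighted' x _ k l
    rw [hSse, hSne, hMdef, ← mul_add, ← Finset.sum_add_distrib]
    congr 1
    apply Finset.sum_congr rfl
    intro i _
    have : Z i ω = γ i ω / p i - 1 := rfl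
    rw [this]; ring
    -- measurability and integrability
  have hVmeas : ∀ k, Measurable (fun ω => V ω k) := by
    intro k
    apply Measurable.const_mul
    exact Finset.measurable_sum _ (fun i _ => (hZmeas i).mul_const _)
  have hMmeas : ∀ k l, Measurable (fun ω => Mf ω k l) := by
    intro k l
    apply Measurable.const_mul
    exact Finset.measurable_sum _ (fun i _ => (hZmeas i).mul_const _)
  have hg1meas : Measurable g1 := Finset.measurable_sum _ (fun k _ => (hVmeas k).pow_const 2)
  have hg2meas : Measurable g2 :=
    Finset.measurable_sum _ (fun k _ =>
      Finset.measurable_sum _ (fun l _ => (hMmeas k l).pow_const 2))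
  have habsZsum : ∀ (b : Fin n → ℝ) ω, |∑ i, Z i ω * b i| ≤ ∑ i, ((p i)⁻¹ + 1) * |b i| := by
    intro b ω
    calc |∑ i, Z i ω * b i| ≤ ∑ i, |Z i ω * b i| := Finset.abs_sum_le_sum_abs _ _
      _ ≤ ∑ i, ((p i)⁻¹ + 1) * |b i| := by
        apply Finset.sum_le_sum
        intro i _
        rw [abs_mul]
        exact mul_le_mul_of_nonneg_right (hZb i ω) (abs_nonneg _)
  have hVbound : ∀ k ω, |V ω k| ≤ |(n:ℝ)⁻¹| * ∑ i, ((p i)⁻¹ + 1) * |e i * x i k| := by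
    intro k ω
    rw [hVdef]
    simp only
    rw [abs_mul]
    exact mul_le_mul_of_nonneg_left (habsZsum _ ω) (abs_nonneg _)
  have hMbound : ∀ k l ω, |Mf ω k l| ≤ |(n:ℝ)⁻¹| * ∑ i, ((p i)⁻¹ + 1) * |x i k * x i l| := by
    intro k l ω
    rw [hMdef]
    simp only
    rw [abs_mul]
    exact mul_le_mul_of_nonneg_left (habsZsum _ ω) (abs_nonneg _)
  have hsqbound : ∀ (f : Ω → ℝ) (C : ℝ), (∀ ω, |f ω| ≤ C) → ∀ ω, |(f ω) ^ 2| ≤ C ^ 2 := by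
    intro f C hC ω
    rw [abs_pow]
    exact pow_le_pow_left₀ (abs_nonneg _) (hC ω) 2
  have hVsqint : ∀ k, Integrable (fun ω => (V ω k) ^ 2) μ := by
    intro k
    exact integrable_of_bound' μ _ ((hVmeas k).pow_const 2) _
      (hsqbound _ _ (hVbound k))
  have hMsqint : ∀ k l, Integrable (fun ω => (Mf ω k l) ^ 2) μ := by
    intro k l
    exact integrable_of_bound' μ _ ((hMmeas k l).pow_const 2) _
      (hsqbound _ _ (hMbound k l))
  have hg1int : Integrable g1 μ := integrable_finset_sum _ (fun k _ => hVsqint k)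
  have hg2int : Integrable g2 μ :=
    integrable_finset_sum _ (fun k _ => integrable_finset_sum _ (fun l _ => hMsqint k l))
  have hg1nn : ∀ ω, 0 ≤ g1 ω := fun ω => Finset.sum_nonneg (fun k _ => sq_nonneg _)
  have hg2nn : ∀ ω, 0 ≤ g2 ω :=
    fun ω => Finset.sum_nonneg (fun k _ => Finset.sum_nonneg (fun l _ => sq_nonneg _))
  -- expectations
  have hmom : ∀ (b : Fin n → ℝ),
      ∫ ω, ((n:ℝ)⁻¹ * ∑ i, Z i ω * b i) ^ 2 ∂μ ≤ ∑ i, ((n:ℝ)⁻¹ * b i) ^ 2 / p i := by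
    intro b
    have hcongr : (fun ω => ((n:ℝ)⁻¹ * ∑ i, Z i ω * b i) ^ 2)
        = fun ω => (∑ i, ((n:ℝ)⁻¹ * b i) * (γ i ω / p i - 1)) ^ 2 := by
      funext ω
      rw [Finset.mul_sum]
      congr 1
      apply Finset.sum_congr rfl
      intro i _
      have : Z i ω = γ i ω / p i - 1 := rfl
      rw [this]; ring
    rw [hcongr]
    exact second_moment' μ γ hmeas h01 p hp0 hBer hind _
  have hEV : ∫ ω, g1 ω ∂μ ≤ sb2 / r := by
    have h1 : ∫ ω, g1 ω ∂μ = ∑ k, ∫ ω, (V ω k) ^ 2 ∂μ :=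
      integral_finset_sum _ (fun k _ => hVsqint k)
    have h2 : ∀ k, ∫ ω, (V ω k) ^ 2 ∂μ ≤ ∑ i, ((n:ℝ)⁻¹ * (e i * x i k)) ^ 2 / p i :=
      fun k => hmom _
    have h3 : (∑ k, ∑ i, ((n:ℝ)⁻¹ * (e i * x i k)) ^ 2 / p i) = sb2 / r := by
      rw [Finset.sum_comm, hsb2, Finset.mul_sum, Finset.sum_div]
      apply Finset.sum_congr rfl
      intro i _
      have hterm : ∀ k : Fin d, ((n:ℝ)⁻¹ * (e i * x i k)) ^ 2 / p i
          = x i k ^ 2 * ((e i ^ 2) * (((n:ℝ) ^ 2)⁻¹ / p i)) := fun k => by ring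
      rw [Finset.sum_congr rfl (fun k _ => hterm k), ← Finset.sum_mul, hp i]
      simp only [div_eq_mul_inv, mul_inv]
      ring
    rw [h1, ← h3]
    exact Finset.sum_le_sum (fun k _ => h2 k)
  have hEM : ∫ ω, g2 ω ∂μ ≤ sS2 / r := by
    have h1 : ∫ ω, g2 ω ∂μ = ∑ k, ∑ l, ∫ ω, (Mf ω k l) ^ 2 ∂μ := by
      rw [integral_finset_sum _ (fun k _ => integrable_finset_sum _ (fun l _ => hMsqint k l))]
      exact Finset.sum_congr rfl (fun k _ => integral_finset_sum _ (fun l _ => hMsqint k l))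
    have h2 : ∀ k l, ∫ ω, (Mf ω k l) ^ 2 ∂μ ≤ ∑ i, ((n:ℝ)⁻¹ * (x i k * x i l)) ^ 2 / p i :=
      fun k l => hmom _
    have h3 : (∑ k, ∑ l, ∑ i, ((n:ℝ)⁻¹ * (x i k * x i l)) ^ 2 / p i) = sS2 / r := by
      have hswap : (∑ k : Fin d, ∑ l : Fin d, ∑ i : Fin n, ((n:ℝ)⁻¹ * (x i k * x i l)) ^ 2 / p i)
          = ∑ i : Fin n, ∑ k : Fin d, ∑ l : Fin d, ((n:ℝ)⁻¹ * (x i k * x i l)) ^ 2 / p i := by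
        rw [Finset.sum_congr rfl (fun k _ => Finset.sum_comm)]
        exact Finset.sum_comm
      rw [hswap, hsS2, Finset.mul_sum, Finset.sum_div]
      apply Finset.sum_congr rfl
      intro i _
      have hterm : ∀ k l : Fin d, ((n:ℝ)⁻¹ * (x i k * x i l)) ^ 2 / p i
          = x i k ^ 2 * (x i l ^ 2 * (((n:ℝ) ^ 2)⁻¹ / p i)) := fun k l => by ring
      rw [Finset.sum_congr rfl (fun k _ => Finset.sum_congr rfl (fun l _ => hterm k l))]
      rw [Finset.sum_congr rfl (fun k _ => by rw [← Finset.mul_sum, ← Finset.sum_mul])]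
      rw [← Finset.sum_mul, hp i]
      simp only [div_eq_mul_inv, mul_inv]
      ring
    rw [h1, ← h3]
    exact Finset.sum_le_sum (fun k _ =>
      Finset.sum_le_sum (fun l _ => h2 k l))
    -- events and Markov
  set t1 : ℝ := sb2 / (δ ^ 2 * r) with ht1def
  set t2 : ℝ := (c / 2) ^ 2 with ht2def
  set A : Set Ω := {ω | g1 ω ≤ t1} with hAdef
  set B : Set Ω := {ω | g2 ω ≤ t2} with hBdef
  have hAm : MeasurableSet A := measurableSet_le hg1meas measurable_const
  have hBm : MeasurableSet B := measurableSet_le hg2meas measurable_const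
  have hsb2nn : 0 ≤ sb2 := by
    rw [hsb2]
    apply mul_nonneg (by positivity)
    apply Finset.sum_nonneg; intro i _
    have := hw0 i; positivity
  have hsS2nn : 0 ≤ sS2 := by
    rw [hsS2]
    apply mul_nonneg (by positivity)
    apply Finset.sum_nonneg; intro i _
    have := hw0 i; positivity
  have hmuA : μ Aᶜ ≤ ENNReal.ofReal δ := by
    rcases eq_or_lt_of_le hsb2nn with hz | hposb
    · -- sb2 = 0 : all residual directions vanish
      have hex : ∀ i k, e i * x i k = 0 := by
        intro i k
        have h2 : ((n:ℝ) ^ 2)⁻¹ * (∑ j, (w j)⁻¹ * (∑ k', x j k' ^ 2) * e j ^ 2) = 0 := by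
          rw [← hsb2, ← hz]
        have hS : (∑ j, (w j)⁻¹ * (∑ k', x j k' ^ 2) * e j ^ 2) = 0 := by
          rcases mul_eq_zero.mp h2 with h3 | h3
          · exact absurd h3 (by positivity)
          · exact h3
        have h4 : (w i)⁻¹ * (∑ k', x i k' ^ 2) * e i ^ 2 = 0 :=
          (Finset.sum_eq_zero_iff_of_nonneg (fun j _ => by have := hw0 j; positivity)).mp
            hS i (Finset.mem_univ i)
        rcases mul_eq_zero.mp h4 with h5 | h5
        · rcases mul_eq_zero.mp h5 with h6 | h6
          · exact absurd h6 (by have := hw0 i; positivity)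
          · have h7 : x i k ^ 2 = 0 :=
              (Finset.sum_eq_zero_iff_of_nonneg (fun k' _ => sq_nonneg _)).mp
                h6 k (Finset.mem_univ k)
            have hx0 : x i k = 0 := pow_eq_zero_iff two_ne_zero |>.mp h7
            rw [hx0, mul_zero]
        · have he0 : e i = 0 := pow_eq_zero_iff two_ne_zero |>.mp h5
          rw [he0, zero_mul]
      have hA1 : A = Set.univ := by
        apply Set.eq_univ_of_forall
        intro ω
        show g1 ω ≤ t1
        have hV0 : ∀ k, V ω k = 0 := by
          intro k
          have hterm : ∀ i : Fin n, Z i ω * (e i * x i k) = 0 :=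
            fun i => by rw [hex i k, mul_zero]
          show (n:ℝ)⁻¹ * (∑ i, Z i ω * (e i * x i k)) = 0
          rw [Finset.sum_congr rfl (fun i _ => hterm i), Finset.sum_const_zero, mul_zero]
        have hg0 : g1 ω = 0 := by
          have hterm : ∀ k : Fin d, V ω k ^ 2 = (0:ℝ) := fun k => by rw [hV0 k]; norm_num
          show (∑ k, V ω k ^ 2) = 0
          rw [Finset.sum_congr rfl (fun k _ => hterm k), Finset.sum_const_zero]
        rw [hg0, ht1def, ← hz]
        simp [zero_div]
      rw [hA1, Set.compl_univ]
      simp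
    · have ht1 : 0 < t1 := by rw [ht1def]; positivity
      have hAc : Aᶜ = {ω | t1 < g1 ω} := by
        ext ω; simp [hAdef, not_le]
      rw [hAc]
      refine (markov_real' μ g1 hg1meas hg1int hg1nn ht1 hEV).trans ?_
      have hq : (sb2 / r) / t1 = δ ^ 2 := by
        rw [ht1def]
        field_simp
      rw [hq]
      exact ENNReal.ofReal_le_ofReal (by nlinarith)
  -- arithmetic for the matrix event
  have hR0 : 0 ≤ R := by
    obtain ⟨j0⟩ := (inferInstance : Nonempty (Fin n))
    have h1 : (0:ℝ) ≤ ∑ k, x j0 k ^ 2 := by positivity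
    have h2 : (∑ k, x j0 k ^ 2) ≤ ⨆ j, ∑ k, x j k ^ 2 :=
      le_ciSup (f := fun j => ∑ k, x j k ^ 2) (Set.Finite.bddAbove (Set.finite_range _)) j0
    rw [hR]; exact h1.trans h2
  have hL2 : Real.log 2 ≤ Real.log d :=
    Real.log_le_log two_pos (by exact_mod_cast hd)
  have hL1 : (1:ℝ) ≤ 2 * Real.log 2 := by
    have := Real.log_two_gt_d9
    linarith
  have hLpos : 0 < Real.log d :=
    lt_of_lt_of_le (by linarith [Real.log_two_gt_d9]) hL2
  have hArg : R * Real.log (d:ℝ) / (3 * n * δ) < c / 2 := by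
    rw [gt_iff_lt, div_lt_iff₀ (by positivity : (0:ℝ) < 3 * n * c)] at hδ
    rw [div_lt_iff₀ (by positivity : (0:ℝ) < 3 * n * δ)]
    nlinarith
  set Aq : ℝ := c / 2 - R * Real.log (d:ℝ) / (3 * n * δ) with hAqdef
  have hAq0 : 0 < Aq := by rw [hAqdef]; linarith
  have hAqle : Aq ≤ c / 2 := by
    rw [hAqdef]
    have : 0 ≤ R * Real.log (d:ℝ) / (3 * n * δ) := by positivity
    linarith
  have hkey : sS2 / (δ * (c / 2) ^ 2) < r := by
    refine lt_of_le_of_lt ?_ hrbig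
    have hd1 : (0:ℝ) < δ ^ 2 * Aq ^ 2 := by positivity
    have hd2 : δ ^ 2 * Aq ^ 2 ≤ δ * (c / 2) ^ 2 := by
      have hA2 : Aq ^ 2 ≤ (c / 2) ^ 2 := pow_le_pow_left₀ hAq0.le hAqle 2
      have hδ2 : δ ^ 2 ≤ δ := by nlinarith
      nlinarith [sq_nonneg Aq]
    have hnum : sS2 ≤ 2 * sS2 * Real.log (d:ℝ) := by nlinarith
    exact div_le_div₀ (by nlinarith) hnum hd1 hd2
  have ht2 : 0 < t2 := by rw [ht2def]; positivity
  have harithB : (sS2 / r) / t2 ≤ δ := by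
    rw [ht2def, div_div, div_le_iff₀ (by positivity : (0:ℝ) < r * (c / 2) ^ 2)]
    rw [div_lt_iff₀ (by positivity : (0:ℝ) < δ * (c / 2) ^ 2)] at hkey
    nlinarith
  have hmuB : μ Bᶜ ≤ ENNReal.ofReal δ := by
    have hBc : Bᶜ = {ω | t2 < g2 ω} := by ext ω; simp [hBdef, not_le]
    rw [hBc]
    exact (markov_real' μ g2 hg2meas hg2int hg2nn ht2 hEM).trans
      (ENNReal.ofReal_le_ofReal harithB)
    -- deterministic inclusion
  have hsub : A ∩ B ⊆ {ω | IsUnit (Ss ω).det ∧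
      euclNorm ((Ss ω)⁻¹ *ᵥ bs ω - βhat) ≤
        2 * (lamMin Sn)⁻¹ * δ⁻¹ * Real.sqrt sb2 * (Real.sqrt r)⁻¹ +
          2 * Real.sqrt (2 * Real.log d) * ((lamMin Sn) ^ 2)⁻¹ * (δ ^ 2)⁻¹ *
            Real.sqrt sS2 * Real.sqrt sb2 * r⁻¹} := by
    rintro ω ⟨hωA, hωB⟩
    have hωA' : g1 ω ≤ t1 := hωA
    have hωB' : g2 ω ≤ t2 := hωB
    -- lower bound for the quadratic form of `Ss ω`
    have hform : ∀ u : Fin d → ℝ, c / 2 * (∑ k, u k ^ 2) ≤ u ⬝ᵥ (Ss ω *ᵥ u) := by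
      intro u
      have hunn : (0:ℝ) ≤ ∑ k, u k ^ 2 := Finset.sum_nonneg (fun k _ => sq_nonneg _)
      set h : Fin d → ℝ := fun k => ((Ss ω - Sn) *ᵥ u) k with hhdef
      have hMm : ∀ k l, (Ss ω - Sn) k l = Mf ω k l := by
        intro k l
        rw [Matrix.sub_apply, hMid ω k l]; ring
      have hh2 : ∀ k, h k ^ 2 ≤ (∑ l, Mf ω k l ^ 2) * (∑ l, u l ^ 2) := by
        intro k
        have hexp : h k = ∑ l, Mf ω k l * u l := by
          rw [hhdef]
          show ((Ss ω - Sn) *ᵥ u) k = _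
          rw [Matrix.mulVec, dotProduct]
          exact Finset.sum_congr rfl (fun l _ => by rw [hMm k l])
        rw [hexp]
        exact Finset.sum_mul_sq_le_sq_mul_sq _ _ _
      have hsumh : (∑ k, h k ^ 2) ≤ g2 ω * (∑ l, u l ^ 2) := by
        calc (∑ k, h k ^ 2) ≤ ∑ k, (∑ l, Mf ω k l ^ 2) * (∑ l, u l ^ 2) :=
              Finset.sum_le_sum (fun k _ => hh2 k)
          _ = g2 ω * (∑ l, u l ^ 2) := by
              show _ = (∑ k, ∑ l, Mf ω k l ^ 2) * (∑ l, u l ^ 2)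
              rw [Finset.sum_mul]
      have hlow : -(c / 2 * ∑ k, u k ^ 2) ≤ u ⬝ᵥ ((Ss ω - Sn) *ᵥ u) := by
        have hcs := Real.sum_mul_le_sqrt_mul_sqrt Finset.univ (fun k => -u k) h
        have hs1 : (∑ k, (-u k) * h k) = -(∑ k, u k * h k) := by
          rw [← Finset.sum_neg_distrib]
          exact Finset.sum_congr rfl (fun k _ => by ring)
        have hs2 : (∑ k, (-u k) ^ 2) = ∑ k, u k ^ 2 :=
          Finset.sum_congr rfl (fun k _ => by ring)
        rw [hs1, hs2] at hcs
        have hsq : Real.sqrt (∑ k, h k ^ 2) ≤ c / 2 * Real.sqrt (∑ k, u k ^ 2) := by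
          have h1 : Real.sqrt (∑ k, h k ^ 2) ≤ Real.sqrt ((c / 2) ^ 2 * ∑ l, u l ^ 2) := by
            apply Real.sqrt_le_sqrt
            refine hsumh.trans ?_
            exact mul_le_mul_of_nonneg_right hωB' (Finset.sum_nonneg (fun l _ => sq_nonneg _))
          calc Real.sqrt (∑ k, h k ^ 2) ≤ Real.sqrt ((c / 2) ^ 2 * ∑ l, u l ^ 2) := h1
            _ = c / 2 * Real.sqrt (∑ l, u l ^ 2) := by
                rw [Real.sqrt_mul (sq_nonneg _), Real.sqrt_sq (by linarith : (0:ℝ) ≤ c / 2)]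
        have hdot : u ⬝ᵥ ((Ss ω - Sn) *ᵥ u) = ∑ k, u k * h k := rfl
        have hfin : -(∑ k, u k * h k) ≤ c / 2 * ∑ k, u k ^ 2 := by
          calc -(∑ k, u k * h k)
              ≤ Real.sqrt (∑ k, u k ^ 2) * Real.sqrt (∑ k, h k ^ 2) := hcs
            _ ≤ Real.sqrt (∑ k, u k ^ 2) * (c / 2 * Real.sqrt (∑ k, u k ^ 2)) :=
                mul_le_mul_of_nonneg_left hsq (Real.sqrt_nonneg _)
            _ = c / 2 * (Real.sqrt (∑ k, u k ^ 2) * Real.sqrt (∑ k, u k ^ 2)) := by ring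
            _ = c / 2 * ∑ k, u k ^ 2 := by rw [Real.mul_self_sqrt hunn]
        rw [hdot]
        linarith
      have hray2 := rayleigh' hpd u
      have hsum : u ⬝ᵥ (Ss ω *ᵥ u) = u ⬝ᵥ (Sn *ᵥ u) + u ⬝ᵥ ((Ss ω - Sn) *ᵥ u) := by
        have hsplit : Ss ω = Sn + (Ss ω - Sn) := by abel
        calc u ⬝ᵥ (Ss ω *ᵥ u) = u ⬝ᵥ ((Sn + (Ss ω - Sn)) *ᵥ u) := by rw [← hsplit]
          _ = _ := by rw [Matrix.add_mulVec, dotProduct_add]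
      rw [hsum]
      have hray3 : c * (∑ k, u k ^ 2) ≤ u ⬝ᵥ (Sn *ᵥ u) := hray2
      linarith
    -- positive definiteness
    have hherm : (Ss ω).IsHermitian := by
      have hsym : ∀ k l, Ss ω l k = Ss ω k l := by
        intro k l
        rw [hSs ω, entry_weighted' x _ l k, entry_weighted' x _ k l]
        congr 1
        exact Finset.sum_congr rfl (fun i _ => by ring)
      exact Matrix.ext (fun k l => by
        rw [Matrix.conjTranspose_apply, star_trivial, hsym k l])
    have hpos : (Ss ω).PosDef := by
      refine Matrix.PosDef.of_dotProduct_mulVec_pos hherm (fun u hu => ?_)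
      have hstar : star u = u := funext (fun k => by simp)
      rw [hstar]
      have hnn : 0 ≤ ∑ k, u k ^ 2 := Finset.sum_nonneg (fun k _ => sq_nonneg _)
      have hupos : 0 < ∑ k, u k ^ 2 := by
        rcases eq_or_lt_of_le hnn with h0 | hlt
        · exfalso
          apply hu
          funext k
          have hk := (Finset.sum_eq_zero_iff_of_nonneg
            (fun k _ => sq_nonneg (u k))).mp h0.symm k (Finset.mem_univ k)
          exact pow_eq_zero_iff two_ne_zero |>.mp hk
        · exact hlt
      calc (0:ℝ) < c / 2 * ∑ k, u k ^ 2 := by nlinarith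
        _ ≤ u ⬝ᵥ (Ss ω *ᵥ u) := hform u
    have hdetS : IsUnit (Ss ω).det := hpos.det_pos.ne'.isUnit
    refine ⟨hdetS, ?_⟩
    set q : Fin d → ℝ := (Ss ω)⁻¹ *ᵥ bs ω - βhat with hqdef
    have hqnn : 0 ≤ ∑ k, q k ^ 2 := Finset.sum_nonneg (fun k _ => sq_nonneg _)
    have hEN : euclNorm q = Real.sqrt (∑ k, q k ^ 2) := rfl
    have hSsq : ∀ k, (Ss ω *ᵥ q) k = V ω k := by
      intro k
      have h1 : Ss ω *ᵥ q = bs ω - Ss ω *ᵥ βhat := by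
        rw [hqdef, Matrix.mulVec_sub, Matrix.mulVec_mulVec, Matrix.mul_nonsing_inv _ hdetS,
          Matrix.one_mulVec]
      rw [h1, Pi.sub_apply]
      exact hVid ω k
    have hqb : c / 2 * (∑ k, q k ^ 2) ≤ Real.sqrt (∑ k, q k ^ 2) * Real.sqrt (g1 ω) := by
      calc c / 2 * (∑ k, q k ^ 2) ≤ q ⬝ᵥ (Ss ω *ᵥ q) := hform q
        _ = ∑ k, q k * V ω k := by
            rw [dotProduct]
            exact Finset.sum_congr rfl (fun k _ => by rw [hSsq k])
        _ ≤ Real.sqrt (∑ k, q k ^ 2) * Real.sqrt (∑ k, V ω k ^ 2) :=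
            Real.sum_mul_le_sqrt_mul_sqrt _ _ _
        _ = Real.sqrt (∑ k, q k ^ 2) * Real.sqrt (g1 ω) := rfl
    have heucl : euclNorm q ≤ 2 / c * Real.sqrt (g1 ω) := by
      rcases eq_or_lt_of_le hqnn with h0 | hqpos
      · rw [hEN, ← h0, Real.sqrt_zero]
        have : (0:ℝ) ≤ Real.sqrt (g1 ω) := Real.sqrt_nonneg _
        have hc2 : (0:ℝ) ≤ 2 / c := by positivity
        positivity
      · have heupos : 0 < Real.sqrt (∑ k, q k ^ 2) := Real.sqrt_pos.mpr hqpos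
        have hsq : Real.sqrt (∑ k, q k ^ 2) ^ 2 = ∑ k, q k ^ 2 := Real.sq_sqrt hqnn
        have h3 : c / 2 * Real.sqrt (∑ k, q k ^ 2) ≤ Real.sqrt (g1 ω) := by
          apply le_of_mul_le_mul_right _ heupos
          calc c / 2 * Real.sqrt (∑ k, q k ^ 2) * Real.sqrt (∑ k, q k ^ 2)
              = c / 2 * (∑ k, q k ^ 2) := by rw [mul_assoc, ← pow_two, hsq]
            _ ≤ Real.sqrt (∑ k, q k ^ 2) * Real.sqrt (g1 ω) := hqb
            _ = Real.sqrt (g1 ω) * Real.sqrt (∑ k, q k ^ 2) := by ring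
        rw [hEN]
        calc Real.sqrt (∑ k, q k ^ 2)
            = 2 / c * (c / 2 * Real.sqrt (∑ k, q k ^ 2)) := by
              field_simp
          _ ≤ 2 / c * Real.sqrt (g1 ω) :=
              mul_le_mul_of_nonneg_left h3 (by positivity)
    have hg1t : Real.sqrt (g1 ω) ≤ Real.sqrt sb2 / (δ * Real.sqrt r) := by
      have h1 : Real.sqrt (g1 ω) ≤ Real.sqrt t1 := Real.sqrt_le_sqrt hωA'
      have h2 : Real.sqrt t1 = Real.sqrt sb2 / (δ * Real.sqrt r) := by
        rw [ht1def, Real.sqrt_div hsb2nn, Real.sqrt_mul (sq_nonneg δ),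
          Real.sqrt_sq hδ0.le]
      rw [← h2]; exact h1
    have hmain : euclNorm q ≤ 2 * c⁻¹ * δ⁻¹ * Real.sqrt sb2 * (Real.sqrt r)⁻¹ := by
      calc euclNorm q ≤ 2 / c * Real.sqrt (g1 ω) := heucl
        _ ≤ 2 / c * (Real.sqrt sb2 / (δ * Real.sqrt r)) :=
            mul_le_mul_of_nonneg_left hg1t (by positivity)
        _ = 2 * c⁻¹ * δ⁻¹ * Real.sqrt sb2 * (Real.sqrt r)⁻¹ := by
            rw [div_eq_mul_inv, div_eq_mul_inv, mul_inv]
            ring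
    refine hmain.trans (le_add_of_nonneg_right ?_)
    have hrinv : (0:ℝ) ≤ r⁻¹ := inv_nonneg.mpr hr.le
    apply mul_nonneg _ hrinv
    positivity
  -- conclusion
  have hcompl : μ ((A ∩ B)ᶜ) ≤ ENNReal.ofReal (2 * δ) := by
    rw [Set.compl_inter]
    refine (measure_union_le _ _).trans ?_
    refine (add_le_add hmuA hmuB).trans ?_
    rw [← ENNReal.ofReal_add hδ0.le hδ0.le]
    exact ENNReal.ofReal_le_ofReal (by linarith)
  have hmeasAB : MeasurableSet (A ∩ B) := hAm.inter hBm
  have h1 : 1 - μ ((A ∩ B)ᶜ) ≤ μ (A ∩ B) := by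
    have h2 : μ ((A ∩ B)ᶜ) = 1 - μ (A ∩ B) := by
      rw [measure_compl hmeasAB (measure_ne_top μ _), measure_univ]
    rw [h2, ENNReal.sub_sub_cancel ENNReal.one_ne_top prob_le_one]
  have h3 : ENNReal.ofReal (1 - 2 * δ) ≤ 1 - μ ((A ∩ B)ᶜ) := by
    calc ENNReal.ofReal (1 - 2 * δ)
        = ENNReal.ofReal 1 - ENNReal.ofReal (2 * δ) :=
          ENNReal.ofReal_sub _ (by positivity)
      _ = 1 - ENNReal.ofReal (2 * δ) := by rw [ENNReal.ofReal_one]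
      _ ≤ 1 - μ ((A ∩ B)ᶜ) := tsub_le_tsub_left hcompl 1
  exact (h3.trans h1).trans (measure_mono hsub)
end

section
/- (Theorem 1 of the paper, made precise.) Assume δ ∈ (0,1) with δ > 2R·log d/(3n·λ_min(Σ_n)) and r > 2σ_Σ²·log d / ( δ²·( λ_min(Σ_n)/2 − R·log d/(3nδ) )² ). Then with probability at least 1 − 2δ, the matrix Σ_s is invertible and the subsample estimator β̃ = Σ_s⁻¹ b_s satisfies ‖β̃ − β̂_n‖ ≤ C·r^{−1/2}, where C = 3·λ_min(Σ_n)⁻¹·δ⁻¹·σ_b. -/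
open MeasureTheory ProbabilityTheory Matrix

set_option maxHeartbeats 1600000

section Aux

lemma rayleigh_aux {d : ℕ} (M : Matrix (Fin d) (Fin d) ℝ) (hM : M.IsHermitian) (c : ℝ)
    (hc : ∀ i, c ≤ hM.eigenvalues i) (v : Fin d → ℝ) :
    c * (∑ k, v k ^ 2) ≤ v ⬝ᵥ (M *ᵥ v) := by
  set U : Matrix (Fin d) (Fin d) ℝ := (hM.eigenvectorUnitary : Matrix (Fin d) (Fin d) ℝ)
  have hU : U * star U = 1 := (Matrix.mem_unitaryGroup_iff).mp hM.eigenvectorUnitary.2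
  have hdec : M - c • 1 = U * diagonal (fun i => hM.eigenvalues i - c) * star U := by
    have hspec := hM.spectral_theorem
    rw [Unitary.conjStarAlgAut_apply] at hspec
    have hdd : diagonal (fun i => hM.eigenvalues i - c)
        = diagonal (RCLike.ofReal ∘ hM.eigenvalues) - c • 1 := by
      ext i j
      by_cases h : i = j <;> simp [diagonal, h]
    rw [hdd, Matrix.mul_sub, Matrix.sub_mul, ← hspec]
    congr 1
    rw [Matrix.mul_smul, Matrix.smul_mul, Matrix.mul_one, hU]
  have hpsd : (M - c • 1).PosSemidef := by
    rw [hdec]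
    have h1 : (diagonal (fun i => hM.eigenvalues i - c)).PosSemidef :=
      Matrix.posSemidef_diagonal_iff.mpr fun i => sub_nonneg.mpr (hc i)
    have := h1.mul_mul_conjTranspose_same U
    simpa [Matrix.star_eq_conjTranspose] using this
  have h2 := hpsd.dotProduct_mulVec_nonneg v
  have hstar : (star v : Fin d → ℝ) = v := by simp
  rw [hstar] at h2
  have hexp : v ⬝ᵥ ((M - c • 1) *ᵥ v) = v ⬝ᵥ (M *ᵥ v) - c * (∑ k, v k ^ 2) := by
    rw [Matrix.sub_mulVec, dotProduct_sub]
    congr 1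
    rw [Matrix.smul_mulVec, Matrix.one_mulVec, dotProduct_smul]
    simp [dotProduct, pow_two, Finset.mul_sum]
  rw [hexp] at h2
  linarith

lemma cs_vec_aux {d : ℕ} (u z : Fin d → ℝ) :
    u ⬝ᵥ z ≤ Real.sqrt (∑ k, u k ^ 2) * Real.sqrt (∑ k, z k ^ 2) := by
  have h := Finset.sum_mul_sq_le_sq_mul_sq Finset.univ u z
  have h2 : (u ⬝ᵥ z) ≤ |∑ k, u k * z k| := le_abs_self _
  calc u ⬝ᵥ z ≤ |∑ k, u k * z k| := h2
    _ = Real.sqrt ((∑ k, u k * z k) ^ 2) := by rw [Real.sqrt_sq_eq_abs]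
    _ ≤ Real.sqrt ((∑ k, u k ^ 2) * (∑ k, z k ^ 2)) := Real.sqrt_le_sqrt h
    _ = _ := Real.sqrt_mul (by positivity) _

lemma bilin_bound_aux {d : ℕ} (M : Matrix (Fin d) (Fin d) ℝ) (v : Fin d → ℝ) :
    |v ⬝ᵥ (M *ᵥ v)| ≤ Real.sqrt (∑ k, ∑ l, M k l ^ 2) * (∑ k, v k ^ 2) := by
  have hrw : v ⬝ᵥ (M *ᵥ v) = ∑ q : Fin d × Fin d, M q.1 q.2 * (v q.1 * v q.2) := by
    rw [Fintype.sum_prod_type]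
    simp [dotProduct, mulVec, Finset.mul_sum, mul_comm, mul_left_comm, mul_assoc]
  have h := Finset.sum_mul_sq_le_sq_mul_sq Finset.univ
      (fun q : Fin d × Fin d => M q.1 q.2) (fun q => v q.1 * v q.2)
  have h1 : (∑ q : Fin d × Fin d, (v q.1 * v q.2) ^ 2) = (∑ k, v k ^ 2) ^ 2 := by
    rw [Fintype.sum_prod_type]
    simp [pow_two, Finset.sum_mul_sum, mul_comm, mul_left_comm, mul_assoc]
  have h2 : (∑ q : Fin d × Fin d, (M q.1 q.2) ^ 2) = ∑ k, ∑ l, M k l ^ 2 := by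
    rw [Fintype.sum_prod_type]
  rw [hrw]
  calc |∑ q : Fin d × Fin d, M q.1 q.2 * (v q.1 * v q.2)|
      = Real.sqrt ((∑ q : Fin d × Fin d, M q.1 q.2 * (v q.1 * v q.2)) ^ 2) := by
        rw [Real.sqrt_sq_eq_abs]
    _ ≤ Real.sqrt ((∑ q : Fin d × Fin d, (M q.1 q.2) ^ 2) * ∑ q : Fin d × Fin d, (v q.1 * v q.2) ^ 2) :=
        Real.sqrt_le_sqrt h
    _ = Real.sqrt (∑ k, ∑ l, M k l ^ 2) * Real.sqrt ((∑ k, v k ^ 2) ^ 2) := by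
        rw [h1, h2, Real.sqrt_mul (by positivity)]
    _ = _ := by rw [Real.sqrt_sq (by positivity)]

variable {n : ℕ} {Ω : Type} [MeasurableSpace Ω] (μ : Measure Ω) [IsProbabilityMeasure μ]
  (γ : Fin n → Ω → ℝ) (p : Fin n → ℝ)

lemma bdd_integrable_aux (f : Ω → ℝ) (hf : Measurable f) (C : ℝ) (hC : ∀ ω, |f ω| ≤ C) :
    Integrable f μ :=
  ⟨hf.aestronglyMeasurable, HasFiniteIntegral.of_bounded (C := C) (ae_of_all μ hC)⟩

omit [MeasurableSpace Ω] in
lemma q_bound_aux (hp0 : ∀ i, 0 < p i) (hp1 : ∀ i, p i ≤ 1)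
    (h01 : ∀ i ω, γ i ω = 0 ∨ γ i ω = 1) (i : Fin n) (ω : Ω) :
    |γ i ω / p i - 1| ≤ (p i)⁻¹ := by
  rcases h01 i ω with h | h <;> rw [h]
  · rw [zero_div, zero_sub, abs_neg, abs_one]
    exact le_inv_of_le_inv₀ (hp0 i) (by simpa using hp1 i)
  · rw [one_div]
    have h1 : (1:ℝ) ≤ (p i)⁻¹ := (one_le_inv₀ (hp0 i)).mpr (hp1 i)
    rw [abs_of_nonneg (by linarith)]
    have := (hp0 i)
    linarith [inv_pos.mpr this]

omit [IsProbabilityMeasure μ] in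
lemma integral_gamma_aux (hmeas : ∀ i, Measurable (γ i))
    (h01 : ∀ i ω, γ i ω = 0 ∨ γ i ω = 1)
    (hBer : ∀ i, μ {ω | γ i ω = 1} = ENNReal.ofReal (p i))
    (hp0 : ∀ i, 0 < p i) (i : Fin n) :
    ∫ ω, γ i ω ∂μ = p i := by
  have hset : MeasurableSet {ω | γ i ω = 1} := (hmeas i) (measurableSet_singleton 1)
  have heq : γ i = Set.indicator {ω | γ i ω = 1} (fun _ => (1:ℝ)) := by
    funext ω
    rcases h01 i ω with h | h <;>
      simp [Set.indicator, h]
  rw [heq, integral_indicator_const _ hset, measureReal_def, hBer i,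
    ENNReal.toReal_ofReal (hp0 i).le]
  simp

lemma var_sum_aux (hmeas : ∀ i, Measurable (γ i))
    (h01 : ∀ i ω, γ i ω = 0 ∨ γ i ω = 1)
    (hBer : ∀ i, μ {ω | γ i ω = 1} = ENNReal.ofReal (p i))
    (hind : iIndepFun γ μ)
    (hp0 : ∀ i, 0 < p i) (hp1 : ∀ i, p i ≤ 1) (a : Fin n → ℝ) :
    Integrable (fun ω => (∑ i, a i * (γ i ω / p i - 1))^2) μ ∧
    ∫ ω, (∑ i, a i * (γ i ω / p i - 1))^2 ∂μ = ∑ i, (a i)^2 * ((p i)⁻¹ - 1) := by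
  set q : Fin n → Ω → ℝ := fun i ω => γ i ω / p i - 1 with hq
  have hqmeas : ∀ i, Measurable (q i) := fun i =>
    ((hmeas i).div_const (p i)).sub_const 1
  have hqb : ∀ i ω, |q i ω| ≤ (p i)⁻¹ := fun i ω => q_bound_aux γ p hp0 hp1 h01 i ω
  have hint_qq : ∀ i j, Integrable (fun ω => q i ω * q j ω) μ := by
    intro i j
    refine bdd_integrable_aux μ _ ((hqmeas i).mul (hqmeas j)) ((p i)⁻¹ * (p j)⁻¹) fun ω => ?_
    rw [abs_mul]
    exact mul_le_mul (hqb i ω) (hqb j ω) (abs_nonneg _) (inv_pos.mpr (hp0 i)).le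
  have hint_q : ∀ i, Integrable (q i) μ := fun i =>
    bdd_integrable_aux μ _ (hqmeas i) ((p i)⁻¹) (hqb i)
  have hEq : ∀ i, ∫ ω, q i ω ∂μ = 0 := by
    intro i
    have : Integrable (fun ω => γ i ω / p i) μ :=
      ((bdd_integrable_aux μ _ (hmeas i) 1 (fun ω => by rcases h01 i ω with h|h <;> simp [h])).div_const (p i))
    rw [hq]
    simp only []
    rw [integral_sub this (integrable_const 1), integral_const]
    simp only [integral_div, integral_gamma_aux μ γ p hmeas h01 hBer hp0 i]
    simp [div_self (hp0 i).ne']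
  have hEqq : ∀ i j, i ≠ j → ∫ ω, q i ω * q j ω ∂μ = 0 := by
    intro i j hij
    have hφ : ∀ k : Fin n, q k = (fun t : ℝ => t / p k - 1) ∘ γ k := fun k => rfl
    have hindq : IndepFun (q i) (q j) μ := by
      rw [hφ i, hφ j]
      exact (hind.indepFun hij).comp
        ((measurable_id.div_const (p i)).sub_const 1)
        ((measurable_id.div_const (p j)).sub_const 1)
    have := hindq.integral_mul_eq_mul_integral (hint_q i).1 (hint_q j).1
    have h2 : ∫ ω, q i ω * q j ω ∂μ = ∫ ω, (q i * q j) ω ∂μ := rfl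
    rw [h2, this, hEq i, hEq j, mul_zero]
  have hEqsq : ∀ i, ∫ ω, q i ω * q i ω ∂μ = (p i)⁻¹ - 1 := by
    intro i
    have hpt : ∀ ω, q i ω * q i ω = γ i ω * ((p i)⁻¹^2 - 2 * (p i)⁻¹) + 1 := by
      intro ω
      rcases h01 i ω with h | h <;>
        · simp only [hq, h]
          ring_nf
          try ring
    have hintg : Integrable (γ i) μ :=
      bdd_integrable_aux μ _ (hmeas i) 1 (fun ω => by rcases h01 i ω with h|h <;> simp [h])
    calc ∫ ω, q i ω * q i ω ∂μ
        = ∫ ω, γ i ω * ((p i)⁻¹^2 - 2 * (p i)⁻¹) + 1 ∂μ := by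
          exact integral_congr_ae (ae_of_all μ hpt)
      _ = (∫ ω, γ i ω ∂μ) * ((p i)⁻¹^2 - 2 * (p i)⁻¹) + 1 := by
          rw [integral_add (hintg.mul_const _) (integrable_const 1), integral_mul_const,
            integral_const]
          simp
      _ = (p i)⁻¹ - 1 := by
          rw [integral_gamma_aux μ γ p hmeas h01 hBer hp0 i]
          field_simp [(hp0 i).ne']
          ring
  have hexp : ∀ ω, (∑ i, a i * q i ω)^2
      = ∑ i, ∑ j, (a i * a j) * (q i ω * q j ω) := by
    intro ω
    rw [pow_two, Finset.sum_mul_sum]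
    congr 1; funext i; congr 1; funext j; ring
  have hint_term : ∀ (i j : Fin n), Integrable (fun ω => (a i * a j) * (q i ω * q j ω)) μ :=
    fun i j => (hint_qq i j).const_mul _
  have hint_inner : ∀ i, Integrable (fun ω => ∑ j, (a i * a j) * (q i ω * q j ω)) μ :=
    fun i => integrable_finset_sum _ (fun j _ => hint_term i j)
  constructor
  · have : Integrable (fun ω => ∑ i, ∑ j, (a i * a j) * (q i ω * q j ω)) μ :=
      integrable_finset_sum _ (fun i _ => hint_inner i)
    exact this.congr (ae_of_all μ (fun ω => (hexp ω).symm))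
  · calc ∫ ω, (∑ i, a i * q i ω)^2 ∂μ
        = ∫ ω, ∑ i, ∑ j, (a i * a j) * (q i ω * q j ω) ∂μ :=
          integral_congr_ae (ae_of_all μ hexp)
      _ = ∑ i, ∑ j, (a i * a j) * ∫ ω, q i ω * q j ω ∂μ := by
          rw [integral_finset_sum _ (fun i _ => hint_inner i)]
          congr 1; funext i
          rw [integral_finset_sum _ (fun j _ => hint_term i j)]
          congr 1; funext j
          rw [integral_const_mul]
      _ = ∑ i, (a i)^2 * ((p i)⁻¹ - 1) := by
          refine Finset.sum_congr rfl fun i _ => ?_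
          rw [Finset.sum_eq_single i]
          · rw [hEqsq i, ← pow_two]
          · intro j _ hji
            rw [hEqq i j (Ne.symm hji), mul_zero]
          · intro h; exact absurd (Finset.mem_univ i) h

lemma markov_aux (F : Ω → ℝ) (hF0 : ∀ ω, 0 ≤ F ω) (hFi : Integrable F μ) (a δ : ℝ) (ha : 0 < a)
    (hδ : 0 ≤ δ) (hle : ∫ ω, F ω ∂μ ≤ δ * a) :
    μ {ω | a < F ω} ≤ ENNReal.ofReal δ := by
  have h := mul_meas_ge_le_integral_of_nonneg (ae_of_all μ hF0) hFi a
  have hμfin : μ {ω | a ≤ F ω} ≠ ⊤ := measure_ne_top μ _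
  have htr : (μ {ω | a ≤ F ω}).toReal ≤ δ := by
    have h0 : (0:ℝ) ≤ (μ {ω | a ≤ F ω}).toReal := ENNReal.toReal_nonneg
    rw [measureReal_def] at h
    nlinarith
  calc μ {ω | a < F ω} ≤ μ {ω | a ≤ F ω} :=
      measure_mono fun ω (h : a < F ω) => (le_of_lt h : a ≤ F ω)
    _ ≤ ENNReal.ofReal δ := (ENNReal.le_ofReal_iff_toReal_le hμfin hδ).mpr htr

end Aux

/-- Theorem 1 of the paper: with probability at least
`1 − 2δ`, the subsampled matrix `Σ_s` is invertible and the subsample estimator satisfies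
`‖β̃ − β̂_n‖ ≤ C·r^{−1/2}` with `C = 3·λ_min(Σ_n)⁻¹·δ⁻¹·σ_b`.
 -/
theorem stmt14 {n d : ℕ} (hn : 1 ≤ n) (hd : 2 ≤ d)
    (x : Fin n → Fin d → ℝ) (y : Fin n → ℝ)
    (Sn : Matrix (Fin d) (Fin d) ℝ)
    (hSn : Sn = (n : ℝ)⁻¹ • ∑ i, vecMulVec (x i) (x i))
    (hpd : Sn.PosDef)
    (bn : Fin d → ℝ) (hbn : bn = (n : ℝ)⁻¹ • ∑ i, y i • x i)
    (βhat : Fin d → ℝ) (hβ : βhat = Sn⁻¹ *ᵥ bn)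
    (e : Fin n → ℝ) (he : ∀ i, e i = y i - ∑ k, x i k * βhat k)
    (w : Fin n → ℝ) (hw0 : ∀ i, 0 < w i) (hw1 : ∑ i, w i = 1)
    (r : ℝ) (hr : 0 < r)
    (p : Fin n → ℝ) (hp : ∀ i, p i = r * w i) (hp1 : ∀ i, p i ≤ 1)
    (sS2 : ℝ) (hsS2 : sS2 = ((n : ℝ) ^ 2)⁻¹ * ∑ i, (w i)⁻¹ * (∑ k, x i k ^ 2) ^ 2)
    (sb2 : ℝ) (hsb2 : sb2 = ((n : ℝ) ^ 2)⁻¹ * ∑ i, (w i)⁻¹ * (∑ k, x i k ^ 2) * e i ^ 2)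
    (R : ℝ) (hR : R = ⨆ j, ∑ k, x j k ^ 2)
    {Ω : Type} [MeasurableSpace Ω] (μ : Measure Ω) [IsProbabilityMeasure μ]
    (γ : Fin n → Ω → ℝ) (hmeas : ∀ i, Measurable (γ i))
    (h01 : ∀ i ω, γ i ω = 0 ∨ γ i ω = 1)
    (hBer : ∀ i, μ {ω | γ i ω = 1} = ENNReal.ofReal (p i))
    (hind : iIndepFun γ μ)
    (Ss : Ω → Matrix (Fin d) (Fin d) ℝ)
    (hSs : ∀ ω, Ss ω = (n : ℝ)⁻¹ • ∑ i, (γ i ω / p i) • vecMulVec (x i) (x i))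
    (bs : Ω → Fin d → ℝ)
    (hbs : ∀ ω, bs ω = (n : ℝ)⁻¹ • ∑ i, (γ i ω / p i) • y i • x i)
    (δ : ℝ) (hδ0 : 0 < δ) (hδ1 : δ < 1)
    (hδ : δ > 2 * R * Real.log d / (3 * n * lamMin Sn))
    (hrbig : r > 2 * sS2 * Real.log d /
        (δ ^ 2 * (lamMin Sn / 2 - R * Real.log d / (3 * n * δ)) ^ 2)) :
    ENNReal.ofReal (1 - 2 * δ) ≤
      μ {ω | IsUnit (Ss ω).det ∧
        euclNorm ((Ss ω)⁻¹ *ᵥ bs ω - βhat) ≤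
          3 * (lamMin Sn)⁻¹ * δ⁻¹ * Real.sqrt sb2 * (Real.sqrt r)⁻¹} := by
  classical
  -- basic positivity facts
  have hn0 : (0:ℝ) < n := by exact_mod_cast hn
  have hnne : (n:ℝ) ≠ 0 := hn0.ne'
  have hp0 : ∀ i, 0 < p i := fun i => by rw [hp i]; exact mul_pos hr (hw0 i)
  haveI : Nonempty (Fin d) := ⟨⟨0, by omega⟩⟩
  haveI : Nonempty (Fin n) := ⟨⟨0, by omega⟩⟩
  have hherm : Sn.IsHermitian := hpd.1
  set m : ℝ := lamMin Sn with hmdef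
  have hmeig : m = ⨅ i, hherm.eigenvalues i := by
    rw [hmdef, lamMin, dif_pos hherm]
  have hm_le : ∀ i, m ≤ hherm.eigenvalues i := by
    intro i
    rw [hmeig]
    exact ciInf_le (Set.finite_range _).bddBelow i
  have hm_pos : 0 < m := by
    obtain ⟨j, hj⟩ := Finite.exists_min (fun i => hherm.eigenvalues i)
    have h1 : hherm.eigenvalues j ≤ m := by
      rw [hmeig]; exact le_ciInf hj
    have := hpd.eigenvalues_pos j
    linarith
  -- log d bounds
  have hlog2 : (1:ℝ)/2 < Real.log d := by
    have h1 : Real.log 2 ≤ Real.log d := by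
      apply Real.log_le_log (by norm_num)
      exact_mod_cast hd
    have := Real.log_two_gt_d9
    linarith
  have hlog0 : 0 < Real.log d := by linarith
  -- R ≥ 0
  have hR0 : 0 ≤ R := by
    rw [hR]
    have h1 : (∑ k, x ⟨0, by omega⟩ k ^ 2) ≤ ⨆ j, ∑ k, x j k ^ 2 :=
      le_ciSup (f := fun j => ∑ k, x j k ^ 2) (Set.finite_range _).bddAbove _
    have h2 : (0:ℝ) ≤ ∑ k, x ⟨0, by omega⟩ k ^ 2 := by positivity
    linarith
  -- t > 0
  set t : ℝ := m / 2 - R * Real.log d / (3 * n * δ) with ht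
  have ht_pos : 0 < t := by
    have h1 : 2 * R * Real.log d < δ * (3 * n * m) :=
      (div_lt_iff₀ (by positivity)).mp hδ
    rw [ht, sub_pos, div_lt_iff₀ (by positivity)]
    linarith
  have ht_le : t ≤ m / 2 := by
    rw [ht]
    have : 0 ≤ R * Real.log d / (3 * n * δ) := by positivity
    linarith
  have hsS2_0 : 0 ≤ sS2 := by
    rw [hsS2]
    refine mul_nonneg (by positivity) (Finset.sum_nonneg fun i _ =>
      mul_nonneg (inv_nonneg.mpr (hw0 i).le) (by positivity))
  have hsb2_0 : 0 ≤ sb2 := by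
    rw [hsb2]
    refine mul_nonneg (by positivity) (Finset.sum_nonneg fun i _ =>
      mul_nonneg (mul_nonneg (inv_nonneg.mpr (hw0 i).le) (by positivity)) (sq_nonneg _))
  -- key bound for the Σ event
  have hkey : sS2 * r⁻¹ ≤ δ * (m/2)^2 := by
    clear_value t
    have h1 : 2 * sS2 * Real.log d < r * (δ ^ 2 * t ^ 2) :=
      (div_lt_iff₀ (by positivity)).mp hrbig
    have h2 : sS2 ≤ 2 * sS2 * Real.log d := by
      linarith [mul_nonneg hsS2_0 (show (0:ℝ) ≤ 2 * Real.log d - 1 by linarith)]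
    have h3 : t ^ 2 ≤ (m/2)^2 := pow_le_pow_left₀ ht_pos.le ht_le 2
    have h4 : δ ^ 2 ≤ δ := by
      rw [pow_two]
      exact mul_le_of_le_one_right hδ0.le hδ1.le
    have h3' : r * (δ ^ 2 * t ^ 2) ≤ r * (δ ^ 2 * (m/2)^2) :=
      mul_le_mul_of_nonneg_left (mul_le_mul_of_nonneg_left h3 (sq_nonneg δ)) hr.le
    have h4' : r * (δ ^ 2 * (m/2)^2) ≤ r * (δ * (m/2)^2) :=
      mul_le_mul_of_nonneg_left (mul_le_mul_of_nonneg_right h4 (sq_nonneg (m/2))) hr.le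
    rw [← div_eq_mul_inv, div_le_iff₀ hr]
    linarith
  -- p inverse formula
  have hpinv : ∀ i, (p i)⁻¹ = r⁻¹ * (w i)⁻¹ := fun i => by
    rw [hp i, mul_inv]
  -- det of Sn is a unit
  have hdetSn : IsUnit Sn.det := hpd.det_pos.ne'.isUnit
  -- entries of Sn and the centered matrices
  have hSnk : ∀ k l, Sn k l = (n:ℝ)⁻¹ * ∑ i, x i k * x i l := by
    intro k l
    rw [hSn]
    simp [Matrix.sum_apply, vecMulVec_apply]
  have hSsk : ∀ ω k l, Ss ω k l = (n:ℝ)⁻¹ * ∑ i, (γ i ω / p i) * (x i k * x i l) := by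
    intro ω k l
    rw [hSs ω]
    simp [Matrix.sum_apply, vecMulVec_apply, mul_assoc]
  have hSsd : ∀ ω k l, Ss ω k l - Sn k l
      = ∑ i, ((n:ℝ)⁻¹ * (x i k * x i l)) * (γ i ω / p i - 1) := by
    intro ω k l
    rw [hSsk ω k l, hSnk k l, Finset.mul_sum, Finset.mul_sum, ← Finset.sum_sub_distrib]
    exact Finset.sum_congr rfl fun i _ => by ring
  -- bn entries and Sn *ᵥ βhat = bn
  have hbnk : ∀ k, bn k = (n:ℝ)⁻¹ * ∑ i, y i * x i k := by
    intro k
    rw [hbn]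
    simp [Finset.sum_apply]
  have hSnβ : Sn *ᵥ βhat = bn := by
    rw [hβ, Matrix.mulVec_mulVec, Matrix.mul_nonsing_inv _ hdetSn, Matrix.one_mulVec]
  have hmv : ∀ (M : Matrix (Fin d) (Fin d) ℝ) (v : Fin d → ℝ) (k : Fin d),
      (M *ᵥ v) k = ∑ l, M k l * v l := fun M v k => rfl
  have hSnβk : ∀ k, (Sn *ᵥ βhat) k = (n:ℝ)⁻¹ * ∑ i, (∑ l, x i l * βhat l) * x i k := by
    intro k
    rw [hmv]
    calc ∑ l, Sn k l * βhat l
        = ∑ l, (n:ℝ)⁻¹ * ∑ i, (x i k * x i l) * βhat l := by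
          refine Finset.sum_congr rfl fun l _ => ?_
          rw [hSnk k l, mul_assoc, Finset.sum_mul]
      _ = (n:ℝ)⁻¹ * ∑ l, ∑ i, (x i k * x i l) * βhat l := by
          rw [Finset.mul_sum]
      _ = (n:ℝ)⁻¹ * ∑ i, (∑ l, x i l * βhat l) * x i k := by
          rw [Finset.sum_comm]
          congr 1
          refine Finset.sum_congr rfl fun i _ => ?_
          rw [Finset.sum_mul]
          exact Finset.sum_congr rfl fun l _ => by ring
  have hzero : ∀ k, ∑ i, e i * x i k = 0 := by
    intro k
    have h1 : ∑ i, e i * x i k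
        = (∑ i, y i * x i k) - ∑ i, (∑ l, x i l * βhat l) * x i k := by
      rw [← Finset.sum_sub_distrib]
      refine Finset.sum_congr rfl fun i _ => ?_
      rw [he i]
      ring
    have h2 : (Sn *ᵥ βhat) k = bn k := by rw [hSnβ]
    rw [hSnβk k, hbnk k] at h2
    have h3 : (∑ i, (∑ l, x i l * βhat l) * x i k) = ∑ i, y i * x i k := by
      have := mul_left_cancel₀ (inv_ne_zero hnne) h2
      linarith [this]
    rw [h1, h3, sub_self]
  -- bs entries and the residual vector
  have hbsk : ∀ ω k, bs ω k = (n:ℝ)⁻¹ * ∑ i, (γ i ω / p i) * (y i * x i k) := by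
    intro ω k
    rw [hbs ω]
    simp [Finset.sum_apply, mul_assoc]
  have hSsβk : ∀ ω k, (Ss ω *ᵥ βhat) k
      = (n:ℝ)⁻¹ * ∑ i, (γ i ω / p i) * ((∑ l, x i l * βhat l) * x i k) := by
    intro ω k
    rw [hmv]
    calc ∑ l, Ss ω k l * βhat l
        = ∑ l, (n:ℝ)⁻¹ * ∑ i, ((γ i ω / p i) * (x i k * x i l)) * βhat l := by
          refine Finset.sum_congr rfl fun l _ => ?_
          rw [hSsk ω k l, mul_assoc, Finset.sum_mul]
      _ = (n:ℝ)⁻¹ * ∑ l, ∑ i, ((γ i ω / p i) * (x i k * x i l)) * βhat l := by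
          rw [Finset.mul_sum]
      _ = (n:ℝ)⁻¹ * ∑ i, (γ i ω / p i) * ((∑ l, x i l * βhat l) * x i k) := by
          rw [Finset.sum_comm]
          congr 1
          refine Finset.sum_congr rfl fun i _ => ?_
          rw [Finset.sum_mul, Finset.mul_sum]
          exact Finset.sum_congr rfl fun l _ => by ring
  have hZk : ∀ ω k, bs ω k - (Ss ω *ᵥ βhat) k
      = ∑ i, ((n:ℝ)⁻¹ * (e i * x i k)) * (γ i ω / p i - 1) := by
    intro ω k
    have h1 : ∑ i, ((n:ℝ)⁻¹ * (e i * x i k)) * (γ i ω / p i - 1)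
        = (n:ℝ)⁻¹ * ∑ i, (γ i ω / p i) * (e i * x i k)
          - (n:ℝ)⁻¹ * ∑ i, e i * x i k := by
      rw [Finset.mul_sum, Finset.mul_sum, ← Finset.sum_sub_distrib]
      exact Finset.sum_congr rfl fun i _ => by ring
    rw [h1, hzero k, mul_zero, sub_zero, hbsk ω k, hSsβk ω k, ← mul_sub,
      ← Finset.sum_sub_distrib]
    congr 1
    refine Finset.sum_congr rfl fun i _ => ?_
    rw [he i]
    ring
  -- the two scalar statistics
  set F : Ω → ℝ := fun ω => ∑ k, ∑ l, (Ss ω k l - Sn k l)^2 with hF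
  set G : Ω → ℝ := fun ω => ∑ k, (bs ω k - (Ss ω *ᵥ βhat) k)^2 with hG
  have hF0 : ∀ ω, 0 ≤ F ω := fun ω => by
    refine Finset.sum_nonneg fun k _ => Finset.sum_nonneg fun l _ => sq_nonneg _
  have hG0 : ∀ ω, 0 ≤ G ω := fun ω => Finset.sum_nonneg fun k _ => sq_nonneg _
  -- integrability and expectation bounds via var_sum_aux
  have hvsF := fun (k l : Fin d) => var_sum_aux μ γ p hmeas h01 hBer hind hp0 hp1
      (fun i => (n:ℝ)⁻¹ * (x i k * x i l))
  have hvsG := fun (k : Fin d) => var_sum_aux μ γ p hmeas h01 hBer hind hp0 hp1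
      (fun i => (n:ℝ)⁻¹ * (e i * x i k))
  have hFpt : ∀ ω, F ω = ∑ k, ∑ l, (∑ i, ((n:ℝ)⁻¹ * (x i k * x i l)) * (γ i ω / p i - 1))^2 := by
    intro ω
    refine Finset.sum_congr rfl fun k _ => Finset.sum_congr rfl fun l _ => ?_
    rw [hSsd ω k l]
  have hGpt : ∀ ω, G ω = ∑ k, (∑ i, ((n:ℝ)⁻¹ * (e i * x i k)) * (γ i ω / p i - 1))^2 := by
    intro ω
    refine Finset.sum_congr rfl fun k _ => ?_
    rw [hZk ω k]
  have hFint : Integrable F μ := by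
    have : Integrable (fun ω => ∑ k, ∑ l,
        (∑ i, ((n:ℝ)⁻¹ * (x i k * x i l)) * (γ i ω / p i - 1))^2) μ :=
      integrable_finset_sum _ (fun k _ => integrable_finset_sum _ (fun l _ => (hvsF k l).1))
    exact this.congr (ae_of_all μ fun ω => (hFpt ω).symm)
  have hGint : Integrable G μ := by
    have : Integrable (fun ω => ∑ k,
        (∑ i, ((n:ℝ)⁻¹ * (e i * x i k)) * (γ i ω / p i - 1))^2) μ :=
      integrable_finset_sum _ (fun k _ => (hvsG k).1)
    exact this.congr (ae_of_all μ fun ω => (hGpt ω).symm)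
  -- expectation of F
  have hswF : ∀ i : Fin n, ∑ k, ∑ l, ((n:ℝ)⁻¹ * (x i k * x i l))^2 * (p i)⁻¹
      = (p i)⁻¹ * (((n:ℝ)^2)⁻¹ * ((∑ k, x i k ^ 2) * (∑ k, x i k ^ 2))) := by
    intro i
    rw [Finset.sum_mul_sum]
    simp only [Finset.mul_sum]
    refine Finset.sum_congr rfl fun k _ => Finset.sum_congr rfl fun l _ => ?_
    field_simp
  have hsS2r : sS2 * r⁻¹
      = ∑ i, (p i)⁻¹ * (((n:ℝ)^2)⁻¹ * ((∑ k, x i k ^ 2) * (∑ k, x i k ^ 2))) := by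
    rw [hsS2, Finset.mul_sum, Finset.sum_mul]
    refine Finset.sum_congr rfl fun i _ => ?_
    rw [hpinv i]
    ring
  have hEF : ∫ ω, F ω ∂μ ≤ sS2 * r⁻¹ := by
    have h1 : ∫ ω, F ω ∂μ
        = ∑ k, ∑ l, ∑ i, ((n:ℝ)⁻¹ * (x i k * x i l))^2 * ((p i)⁻¹ - 1) := by
      rw [integral_congr_ae (ae_of_all μ hFpt),
        integral_finset_sum _ (fun k _ => integrable_finset_sum _ (fun l _ => (hvsF k l).1))]
      refine Finset.sum_congr rfl fun k _ => ?_
      rw [integral_finset_sum _ (fun l _ => (hvsF k l).1)]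
      exact Finset.sum_congr rfl fun l _ => (hvsF k l).2
    have h2 : ∀ (k l : Fin d) (i : Fin n),
        ((n:ℝ)⁻¹ * (x i k * x i l))^2 * ((p i)⁻¹ - 1)
          ≤ ((n:ℝ)⁻¹ * (x i k * x i l))^2 * (p i)⁻¹ := by
      intro k l i
      have h0 := sq_nonneg ((n:ℝ)⁻¹ * (x i k * x i l))
      have := mul_le_mul_of_nonneg_left (show (p i)⁻¹ - 1 ≤ (p i)⁻¹ by linarith) h0
      linarith [this]
    rw [h1]
    calc ∑ k, ∑ l, ∑ i, ((n:ℝ)⁻¹ * (x i k * x i l))^2 * ((p i)⁻¹ - 1)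
        ≤ ∑ k, ∑ l, ∑ i, ((n:ℝ)⁻¹ * (x i k * x i l))^2 * (p i)⁻¹ :=
          Finset.sum_le_sum fun k _ => Finset.sum_le_sum fun l _ =>
            Finset.sum_le_sum fun i _ => h2 k l i
      _ = ∑ k, ∑ i, ∑ l, ((n:ℝ)⁻¹ * (x i k * x i l))^2 * (p i)⁻¹ :=
          Finset.sum_congr rfl fun k _ => Finset.sum_comm
      _ = ∑ i, ∑ k, ∑ l, ((n:ℝ)⁻¹ * (x i k * x i l))^2 * (p i)⁻¹ := Finset.sum_comm
      _ = ∑ i, (p i)⁻¹ * (((n:ℝ)^2)⁻¹ * ((∑ k, x i k ^ 2) * (∑ k, x i k ^ 2))) :=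
          Finset.sum_congr rfl fun i _ => hswF i
      _ = sS2 * r⁻¹ := hsS2r.symm
  -- expectation of G
  have hswG : ∀ i : Fin n, ∑ k, ((n:ℝ)⁻¹ * (e i * x i k))^2 * (p i)⁻¹
      = (p i)⁻¹ * (((n:ℝ)^2)⁻¹ * ((∑ k, x i k ^ 2) * e i ^ 2)) := by
    intro i
    have h1 : ∑ k, ((n:ℝ)⁻¹ * (e i * x i k))^2 * (p i)⁻¹
        = ∑ k, (p i)⁻¹ * (((n:ℝ)^2)⁻¹ * (x i k ^ 2 * e i ^ 2)) := by
      refine Finset.sum_congr rfl fun k _ => ?_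
      field_simp
    rw [h1, Finset.sum_mul, Finset.mul_sum, Finset.mul_sum]
  have hsb2r : sb2 * r⁻¹
      = ∑ i, (p i)⁻¹ * (((n:ℝ)^2)⁻¹ * ((∑ k, x i k ^ 2) * e i ^ 2)) := by
    rw [hsb2, Finset.mul_sum, Finset.sum_mul]
    refine Finset.sum_congr rfl fun i _ => ?_
    rw [hpinv i]
    ring
  have hEG : ∫ ω, G ω ∂μ ≤ sb2 * r⁻¹ := by
    have h1 : ∫ ω, G ω ∂μ
        = ∑ k, ∑ i, ((n:ℝ)⁻¹ * (e i * x i k))^2 * ((p i)⁻¹ - 1) := by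
      rw [integral_congr_ae (ae_of_all μ hGpt),
        integral_finset_sum _ (fun k _ => (hvsG k).1)]
      exact Finset.sum_congr rfl fun k _ => (hvsG k).2
    have h2 : ∀ (k : Fin d) (i : Fin n),
        ((n:ℝ)⁻¹ * (e i * x i k))^2 * ((p i)⁻¹ - 1)
          ≤ ((n:ℝ)⁻¹ * (e i * x i k))^2 * (p i)⁻¹ := by
      intro k i
      have h0 := sq_nonneg ((n:ℝ)⁻¹ * (e i * x i k))
      have := mul_le_mul_of_nonneg_left (show (p i)⁻¹ - 1 ≤ (p i)⁻¹ by linarith) h0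
      linarith [this]
    rw [h1]
    calc ∑ k, ∑ i, ((n:ℝ)⁻¹ * (e i * x i k))^2 * ((p i)⁻¹ - 1)
        ≤ ∑ k, ∑ i, ((n:ℝ)⁻¹ * (e i * x i k))^2 * (p i)⁻¹ :=
          Finset.sum_le_sum fun k _ => Finset.sum_le_sum fun i _ => h2 k i
      _ = ∑ i, ∑ k, ((n:ℝ)⁻¹ * (e i * x i k))^2 * (p i)⁻¹ := Finset.sum_comm
      _ = ∑ i, (p i)⁻¹ * (((n:ℝ)^2)⁻¹ * ((∑ k, x i k ^ 2) * e i ^ 2)) :=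
          Finset.sum_congr rfl fun i _ => hswG i
      _ = sb2 * r⁻¹ := hsb2r.symm
  -- the two deviation events
  set aG : ℝ := sb2 * r⁻¹ * δ⁻¹ with haG
  have hA : μ {ω | (m/2)^2 < F ω} ≤ ENNReal.ofReal δ := by
    refine markov_aux μ F hF0 hFint ((m/2)^2) δ (by positivity) hδ0.le ?_
    calc ∫ ω, F ω ∂μ ≤ sS2 * r⁻¹ := hEF
      _ ≤ δ * (m/2)^2 := hkey
  have hB : μ {ω | aG < G ω} ≤ ENNReal.ofReal δ := by
    rcases eq_or_lt_of_le hsb2_0 with hsb | hsb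
    · -- sb2 = 0 : G vanishes a.e.
      have hint0 : ∫ ω, G ω ∂μ = 0 := by
        have h0 : 0 ≤ ∫ ω, G ω ∂μ := integral_nonneg hG0
        have : ∫ ω, G ω ∂μ ≤ 0 := by
          rw [← hsb] at hEG
          simpa using hEG
        linarith
      have hae : G =ᵐ[μ] 0 :=
        (integral_eq_zero_iff_of_nonneg hG0 hGint).mp hint0
      have haG0 : aG = 0 := by rw [haG, ← hsb]; ring
      have : μ {ω | aG < G ω} = 0 := by
        have hsub : {ω | aG < G ω} ⊆ {ω | G ω ≠ 0} := by
          intro ω hω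
          simp only [Set.mem_setOf_eq, haG0] at hω ⊢
          exact ne_of_gt hω
        refine measure_mono_null hsub ?_
        have := hae
        rw [Filter.EventuallyEq, ae_iff] at this
        simpa using this
      rw [this]
      positivity
    · have haGpos : 0 < aG := by
        rw [haG]
        positivity
      refine markov_aux μ G hG0 hGint aG δ haGpos hδ0.le ?_
      calc ∫ ω, G ω ∂μ ≤ sb2 * r⁻¹ := hEG
        _ = δ * aG := by rw [haG]; field_simp
  -- combine the two events
  set S : Set Ω := {ω | F ω ≤ (m/2)^2} ∩ {ω | G ω ≤ aG} with hSdef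
  have hprob : ENNReal.ofReal (1 - 2 * δ) ≤ μ S := by
    have hcompl : Sᶜ ⊆ {ω | (m/2)^2 < F ω} ∪ {ω | aG < G ω} := by
      intro ω hω
      rw [hSdef, Set.compl_inter] at hω
      rcases hω with hω | hω
      · left; exact lt_of_not_ge (by simpa using hω)
      · right; exact lt_of_not_ge (by simpa using hω)
    have h1 : μ Sᶜ ≤ ENNReal.ofReal (2 * δ) := by
      calc μ Sᶜ ≤ μ ({ω | (m/2)^2 < F ω} ∪ {ω | aG < G ω}) := measure_mono hcompl
        _ ≤ μ {ω | (m/2)^2 < F ω} + μ {ω | aG < G ω} := measure_union_le _ _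
        _ ≤ ENNReal.ofReal δ + ENNReal.ofReal δ := add_le_add hA hB
        _ = ENNReal.ofReal (2 * δ) := by
            rw [← ENNReal.ofReal_add hδ0.le hδ0.le]; ring_nf
    have h2 : (1:ENNReal) ≤ μ S + μ Sᶜ := by
      calc (1:ENNReal) = μ Set.univ := (measure_univ).symm
        _ = μ (S ∪ Sᶜ) := by rw [Set.union_compl_self]
        _ ≤ μ S + μ Sᶜ := measure_union_le _ _
    have h3 : (1:ENNReal) ≤ μ S + ENNReal.ofReal (2 * δ) :=
      le_trans h2 (add_le_add le_rfl h1)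
    calc ENNReal.ofReal (1 - 2 * δ)
        = ENNReal.ofReal 1 - ENNReal.ofReal (2 * δ) :=
          ENNReal.ofReal_sub _ (by positivity)
      _ = 1 - ENNReal.ofReal (2 * δ) := by rw [ENNReal.ofReal_one]
      _ ≤ μ S := by
          rw [tsub_le_iff_right]
          exact h3
  refine le_trans hprob (measure_mono ?_)
  -- on the good event, conclude
  intro ω hω
  obtain ⟨hωF, hωG⟩ := hω
  have hωF' : F ω ≤ (m/2)^2 := hωF
  have hωG' : G ω ≤ aG := hωG
  -- Ss ω is Hermitian
  have hherms : (Ss ω).IsHermitian := by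
    rw [Matrix.IsHermitian]
    ext k l
    rw [Matrix.conjTranspose_apply, hSsk ω l k, hSsk ω k l]
    rw [star_trivial]
    congr 1
    exact Finset.sum_congr rfl fun i _ => by ring
  -- quadratic form lower bound for Ss ω
  have hqform : ∀ v : Fin d → ℝ, (m/2) * (∑ k, v k ^ 2) ≤ v ⬝ᵥ (Ss ω *ᵥ v) := by
    intro v
    have hsplit : Ss ω *ᵥ v = Sn *ᵥ v + (Ss ω - Sn) *ᵥ v := by
      rw [← Matrix.add_mulVec, add_sub_cancel]
    have h1 : m * (∑ k, v k ^ 2) ≤ v ⬝ᵥ (Sn *ᵥ v) := rayleigh_aux Sn hherm m hm_le v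
    have h2 : |v ⬝ᵥ ((Ss ω - Sn) *ᵥ v)|
        ≤ Real.sqrt (∑ k, ∑ l, (Ss ω - Sn) k l ^ 2) * (∑ k, v k ^ 2) :=
      bilin_bound_aux (Ss ω - Sn) v
    have hFsub : (∑ k, ∑ l, (Ss ω - Sn) k l ^ 2) = F ω := by
      refine Finset.sum_congr rfl fun k _ => Finset.sum_congr rfl fun l _ => ?_
      rw [Matrix.sub_apply]
    have h3 : Real.sqrt (∑ k, ∑ l, (Ss ω - Sn) k l ^ 2) ≤ m/2 := by
      rw [hFsub]
      calc Real.sqrt (F ω) ≤ Real.sqrt ((m/2)^2) := Real.sqrt_le_sqrt hωF'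
        _ = m/2 := Real.sqrt_sq (by positivity)
    have hv2 : 0 ≤ ∑ k, v k ^ 2 := by positivity
    have h4 : -(m/2 * (∑ k, v k ^ 2)) ≤ v ⬝ᵥ ((Ss ω - Sn) *ᵥ v) := by
      have := abs_le.mp h2
      have hmul : Real.sqrt (∑ k, ∑ l, (Ss ω - Sn) k l ^ 2) * (∑ k, v k ^ 2)
          ≤ m/2 * (∑ k, v k ^ 2) := mul_le_mul_of_nonneg_right h3 hv2
      linarith [this.1]
    have h5 : v ⬝ᵥ (Ss ω *ᵥ v) = v ⬝ᵥ (Sn *ᵥ v) + v ⬝ᵥ ((Ss ω - Sn) *ᵥ v) := by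
      rw [hsplit, dotProduct_add]
    linarith
  -- Ss ω is positive definite, hence invertible
  have hpds : (Ss ω).PosDef := by
    refine Matrix.PosDef.of_dotProduct_mulVec_pos hherms fun v hv => ?_
    have hstar : (star v : Fin d → ℝ) = v := by simp
    rw [hstar]
    have hvk : ∃ k, v k ≠ 0 := by
      by_contra hcon
      push_neg at hcon
      exact hv (funext hcon)
    obtain ⟨k0, hk0⟩ := hvk
    have hvsum : 0 < ∑ k, v k ^ 2 :=
      Finset.sum_pos' (fun k _ => sq_nonneg _)
        ⟨k0, Finset.mem_univ k0, by positivity⟩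
    have := hqform v
    have hmv2 : 0 < (m/2) * (∑ k, v k ^ 2) := by positivity
    linarith
  have hdet : IsUnit (Ss ω).det := hpds.det_pos.ne'.isUnit
  refine ⟨hdet, ?_⟩
  -- the estimator error vector
  set u : Fin d → ℝ := (Ss ω)⁻¹ *ᵥ bs ω - βhat with hu
  set Zv : Fin d → ℝ := fun k => bs ω k - (Ss ω *ᵥ βhat) k with hZv
  have hSsu : Ss ω *ᵥ u = Zv := by
    rw [hu]
    rw [Matrix.mulVec_sub, Matrix.mulVec_mulVec, Matrix.mul_nonsing_inv _ hdet,
      Matrix.one_mulVec]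
    funext k
    rw [hZv]
    simp [Pi.sub_apply]
  have hGZ : (∑ k, Zv k ^ 2) = G ω := by
    refine Finset.sum_congr rfl fun k _ => ?_
    rw [hZv]
  set N : ℝ := Real.sqrt (∑ k, u k ^ 2) with hN
  have hN0 : 0 ≤ N := Real.sqrt_nonneg _
  have hNsq : N^2 = ∑ k, u k ^ 2 := Real.sq_sqrt (by positivity)
  have hbound : (m/2) * N^2 ≤ N * Real.sqrt (G ω) := by
    have h1 : (m/2) * (∑ k, u k ^ 2) ≤ u ⬝ᵥ (Ss ω *ᵥ u) := hqform u
    have h2 : u ⬝ᵥ (Ss ω *ᵥ u) = u ⬝ᵥ Zv := by rw [hSsu]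
    have h3 : u ⬝ᵥ Zv ≤ Real.sqrt (∑ k, u k ^ 2) * Real.sqrt (∑ k, Zv k ^ 2) :=
      cs_vec_aux u Zv
    rw [hGZ] at h3
    rw [hNsq]
    calc (m/2) * (∑ k, u k ^ 2) ≤ u ⬝ᵥ (Ss ω *ᵥ u) := h1
      _ = u ⬝ᵥ Zv := h2
      _ ≤ N * Real.sqrt (G ω) := h3
  have htarget0 : 0 ≤ 3 * m⁻¹ * δ⁻¹ * Real.sqrt sb2 * (Real.sqrt r)⁻¹ := by
    have h1 : 0 < m⁻¹ := by positivity
    have h2 : 0 < δ⁻¹ := by positivity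
    positivity
  have heun : euclNorm ((Ss ω)⁻¹ *ᵥ bs ω - βhat) = N := rfl
  rw [heun]
  rcases eq_or_lt_of_le hN0 with hNz | hNpos
  · rw [← hNz]
    exact htarget0
  -- N > 0 : divide through
  have hstep1 : (m/2) * N ≤ Real.sqrt (G ω) := by
    have := hbound
    rw [pow_two] at this
    have h2 : (m/2) * N * N ≤ Real.sqrt (G ω) * N := by
      calc (m/2) * N * N = (m/2) * (N * N) := by ring
        _ ≤ N * Real.sqrt (G ω) := this
        _ = Real.sqrt (G ω) * N := by ring
    exact le_of_mul_le_mul_right h2 hNpos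
  have hstep2 : Real.sqrt (G ω) ≤ Real.sqrt sb2 * (Real.sqrt r)⁻¹ * (Real.sqrt δ)⁻¹ := by
    calc Real.sqrt (G ω) ≤ Real.sqrt aG := Real.sqrt_le_sqrt hωG'
      _ = Real.sqrt sb2 * (Real.sqrt r)⁻¹ * (Real.sqrt δ)⁻¹ := by
          rw [haG, Real.sqrt_mul (by positivity), Real.sqrt_mul hsb2_0, Real.sqrt_inv,
            Real.sqrt_inv]
  have hNle : N ≤ (2/m) * (Real.sqrt sb2 * (Real.sqrt r)⁻¹ * (Real.sqrt δ)⁻¹) := by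
    have h1 : (m/2) * N ≤ Real.sqrt sb2 * (Real.sqrt r)⁻¹ * (Real.sqrt δ)⁻¹ :=
      le_trans hstep1 hstep2
    have h2 : 0 < m/2 := by positivity
    calc N = (2/m) * ((m/2) * N) := by field_simp
      _ ≤ (2/m) * (Real.sqrt sb2 * (Real.sqrt r)⁻¹ * (Real.sqrt δ)⁻¹) := by
          apply mul_le_mul_of_nonneg_left h1 (by positivity)
  -- compare with the target constant
  have hδsqrt : δ ≤ Real.sqrt δ := by
    calc δ = Real.sqrt (δ * δ) := (Real.sqrt_mul_self hδ0.le).symm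
      _ ≤ Real.sqrt δ := Real.sqrt_le_sqrt (mul_le_of_le_one_right hδ0.le hδ1.le)
  have hsd_pos : 0 < Real.sqrt δ := Real.sqrt_pos.mpr hδ0
  have hinv : (Real.sqrt δ)⁻¹ ≤ δ⁻¹ := inv_anti₀ hδ0 hδsqrt
  have hfinal : (2/m) * (Real.sqrt sb2 * (Real.sqrt r)⁻¹ * (Real.sqrt δ)⁻¹)
      ≤ 3 * m⁻¹ * δ⁻¹ * Real.sqrt sb2 * (Real.sqrt r)⁻¹ := by
    have hc : 0 ≤ Real.sqrt sb2 * (Real.sqrt r)⁻¹ := by positivity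
    have h1 : (2/m) * (Real.sqrt δ)⁻¹ ≤ 3 * m⁻¹ * δ⁻¹ := by
      have h2 : (2/m) * (Real.sqrt δ)⁻¹ ≤ (2/m) * δ⁻¹ :=
        mul_le_mul_of_nonneg_left hinv (by positivity)
      have h3 : (2/m) * δ⁻¹ ≤ 3 * m⁻¹ * δ⁻¹ := by
        have : (2:ℝ)/m ≤ 3 * m⁻¹ := by
          rw [div_eq_mul_inv]
          have hmi : 0 < m⁻¹ := by positivity
          linarith
        exact mul_le_mul_of_nonneg_right this (by positivity)
      linarith
    calc (2/m) * (Real.sqrt sb2 * (Real.sqrt r)⁻¹ * (Real.sqrt δ)⁻¹)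
        = ((2/m) * (Real.sqrt δ)⁻¹) * (Real.sqrt sb2 * (Real.sqrt r)⁻¹) := by ring
      _ ≤ (3 * m⁻¹ * δ⁻¹) * (Real.sqrt sb2 * (Real.sqrt r)⁻¹) :=
          mul_le_mul_of_nonneg_right h1 hc
      _ = 3 * m⁻¹ * δ⁻¹ * Real.sqrt sb2 * (Real.sqrt r)⁻¹ := by ring
  exact le_trans hNle hfinal
end

section
/- Fix residuals e_i = y_i − x_iᵀβ̂_n and suppose not all vectors e_i·x_i are zero. Over all sampling-probability vectors (π_1,…,π_n) with π_i > 0 and Σ_i π_i = 1, the quantity σ_b²(π) = (1/n²)·Σ_{i=1}^n π_i⁻¹·‖x_i‖²·e_i² satisfies σ_b²(π) ≥ ( (1/n)·Σ_{i=1}^n ‖x_i‖·|e_i| )², with equality attained at π_i^e = ‖x_i‖·|e_i| / Σ_{j=1}^n ‖x_j‖·|e_j| (setting π_i^e accordingly on indices with e_i x_i ≠ 0). In particular, min_π σ_b²(π) = ( (1/n)·Σ_i ‖e_i x_i‖ )². -/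
open Matrix

/-- Cauchy–Schwarz minimization at the core of Corollary 1: over all
sampling-probability vectors `π` with positive entries summing to one,
`σ_b²(π) = (1/n²)Σ_i π_i⁻¹‖x_i‖²e_i² ≥ ((1/n)Σ_i ‖x_i‖|e_i|)²`, with equality attained at
`π_i^e = ‖x_i‖|e_i|/Σ_j ‖x_j‖|e_j|`. In particular
`min_π σ_b²(π) = ((1/n)Σ_i ‖e_i x_i‖)²`. -/
theorem stmt16 {n d : ℕ} (hn : 1 ≤ n) (hd : 1 ≤ d)
    (x : Fin n → Fin d → ℝ) (y : Fin n → ℝ)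
    (Sn : Matrix (Fin d) (Fin d) ℝ)
    (hSn : Sn = (n : ℝ)⁻¹ • ∑ i, vecMulVec (x i) (x i))
    (hpd : Sn.PosDef)
    (βhat : Fin d → ℝ) (hβ : βhat = Sn⁻¹ *ᵥ ((n : ℝ)⁻¹ • ∑ i, y i • x i))
    (e : Fin n → ℝ) (he : ∀ i, e i = y i - ∑ k, x i k * βhat k)
    (hne : ∃ i, e i • x i ≠ 0)
    (sb2 : (Fin n → ℝ) → ℝ)
    (hsb2 : ∀ w, sb2 w = ((n : ℝ) ^ 2)⁻¹ * ∑ i, (w i)⁻¹ * (∑ k, x i k ^ 2) * e i ^ 2)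
    (πe : Fin n → ℝ)
    (hπe : ∀ i, πe i = euclNorm (x i) * |e i| / ∑ j, euclNorm (x j) * |e j|) :
    (∀ w : Fin n → ℝ, (∀ i, 0 < w i) → (∑ i, w i) = 1 →
        ((n : ℝ)⁻¹ * ∑ i, euclNorm (x i) * |e i|) ^ 2 ≤ sb2 w) ∧
      sb2 πe = ((n : ℝ)⁻¹ * ∑ i, euclNorm (x i) * |e i|) ^ 2 := by
  set a : Fin n → ℝ := fun i => euclNorm (x i) * |e i| with ha
  have ha_nonneg : ∀ i, 0 ≤ a i := fun i =>
    mul_nonneg (Real.sqrt_nonneg _) (abs_nonneg _)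
  have ha_sq : ∀ i, (∑ k, x i k ^ 2) * e i ^ 2 = a i ^ 2 := by
    intro i
    have : a i ^ 2 = euclNorm (x i) ^ 2 * |e i| ^ 2 := by ring
    rw [this, euclNorm, Real.sq_sqrt (by positivity), sq_abs]
  have hnpos : (0 : ℝ) < n := by exact_mod_cast hn
  constructor
  · intro w hw hsum
    rw [hsb2]
    have key : (∑ i, a i) ^ 2 ≤ ∑ i, (w i)⁻¹ * (∑ k, x i k ^ 2) * e i ^ 2 := by
      have h := Finset.sq_sum_div_le_sum_sq_div Finset.univ a
        (fun i _ => hw i)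
      rw [hsum, div_one] at h
      refine h.trans_eq (Finset.sum_congr rfl fun i _ => ?_)
      rw [mul_assoc, ha_sq i, div_eq_inv_mul]
    calc ((n : ℝ)⁻¹ * ∑ i, a i) ^ 2 = ((n : ℝ) ^ 2)⁻¹ * (∑ i, a i) ^ 2 := by
          rw [mul_pow, inv_pow]
      _ ≤ _ := by
          exact mul_le_mul_of_nonneg_left key (by positivity)
  · obtain ⟨i0, hi0⟩ := hne
    have he0 : e i0 ≠ 0 := by
      intro h; apply hi0; ext k; simp [h]
    have hx0 : x i0 ≠ 0 := by
      intro h; apply hi0; ext k; simp [h]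
    have hai0 : 0 < a i0 := by
      have hx : 0 < ∑ k, x i0 k ^ 2 := by
        obtain ⟨k, hk⟩ := Function.ne_iff.mp hx0
        exact Finset.sum_pos' (fun k _ => sq_nonneg _)
          ⟨k, Finset.mem_univ k, by
            have := sq_abs (x i0 k)
            nlinarith [abs_pos.mpr hk]⟩
      have : 0 < euclNorm (x i0) := Real.sqrt_pos.mpr hx
      exact mul_pos this (abs_pos.mpr he0)
    set S : ℝ := ∑ j, a j with hS
    have hSpos : 0 < S :=
      Finset.sum_pos' (fun j _ => ha_nonneg j) ⟨i0, Finset.mem_univ i0, hai0⟩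
    have hterm : ∀ i, (πe i)⁻¹ * (∑ k, x i k ^ 2) * e i ^ 2 = S * a i := by
      intro i
      rw [mul_assoc, ha_sq i, show πe i = a i / S from hπe i]
      rcases eq_or_lt_of_le (ha_nonneg i) with h | h
      · simp [← h]
      · field_simp
    rw [hsb2]
    rw [Finset.sum_congr rfl fun i _ => hterm i, ← Finset.mul_sum, ← hS]
    rw [mul_pow, inv_pow]
    ring
end
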